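/- arXiv:0904.3592 — 13 statements merged into one kernel-verified Lean document; each statement's English description precedes it below -/
import Mathlib

section
/- Assume the GO condition holds. Let m = p ⊕ q be a decomposition into subspaces with [h, p] ⊆ p, [h, q] ⊆ q and ⟨A p, q⟩ = 0 (a g-orthogonal ad_h-invariant decomposition). Then ⟨[X, Y], A Y⟩ = 0 and ⟨[Y, X], A X⟩ = 0 for all X ∈ p and Y ∈ q; that is, for each X ∈ p the operator ad_X is skew-symmetric on q with respect to the metric ⟨A·,·⟩, and symmetrically (equivalently U(p,p) ⊆ p and U(q,q) ⊆ q for the symmetric connection term U). -/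
/-
Setting: a finite-dimensional real Lie algebra `g` with an ad-invariant inner
product (encoded as a positive definite symmetric bilinear form `B`), a Lie
subalgebra `h`, the orthogonal complement `m = h^⊥`, and the metric
endomorphism `A : m → m` (encoded as a linear map of `g` preserving `m`) which
is symmetric, positive definite and `h`-equivariant on `m`.
-/
/-- For a `g`-orthogonal `ad h`-invariant decomposition `m = p ⊕ q` of a GO-space, `ad X` is skew-symmetric on `q` for `X ∈ p`, and vice versa. -/
theorem stmt_2
    {g : Type*} [LieRing g] [LieAlgebra ℝ g] [FiniteDimensional ℝ g]
    (B : g →ₗ[ℝ] g →ₗ[ℝ] ℝ)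
    (hBsymm : ∀ X Y : g, B X Y = B Y X)
    (hBpos : ∀ X : g, X ≠ 0 → 0 < B X X)
    (hBinv : ∀ Z X Y : g, B ⁅Z, X⁆ Y + B X ⁅Z, Y⁆ = 0)
    (h : LieSubalgebra ℝ g)
    (m : Submodule ℝ g) (hm : ∀ X : g, X ∈ m ↔ ∀ H ∈ h, B X H = 0)
    (A : g →ₗ[ℝ] g)
    (hAm : ∀ X ∈ m, A X ∈ m)
    (hAsymm : ∀ X ∈ m, ∀ Y ∈ m, B (A X) Y = B X (A Y))
    (hApos : ∀ X ∈ m, X ≠ 0 → 0 < B (A X) X)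
    (hAequiv : ∀ H ∈ h, ∀ X ∈ m, A ⁅H, X⁆ = ⁅H, A X⁆)
    (hGO : ∀ X ∈ m, ∃ H ∈ h, ⁅H + X, A X⁆ ∈ h)
    (p q : Submodule ℝ g) (hpm : p ≤ m) (hqm : q ≤ m)
    (hdisj : Disjoint p q) (hsup : p ⊔ q = m)
    (hph : ∀ H ∈ h, ∀ X ∈ p, ⁅H, X⁆ ∈ p)
    (hqh : ∀ H ∈ h, ∀ Y ∈ q, ⁅H, Y⁆ ∈ q)
    (horth : ∀ X ∈ p, ∀ Y ∈ q, B (A X) Y = 0) :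
    ∀ X ∈ p, ∀ Y ∈ q, B ⁅X, Y⁆ (A Y) = 0 ∧ B ⁅Y, X⁆ (A X) = 0 := by
  -- `[h, m] ⊆ m`
  have hbm : ∀ H ∈ h, ∀ Z ∈ m, ⁅H, Z⁆ ∈ m := by
    intro H hH Z hZ
    rw [hm]
    intro H' hH'
    have e1 := hBinv H Z H'
    have e2 : B Z ⁅H, H'⁆ = 0 := (hm Z).mp hZ _ (h.lie_mem hH hH')
    linarith
  -- key identity: `B Z ⁅H, A W⁆ = B (A Z) ⁅H, W⁆` for `Z, W ∈ m`, `H ∈ h`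
  have key : ∀ H ∈ h, ∀ Z ∈ m, ∀ W ∈ m, B Z ⁅H, A W⁆ = B (A Z) ⁅H, W⁆ := by
    intro H hH Z hZ W hW
    have e1 := hBinv H Z (A W)
    have e2 : B (A W) ⁅H, Z⁆ = B W (A ⁅H, Z⁆) := hAsymm W hW _ (hbm H hH Z hZ)
    rw [hAequiv H hH Z hZ] at e2
    have e4 := hBinv H W (A Z)
    have s1 := hBsymm ⁅H, Z⁆ (A W)
    have s2 := hBsymm ⁅H, W⁆ (A Z)
    linarith
  -- from the GO condition: `B ⁅W, A W⁆ Z = - B (A Z) ⁅H, W⁆`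
  have FI : ∀ H ∈ h, ∀ W ∈ m, ⁅H + W, A W⁆ ∈ h → ∀ Z ∈ m,
      B ⁅W, A W⁆ Z = - B (A Z) ⁅H, W⁆ := by
    intro H hH W hW hK Z hZ
    have h0 : B Z ⁅H + W, A W⁆ = 0 := (hm Z).mp hZ _ hK
    rw [add_lie, map_add] at h0
    have e1 := key H hH Z hZ W hW
    have s1 := hBsymm ⁅W, A W⁆ Z
    linarith
  -- `B (A V) ⁅H, V⁆ = 0`
  have lem4 : ∀ H ∈ h, ∀ V ∈ m, B (A V) ⁅H, V⁆ = 0 := by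
    intro H hH V hV
    have e1 := key H hH V hV V hV
    have e2 := hBinv H V (A V)
    have s1 := hBsymm ⁅H, V⁆ (A V)
    linarith
  -- `B (A Y') X' = 0` for `X' ∈ p`, `Y' ∈ q`
  have orth2 : ∀ X' ∈ p, ∀ Y' ∈ q, B (A Y') X' = 0 := by
    intro X' hX' Y' hY'
    rw [hAsymm Y' (hqm hY') X' (hpm hX'), hBsymm, horth X' hX' Y' hY']
  intro X hX Y hY
  have hXm : X ∈ m := hpm hX
  have hYm : Y ∈ m := hqm hY
  -- apply GO to X + Y and X - Y
  obtain ⟨H1, hH1, hK1⟩ := hGO (X + Y) (m.add_mem hXm hYm)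
  obtain ⟨H2, hH2, hK2⟩ := hGO (X - Y) (m.sub_mem hXm hYm)
  -- the four vanishing pairings
  have SX1 : B ⁅X + Y, A (X + Y)⁆ X = 0 := by
    rw [FI H1 hH1 (X + Y) (m.add_mem hXm hYm) hK1 X hXm, lie_add, map_add,
      lem4 H1 hH1 X hXm, horth X hX _ (hqh H1 hH1 Y hY)]
    ring
  have SY1 : B ⁅X + Y, A (X + Y)⁆ Y = 0 := by
    rw [FI H1 hH1 (X + Y) (m.add_mem hXm hYm) hK1 Y hYm, lie_add, map_add,
      lem4 H1 hH1 Y hYm, orth2 _ (hph H1 hH1 X hX) Y hY]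
    ring
  have SX2 : B ⁅X - Y, A (X - Y)⁆ X = 0 := by
    rw [FI H2 hH2 (X - Y) (m.sub_mem hXm hYm) hK2 X hXm, lie_sub, map_sub,
      lem4 H2 hH2 X hXm, horth X hX _ (hqh H2 hH2 Y hY)]
    ring
  have SY2 : B ⁅X - Y, A (X - Y)⁆ Y = 0 := by
    rw [FI H2 hH2 (X - Y) (m.sub_mem hXm hYm) hK2 Y hYm, lie_sub, map_sub,
      lem4 H2 hH2 Y hYm, orth2 _ (hph H2 hH2 X hX) Y hY]
    ring
  -- expand the brackets
  have expand1X : B ⁅X + Y, A (X + Y)⁆ X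
      = B ⁅X, A X⁆ X + B ⁅X, A Y⁆ X + B ⁅Y, A X⁆ X + B ⁅Y, A Y⁆ X := by
    rw [map_add, add_lie, lie_add, lie_add]
    simp [map_add]
    ring
  have expand2X : B ⁅X - Y, A (X - Y)⁆ X
      = B ⁅X, A X⁆ X - B ⁅X, A Y⁆ X - B ⁅Y, A X⁆ X + B ⁅Y, A Y⁆ X := by
    rw [map_sub, sub_lie, lie_sub, lie_sub]
    simp [map_sub]
    ring
  have expand1Y : B ⁅X + Y, A (X + Y)⁆ Y
      = B ⁅X, A X⁆ Y + B ⁅X, A Y⁆ Y + B ⁅Y, A X⁆ Y + B ⁅Y, A Y⁆ Y := by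
    rw [map_add, add_lie, lie_add, lie_add]
    simp [map_add]
    ring
  have expand2Y : B ⁅X - Y, A (X - Y)⁆ Y
      = B ⁅X, A X⁆ Y - B ⁅X, A Y⁆ Y - B ⁅Y, A X⁆ Y + B ⁅Y, A Y⁆ Y := by
    rw [map_sub, sub_lie, lie_sub, lie_sub]
    simp [map_sub]
    ring
  -- trivial vanishing of the "self" terms
  have tX : B ⁅X, A Y⁆ X = 0 := by
    have e := hBinv X (A Y) X
    simpa using e
  have tY : B ⁅Y, A X⁆ Y = 0 := by
    have e := hBinv Y (A X) Y
    simpa using e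
  -- extract the cross terms
  have cX : B ⁅Y, A X⁆ X = 0 := by
    rw [expand1X] at SX1; rw [expand2X] at SX2; linarith
  have cY : B ⁅X, A Y⁆ Y = 0 := by
    rw [expand1Y] at SY1; rw [expand2Y] at SY2; linarith
  constructor
  · have e := hBinv X Y (A Y)
    have s := hBsymm Y ⁅X, A Y⁆
    rw [hBsymm] at cY
    linarith
  · have e := hBinv Y X (A X)
    have s := hBsymm X ⁅Y, A X⁆
    rw [hBsymm] at cX
    linarith
end

section
/- Assume the GO condition holds. If X, Y ∈ m are eigenvectors of A with A X = λ X, A Y = μ Y and λ ≠ μ, then there exists H ∈ h such that (λ − μ)[X, Y] = λ [H, X] + μ [H, Y]. -/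
/-
Setting: a finite-dimensional real Lie algebra `g` with an ad-invariant inner
product (encoded as a positive definite symmetric bilinear form `B`), a Lie
subalgebra `h`, the orthogonal complement `m = h^⊥`, and the metric
endomorphism `A : m → m` (encoded as a linear map of `g` preserving `m`) which
is symmetric, positive definite and `h`-equivariant on `m`.
-/
/-- In a GO-space, for eigenvectors of `A` with different eigenvalues, `(λ − μ)[X,Y] = λ[H,X] + μ[H,Y]` for some `H ∈ h`. -/
theorem stmt_3
    {g : Type*} [LieRing g] [LieAlgebra ℝ g] [FiniteDimensional ℝ g]
    (B : g →ₗ[ℝ] g →ₗ[ℝ] ℝ)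
    (hBsymm : ∀ X Y : g, B X Y = B Y X)
    (hBpos : ∀ X : g, X ≠ 0 → 0 < B X X)
    (hBinv : ∀ Z X Y : g, B ⁅Z, X⁆ Y + B X ⁅Z, Y⁆ = 0)
    (h : LieSubalgebra ℝ g)
    (m : Submodule ℝ g) (hm : ∀ X : g, X ∈ m ↔ ∀ H ∈ h, B X H = 0)
    (A : g →ₗ[ℝ] g)
    (hAm : ∀ X ∈ m, A X ∈ m)
    (hAsymm : ∀ X ∈ m, ∀ Y ∈ m, B (A X) Y = B X (A Y))
    (hApos : ∀ X ∈ m, X ≠ 0 → 0 < B (A X) X)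
    (hAequiv : ∀ H ∈ h, ∀ X ∈ m, A ⁅H, X⁆ = ⁅H, A X⁆)
    (hGO : ∀ X ∈ m, ∃ H ∈ h, ⁅H + X, A X⁆ ∈ h)
    (lam mu : ℝ) (hne : lam ≠ mu)
    (X Y : g) (hX : X ∈ m) (hY : Y ∈ m)
    (hXeig : A X = lam • X) (hYeig : A Y = mu • Y) :
    ∃ H ∈ h, (lam - mu) • ⁅X, Y⁆ = lam • ⁅H, X⁆ + mu • ⁅H, Y⁆ := by
  -- [h, m] ⊆ m
  have hbm : ∀ W ∈ h, ∀ V ∈ m, ⁅W, V⁆ ∈ m := by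
    intro W hW V hV
    rw [hm]
    intro H' hH'
    have := hBinv W V H'
    have hVH : B V ⁅W, H'⁆ = 0 := (hm V).mp hV _ (h.lie_mem hW hH')
    linarith
  -- [X, Y] ∈ m
  have hXYm : ⁅X, Y⁆ ∈ m := by
    rw [hm]
    intro W hW
    have h1 := hBinv X Y W
    -- B ⁅X,Y⁆ W = - B Y ⁅X,W⁆ = B Y ⁅W,X⁆
    have hWX : ⁅W, X⁆ ∈ m := hbm W hW X hX
    have heig : A ⁅W, X⁆ = lam • ⁅W, X⁆ := by
      rw [hAequiv W hW X hX, hXeig, lie_smul]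
    have h2 : B (A Y) ⁅W, X⁆ = B Y (A ⁅W, X⁆) := hAsymm Y hY _ hWX
    rw [hYeig, heig, map_smul, LinearMap.smul_apply, map_smul] at h2
    have h3 : B Y ⁅W, X⁆ = 0 := by
      have : (mu - lam) * B Y ⁅W, X⁆ = 0 := by
        rw [sub_mul]; simp only [smul_eq_mul] at h2; linarith
      rcases mul_eq_zero.mp this with h4 | h4
      · exact absurd (by linarith [sub_eq_zero.mp h4] : lam = mu) hne
      · exact h4
    have h6 : B Y ⁅X, W⁆ = 0 := by
      have hsk : (⁅X, W⁆ : g) = -⁅W, X⁆ := by rw [← lie_skew]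
      rw [hsk, map_neg, h3, neg_zero]
    linarith
  -- apply GO to X + Y
  obtain ⟨H, hH, hGOmem⟩ := hGO (X + Y) (m.add_mem hX hY)
  refine ⟨H, hH, ?_⟩
  have hA : A (X + Y) = lam • X + mu • Y := by
    rw [map_add, hXeig, hYeig]
  set Z : g := lam • ⁅H, X⁆ + mu • ⁅H, Y⁆ - (lam - mu) • ⁅X, Y⁆ with hZ
  have hbr : ⁅H + (X + Y), A (X + Y)⁆ = Z := by
    rw [hA, hZ]
    simp only [add_lie, lie_add, lie_smul, lie_self, smul_zero, sub_smul]
    rw [← lie_skew X Y]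
    module
  have hZh : Z ∈ h := by rw [← hbr]; exact hGOmem
  have hZm : Z ∈ m := by
    apply m.sub_mem
    · exact m.add_mem (m.smul_mem _ (hbm H hH X hX)) (m.smul_mem _ (hbm H hH Y hY))
    · exact m.smul_mem _ hXYm
  have hZ0 : Z = 0 := by
    by_contra hne0
    have := hBpos Z hne0
    have := (hm Z).mp hZm Z hZh
    linarith
  have h7 : lam • ⁅H, X⁆ + mu • ⁅H, Y⁆ - (lam - mu) • ⁅X, Y⁆ = 0 := hZ0
  exact (sub_eq_zero.mp h7).symm
end

section
/- Assume the GO condition holds. Let λ > 0 and let X, Y ∈ ker(A − λ·id) be such that ⟨X, [H, Y]⟩ = 0 for all H ∈ h (X is orthogonal to the subspace [h, Y]). Then ⟨[X, Y], Z⟩ = 0 for every eigenvector Z of A whose eigenvalue μ is different from λ; consequently [X, Y] ∈ h + ker(A − λ·id). -/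
lemma aux_spectral {V : Type*} [AddCommGroup V] [Module ℝ V] [FiniteDimensional ℝ V]
    (Bv : V →ₗ[ℝ] V →ₗ[ℝ] ℝ) (hsymm : ∀ x y : V, Bv x y = Bv y x)
    (hpos : ∀ x : V, x ≠ 0 → 0 < Bv x x)
    (T : V →ₗ[ℝ] V) (hT : ∀ x y : V, Bv (T x) y = Bv x (T y))
    (u : V) (hu : ∀ (μ : ℝ) (z : V), T z = μ • z → Bv u z = 0) : u = 0 := by
  let core : InnerProductSpace.Core ℝ V :=
    { inner := fun x y => Bv x y
      conj_inner_symm := fun x y => by simpa using hsymm y x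
      re_inner_nonneg := fun x => by
        rcases eq_or_ne x 0 with rfl | hx
        · simp
        · simpa using (hpos x hx).le
      add_left := fun x y z => by simp
      smul_left := fun x y r => by simp
      definite := fun x hx => by
        by_contra hx0
        exact absurd hx (ne_of_gt (hpos x hx0)) }
  letI : NormedAddCommGroup V := core.toNormedAddCommGroup
  letI : InnerProductSpace ℝ V := InnerProductSpace.ofCore core.toCore
  have hTsymm : T.IsSymmetric := fun x y => hT x y
  have hmem : u ∈ (⨆ μ : ℝ, Module.End.eigenspace T μ)ᗮ := by
    rw [← Submodule.iInf_orthogonal]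
    refine Submodule.mem_iInf _ |>.2 fun μ => ?_
    rw [Submodule.mem_orthogonal]
    intro z hz
    have hz' : T z = μ • z := Module.End.mem_eigenspace_iff.1 hz
    have : Bv u z = 0 := hu μ z hz'
    show Bv z u = 0
    rw [hsymm]; exact this
  rw [hTsymm.orthogonalComplement_iSup_eigenspaces_eq_bot] at hmem
  simpa using hmem

/-- Decomposition `g = h ⊕ m` for the orthogonal complement `m` of `h` with
respect to a positive definite symmetric bilinear form. -/
lemma aux_decomp {g : Type*} [AddCommGroup g] [Module ℝ g] [FiniteDimensional ℝ g]
    (B : g →ₗ[ℝ] g →ₗ[ℝ] ℝ)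
    (hBsymm : ∀ X Y : g, B X Y = B Y X)
    (hBpos : ∀ X : g, X ≠ 0 → 0 < B X X)
    (hsub : Submodule ℝ g) (m : Submodule ℝ g)
    (hm : ∀ X : g, X ∈ m ↔ ∀ H ∈ hsub, B X H = 0)
    (v : g) : ∃ vh ∈ hsub, ∃ vm ∈ m, v = vh + vm := by
  let core : InnerProductSpace.Core ℝ g :=
    { inner := fun x y => B x y
      conj_inner_symm := fun x y => by simpa using hBsymm y x
      re_inner_nonneg := fun x => by
        rcases eq_or_ne x 0 with rfl | hx
        · simp
        · simpa using (hBpos x hx).le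
      add_left := fun x y z => by simp
      smul_left := fun x y r => by simp
      definite := fun x hx => by
        by_contra hx0
        exact absurd hx (ne_of_gt (hBpos x hx0)) }
  letI : NormedAddCommGroup g := core.toNormedAddCommGroup
  letI : InnerProductSpace ℝ g := InnerProductSpace.ofCore core.toCore
  have hmo : m = hsubᗮ := by
    ext x
    rw [hm, Submodule.mem_orthogonal]
    constructor
    · intro hx u hu
      have := hx u hu
      show B u x = 0
      rw [hBsymm]; exact this
    · intro hx u hu
      have : B u x = 0 := hx u hu
      rw [hBsymm]; exact this
  have hsup : hsub ⊔ m = ⊤ := by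
    rw [hmo]; exact Submodule.sup_orthogonal_of_hasOrthogonalProjection
  have : v ∈ hsub ⊔ m := by rw [hsup]; exact Submodule.mem_top
  rcases Submodule.mem_sup.1 this with ⟨vh, hvh, vm, hvm, heq⟩
  exact ⟨vh, hvh, vm, hvm, heq.symm⟩


/-
Setting: a finite-dimensional real Lie algebra `g` with an ad-invariant inner
product (encoded as a positive definite symmetric bilinear form `B`), a Lie
subalgebra `h`, the orthogonal complement `m = h^⊥`, and the metric
endomorphism `A : m → m` (encoded as a linear map of `g` preserving `m`) which
is symmetric, positive definite and `h`-equivariant on `m`.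
-/
/-- In a GO-space, if `X, Y` lie in the `λ`-eigenspace of `A` and `X ⊥ [h, Y]`, then `[X,Y]` is orthogonal to every eigenvector of `A` with eigenvalue `≠ λ`; consequently `[X,Y] ∈ h + ker(A − λ·id)`. -/
theorem stmt_4
    {g : Type*} [LieRing g] [LieAlgebra ℝ g] [FiniteDimensional ℝ g]
    (B : g →ₗ[ℝ] g →ₗ[ℝ] ℝ)
    (hBsymm : ∀ X Y : g, B X Y = B Y X)
    (hBpos : ∀ X : g, X ≠ 0 → 0 < B X X)
    (hBinv : ∀ Z X Y : g, B ⁅Z, X⁆ Y + B X ⁅Z, Y⁆ = 0)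
    (h : LieSubalgebra ℝ g)
    (m : Submodule ℝ g) (hm : ∀ X : g, X ∈ m ↔ ∀ H ∈ h, B X H = 0)
    (A : g →ₗ[ℝ] g)
    (hAm : ∀ X ∈ m, A X ∈ m)
    (hAsymm : ∀ X ∈ m, ∀ Y ∈ m, B (A X) Y = B X (A Y))
    (hApos : ∀ X ∈ m, X ≠ 0 → 0 < B (A X) X)
    (hAequiv : ∀ H ∈ h, ∀ X ∈ m, A ⁅H, X⁆ = ⁅H, A X⁆)
    (hGO : ∀ X ∈ m, ∃ H ∈ h, ⁅H + X, A X⁆ ∈ h)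
    (lam : ℝ) (hlam : 0 < lam)
    (X Y : g) (hX : X ∈ m) (hY : Y ∈ m)
    (hXeig : A X = lam • X) (hYeig : A Y = lam • Y)
    (hXhY : ∀ H ∈ h, B X ⁅H, Y⁆ = 0) :
    (∀ Z ∈ m, ∀ mu : ℝ, mu ≠ lam → A Z = mu • Z → B ⁅X, Y⁆ Z = 0) ∧
      ⁅X, Y⁆ ∈ h.toSubmodule ⊔
        (m ⊓ LinearMap.ker (A - lam • (LinearMap.id : g →ₗ[ℝ] g))) := by
  -- Part 1
  have P1 : ∀ Z ∈ m, ∀ mu : ℝ, mu ≠ lam → A Z = mu • Z → B ⁅X, Y⁆ Z = 0 := by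
    intro Z hZ mu hmu hZeig
    obtain ⟨H, hH, hE⟩ := hGO (X + Z) (m.add_mem hX hZ)
    have hEexp : ⁅H + (X + Z), A (X + Z)⁆
        = lam • ⁅H, X⁆ + mu • ⁅H, Z⁆ + (mu - lam) • ⁅X, Z⁆ := by
      rw [map_add, hXeig, hZeig]
      have hzx : ⁅Z, X⁆ = -⁅X, Z⁆ := (lie_skew Z X).symm
      simp only [lie_add, add_lie, lie_smul, smul_lie, lie_self, smul_zero,
        add_zero, zero_add, hzx, smul_neg, sub_smul]
      module
    rw [hEexp] at hE
    have h0 : B Y (lam • ⁅H, X⁆ + mu • ⁅H, Z⁆ + (mu - lam) • ⁅X, Z⁆) = 0 :=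
      (hm Y).1 hY _ hE
    -- B Y ⁅H, X⁆ = 0
    have f1 : B Y ⁅H, X⁆ = 0 := by
      have := hBinv H X Y
      have h2 := hXhY H hH
      have h3 := hBsymm Y ⁅H, X⁆
      linarith
    -- ⁅H, Z⁆ ∈ m
    have hHZm : ⁅H, Z⁆ ∈ m := by
      rw [hm]
      intro H' hH'
      have h1 := hBinv H Z H'
      have h2 : B Z ⁅H, H'⁆ = 0 := (hm Z).1 hZ _ (h.lie_mem hH hH')
      linarith
    -- B Y ⁅H, Z⁆ = 0
    have f2 : B Y ⁅H, Z⁆ = 0 := by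
      have heig : A ⁅H, Z⁆ = mu • ⁅H, Z⁆ := by
        rw [hAequiv H hH Z hZ, hZeig, lie_smul]
      have hs := hAsymm ⁅H, Z⁆ hHZm Y hY
      rw [heig, hYeig, map_smul, LinearMap.smul_apply, map_smul] at hs
      have h3 := hBsymm Y ⁅H, Z⁆
      have : (mu - lam) * B ⁅H, Z⁆ Y = 0 := by
        simp only [smul_eq_mul] at hs; linarith
      rcases mul_eq_zero.1 this with hc | hc
      · exact absurd (by linarith : mu = lam) hmu
      · linarith
    -- conclude B Y ⁅X, Z⁆ = 0
    have f3 : B Y ⁅X, Z⁆ = 0 := by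
      simp only [map_add, map_smul, smul_eq_mul] at h0
      rw [f1, f2] at h0
      have : (mu - lam) * B Y ⁅X, Z⁆ = 0 := by linarith
      rcases mul_eq_zero.1 this with hc | hc
      · exact absurd (by linarith : mu = lam) hmu
      · exact hc
    have h4 := hBinv X Z Y
    have h5 := hBsymm Y ⁅X, Z⁆
    have h6 := hBsymm ⁅X, Y⁆ Z
    linarith
  refine ⟨P1, ?_⟩
  -- Part 2: decompose ⁅X, Y⁆ = Wh + Wm
  obtain ⟨Wh, hWh, Wm, hWm, hsum⟩ :=
    aux_decomp B hBsymm hBpos h.toSubmodule m (by simpa using hm) ⁅X, Y⁆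
  -- restrict B and A to m
  let Bm : m →ₗ[ℝ] m →ₗ[ℝ] ℝ := LinearMap.compl₁₂ B m.subtype m.subtype
  let T : m →ₗ[ℝ] m := A.restrict (fun x hx => hAm x hx)
  have hBmapp : ∀ x y : m, Bm x y = B (x : g) (y : g) := fun x y => rfl
  have hTapp : ∀ x : m, ((T x : m) : g) = A (x : g) := fun x => rfl
  -- the element u = A Wm - lam • Wm of m, orthogonal to all eigenvectors of T
  set WmM : m := ⟨Wm, hWm⟩ with hWmM
  have hu : T WmM - lam • WmM = 0 := by
    refine aux_spectral Bm ?_ ?_ T ?_ _ ?_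
    · intro x y; simp only [hBmapp]; exact hBsymm _ _
    · intro x hx
      have hx' : (x : g) ≠ 0 := fun hc => hx (Subtype.ext hc)
      simpa [hBmapp] using hBpos (x : g) hx'
    · intro x y
      simp only [hBmapp]
      exact hAsymm (x : g) x.2 (y : g) y.2
    · intro μ z hz
      have hz' : A (z : g) = μ • (z : g) := by
        have := congrArg (Subtype.val) hz
        simpa [hTapp] using this
      -- Bm (T WmM - lam • WmM) z = (μ - lam) * B Wm z
      have key : Bm (T WmM - lam • WmM) z = (μ - lam) * B Wm (z : g) := by
        simp only [map_sub, LinearMap.sub_apply, map_smul, LinearMap.smul_apply, hBmapp]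
        have h1 : B (A Wm) (z : g) = μ * B Wm (z : g) := by
          rw [hAsymm Wm hWm (z : g) z.2, hz', map_smul]
          simp [smul_eq_mul]
        rw [show ((T WmM : m) : g) = A Wm from hTapp WmM]
        rw [h1]
        simp only [smul_eq_mul]
        ring
      rw [key]
      rcases eq_or_ne μ lam with rfl | hne
      · simp
      · have hBWmz : B Wm (z : g) = 0 := by
          have hXYz : B ⁅X, Y⁆ (z : g) = 0 := P1 (z : g) z.2 μ hne hz'
          have hWhz : B Wh (z : g) = 0 := by
            have := (hm (z : g)).1 z.2 Wh hWh
            rw [hBsymm]; exact this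
          have : B ⁅X, Y⁆ (z : g) = B Wh (z : g) + B Wm (z : g) := by
            rw [hsum]; simp [map_add]
          linarith
        rw [hBWmz]; ring
  -- conclude
  have hker : Wm ∈ LinearMap.ker (A - lam • (LinearMap.id : g →ₗ[ℝ] g)) := by
    have := congrArg (Subtype.val) hu
    have h1 : A Wm - lam • Wm = 0 := by simpa [hTapp] using this
    simp only [LinearMap.mem_ker, LinearMap.sub_apply, LinearMap.smul_apply,
      LinearMap.id_apply]
    exact h1
  rw [hsum]
  exact Submodule.add_mem_sup hWh (Submodule.mem_inf.2 ⟨hWm, hker⟩)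
end

section
/- Assume the GO condition holds. Let p, p' ⊆ ker(A − λ·id) be subspaces with [h, p] ⊆ p, [h, p'] ⊆ p' and ⟨p, p'⟩ = 0. Then [X, Y] ∈ h + ker(A − λ·id) for all X ∈ p and Y ∈ p'; equivalently, ⟨[X, Y], Z⟩ = 0 for every eigenvector Z of A with eigenvalue different from λ. -/
/-
Setting: a finite-dimensional real Lie algebra `g` with an ad-invariant inner
product (encoded as a positive definite symmetric bilinear form `B`), a Lie
subalgebra `h`, the orthogonal complement `m = h^⊥`, and the metric
endomorphism `A : m → m` (encoded as a linear map of `g` preserving `m`) which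
is symmetric, positive definite and `h`-equivariant on `m`.
-/
/-- In a GO-space, brackets of orthogonal `ad h`-invariant subspaces of the same eigenspace of `A` lie in `h + ker(A − λ·id)`; equivalently they are orthogonal to every eigenvector with eigenvalue `≠ λ`. -/
theorem stmt_6
    {g : Type*} [LieRing g] [LieAlgebra ℝ g] [FiniteDimensional ℝ g]
    (B : g →ₗ[ℝ] g →ₗ[ℝ] ℝ)
    (hBsymm : ∀ X Y : g, B X Y = B Y X)
    (hBpos : ∀ X : g, X ≠ 0 → 0 < B X X)
    (hBinv : ∀ Z X Y : g, B ⁅Z, X⁆ Y + B X ⁅Z, Y⁆ = 0)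
    (h : LieSubalgebra ℝ g)
    (m : Submodule ℝ g) (hm : ∀ X : g, X ∈ m ↔ ∀ H ∈ h, B X H = 0)
    (A : g →ₗ[ℝ] g)
    (hAm : ∀ X ∈ m, A X ∈ m)
    (hAsymm : ∀ X ∈ m, ∀ Y ∈ m, B (A X) Y = B X (A Y))
    (hApos : ∀ X ∈ m, X ≠ 0 → 0 < B (A X) X)
    (hAequiv : ∀ H ∈ h, ∀ X ∈ m, A ⁅H, X⁆ = ⁅H, A X⁆)
    (hGO : ∀ X ∈ m, ∃ H ∈ h, ⁅H + X, A X⁆ ∈ h)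
    (lam : ℝ)
    (p p' : Submodule ℝ g) (hpm : p ≤ m) (hp'm : p' ≤ m)
    (hpe : ∀ X ∈ p, A X = lam • X) (hp'e : ∀ Y ∈ p', A Y = lam • Y)
    (hph : ∀ H ∈ h, ∀ X ∈ p, ⁅H, X⁆ ∈ p)
    (hp'h : ∀ H ∈ h, ∀ Y ∈ p', ⁅H, Y⁆ ∈ p')
    (horth : ∀ X ∈ p, ∀ Y ∈ p', B X Y = 0) :
    ∀ X ∈ p, ∀ Y ∈ p',
      ⁅X, Y⁆ ∈ h.toSubmodule ⊔
          (m ⊓ LinearMap.ker (A - lam • (LinearMap.id : g →ₗ[ℝ] g))) ∧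
        ∀ Z ∈ m, ∀ mu : ℝ, mu ≠ lam → A Z = mu • Z → B ⁅X, Y⁆ Z = 0 := by
  classical
  intro X hX Y hY
  have hrefl : B.IsRefl := fun x y hxy => by rw [hBsymm]; exact hxy
  have hzero : ∀ x : g, B x x = 0 → x = 0 := by
    intro x hx
    by_contra hne
    exact absurd hx (ne_of_gt (hBpos x hne))
  set A' : g →ₗ[ℝ] g := A - lam • (LinearMap.id : g →ₗ[ℝ] g) with hA'
  have hA'apply : ∀ x : g, A' x = A x - lam • x := by
    intro x; simp [hA']
  set E : Submodule ℝ g := m ⊓ LinearMap.ker A' with hEdef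
  have hEmem : ∀ e ∈ E, e ∈ m ∧ A e = lam • e := by
    intro e he
    rw [hEdef, Submodule.mem_inf, LinearMap.mem_ker] at he
    obtain ⟨h1, h2⟩ := he
    rw [hA'apply, sub_eq_zero] at h2
    exact ⟨h1, h2⟩
  have hp'E : ∀ y ∈ p', y ∈ E := by
    intro y hy
    rw [hEdef, Submodule.mem_inf, LinearMap.mem_ker]
    exact ⟨hp'm hy, by rw [hA'apply, hp'e y hy, sub_self]⟩
  -- the orthogonal complement of E inside m
  set V : Submodule ℝ g := m ⊓ LinearMap.BilinForm.orthogonal B E with hVdef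
  have hVmem : ∀ z ∈ V, z ∈ m ∧ ∀ e ∈ E, B z e = 0 := by
    intro z hz
    rw [hVdef, Submodule.mem_inf] at hz
    obtain ⟨h1, h2⟩ := hz
    exact ⟨h1, fun e he => hBsymm z e ▸ h2 e he⟩
  have hmh : ∀ x ∈ m, ∀ H ∈ h, B x H = 0 := fun x hx => (hm x).mp hx
  -- A' maps V to V
  have hA'V : ∀ z ∈ V, A' z ∈ V := by
    intro z hz
    obtain ⟨hzm, hzE⟩ := hVmem z hz
    rw [hVdef, Submodule.mem_inf]
    constructor
    · rw [hA'apply]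
      exact Submodule.sub_mem m (hAm z hzm) (Submodule.smul_mem m lam hzm)
    · intro e he
      obtain ⟨hem, heA⟩ := hEmem e he
      show B e (A' z) = 0
      rw [hBsymm, hA'apply, map_sub, LinearMap.sub_apply, hAsymm z hzm e hem,
        heA]
      simp [hzE e he]
  -- A' is injective on V, hence surjective on V
  have hA'inj : ∀ z ∈ V, A' z = 0 → z = 0 := by
    intro z hz h0
    obtain ⟨hzm, hzE⟩ := hVmem z hz
    have hzEm : z ∈ E := by
      rw [hEdef, Submodule.mem_inf]
      exact ⟨hzm, LinearMap.mem_ker.mpr h0⟩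
    exact hzero z (hzE z hzEm)
  have hA'surj : ∀ z ∈ V, ∃ w ∈ V, A' w = z := by
    have hTinj : Function.Injective (A'.restrict (fun x hx => hA'V x hx)) := by
      rw [← LinearMap.ker_eq_bot, LinearMap.ker_eq_bot']
      intro w hw
      have hw0 : A' (w : g) = 0 := by
        have := congrArg (Subtype.val) hw
        simpa [LinearMap.restrict_apply] using this
      exact Subtype.ext (hA'inj w w.2 hw0)
    have hTsurj := LinearMap.injective_iff_surjective.mp hTinj
    intro z hz
    obtain ⟨w, hw⟩ := hTsurj ⟨z, hz⟩
    refine ⟨w, w.2, ?_⟩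
    have := congrArg (Subtype.val) hw
    simpa [LinearMap.restrict_apply] using this
  -- key computation from the GO condition
  have key1 : ∀ z ∈ V, B ⁅X, A z - lam • z⁆ Y + B ⁅z, A z⁆ Y = 0 := by
    intro z hz
    obtain ⟨hzm, hzE⟩ := hVmem z hz
    have hXm : X ∈ m := hpm hX
    have hWm : X + z ∈ m := Submodule.add_mem m hXm hzm
    obtain ⟨H, hH, hbr⟩ := hGO (X + z) hWm
    have hAW : A (X + z) = lam • X + A z := by rw [map_add, hpe X hX]
    have hYm : Y ∈ m := hp'm hY
    have hbrY : B ⁅H + (X + z), A (X + z)⁆ Y = 0 := by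
      rw [hBsymm]
      exact hmh Y hYm _ hbr
    rw [hAW] at hbrY
    have hHY : ⁅H, Y⁆ ∈ p' := hp'h H hH Y hY
    have e1 : B ⁅H, lam • X⁆ Y = 0 := by
      have h1 : B ⁅H, lam • X⁆ Y = - B (lam • X) ⁅H, Y⁆ := by
        have := hBinv H (lam • X) Y; linarith
      rw [h1, map_smul]
      have h2 : B X ⁅H, Y⁆ = 0 := horth X hX _ hHY
      simp [h2]
    have e2 : B ⁅H, A z⁆ Y = 0 := by
      have h1 : B ⁅H, A z⁆ Y = - B (A z) ⁅H, Y⁆ := by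
        have := hBinv H (A z) Y; linarith
      have h2 : B (A z) ⁅H, Y⁆ = lam * B z ⁅H, Y⁆ := by
        rw [hAsymm z hzm _ (hp'm hHY), hp'e _ hHY, map_smul, smul_eq_mul]
      have h3 : B z ⁅H, Y⁆ = 0 := hzE _ (hp'E _ hHY)
      rw [h1, h2, h3, mul_zero, neg_zero]
    have e3 : B ⁅X, lam • X⁆ Y = 0 := by
      rw [lie_smul, lie_self]; simp
    have e5 : B ⁅z, lam • X⁆ Y = - (lam * B ⁅X, z⁆ Y) := by
      have h1 : ⁅z, X⁆ = -⁅X, z⁆ := by rw [← lie_skew]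
      simp only [lie_smul, h1, map_smul, map_neg, LinearMap.smul_apply,
        LinearMap.neg_apply, smul_eq_mul]
      ring
    have expand : B ⁅H + (X + z), lam • X + A z⁆ Y
        = B ⁅H, lam • X⁆ Y + B ⁅H, A z⁆ Y + B ⁅X, lam • X⁆ Y
          + B ⁅X, A z⁆ Y + B ⁅z, lam • X⁆ Y + B ⁅z, A z⁆ Y := by
      rw [add_lie, add_lie, lie_add, lie_add, lie_add]
      simp only [map_add, LinearMap.add_apply]
      ring
    rw [expand, e1, e2, e3, e5] at hbrY
    have goal1 : B ⁅X, A z - lam • z⁆ Y = B ⁅X, A z⁆ Y - lam * B ⁅X, z⁆ Y := by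
      rw [lie_sub, map_sub, LinearMap.sub_apply, lie_smul, map_smul]
      simp
    rw [goal1]
    linarith
  have key2 : ∀ z ∈ V, B ⁅X, A z - lam • z⁆ Y = 0 := by
    intro z hz
    have h1 := key1 z hz
    have h2 := key1 (-z) (Submodule.neg_mem V hz)
    have e : A (-z) - lam • (-z) = -(A z - lam • z) := by
      rw [map_neg, smul_neg]; abel
    rw [e, lie_neg, map_neg, LinearMap.neg_apply, map_neg, neg_lie, lie_neg,
      neg_neg] at h2
    linarith
  -- brackets are orthogonal to all of V
  have key3 : ∀ z ∈ V, B ⁅X, Y⁆ z = 0 := by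
    intro z hz
    obtain ⟨w, hw, hwz⟩ := hA'surj z hz
    rw [hA'apply] at hwz
    have h1 := hBinv X (A w - lam • w) Y
    have h2 := key2 w hw
    rw [hBsymm]
    rw [hwz] at h1 h2
    linarith
  -- orthogonal decomposition with respect to U = h ⊔ E
  set U : Submodule ℝ g := h.toSubmodule ⊔ E with hUdef
  have hUnd : ((LinearMap.BilinForm.restrict B U)).Nondegenerate := by
    constructor <;>
    · intro u hu
      have h1 : B (u : g) (u : g) = 0 := by simpa using hu u
      exact Subtype.ext (hzero _ h1)
  have hcompl : IsCompl U (LinearMap.BilinForm.orthogonal B U) :=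
    (LinearMap.BilinForm.restrict_nondegenerate_iff_isCompl_orthogonal
      hrefl).mp hUnd
  have hOUV : LinearMap.BilinForm.orthogonal B U ≤ V := by
    intro x hx
    rw [hVdef, Submodule.mem_inf]
    constructor
    · rw [hm]
      intro H hH
      rw [hBsymm]
      exact hx H (Submodule.mem_sup_left hH)
    · intro e he
      exact hx e (Submodule.mem_sup_right he)
  have htop : (⁅X, Y⁆ : g) ∈ U ⊔ LinearMap.BilinForm.orthogonal B U := by
    rw [hcompl.sup_eq_top]; trivial
  obtain ⟨u, hu, v, hv, huv⟩ := Submodule.mem_sup.mp htop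
  have hvV : v ∈ V := hOUV hv
  have hBuv : B u v = 0 := hv u hu
  have hv0 : v = 0 := by
    apply hzero
    have h1 : B ⁅X, Y⁆ v = 0 := key3 v hvV
    have h2 : B v v = B ⁅X, Y⁆ v - B u v := by
      rw [← huv]; simp
    rw [h2, h1, hBuv, sub_zero]
  have hmemU : (⁅X, Y⁆ : g) ∈ U := by
    rw [← huv, hv0, add_zero]; exact hu
  refine ⟨hmemU, ?_⟩
  -- second part: orthogonality to eigenvectors with different eigenvalue
  intro Z hZm mu hmu hAZ
  have hZV : Z ∈ V := by
    rw [hVdef, Submodule.mem_inf]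
    refine ⟨hZm, ?_⟩
    intro e he
    obtain ⟨hem, heA⟩ := hEmem e he
    have h1 : mu * B Z e = lam * B Z e := by
      have h2 : B (A Z) e = B Z (A e) := hAsymm Z hZm e hem
      rw [hAZ, heA, map_smul, map_smul] at h2
      simpa using h2
    have h3 : B Z e = 0 := by
      by_contra hne
      exact hmu (mul_right_cancel₀ hne h1)
    show B e Z = 0
    rw [hBsymm]; exact h3
  exact key3 Z hZV
end

section
/- (No GO condition assumed.) Let p ⊆ m be a subspace with [p, p] ⊆ h + p and A(p) = p. Then for every X ∈ p and every Z ∈ m with ⟨Z, p⟩ = 0 one has ⟨[Z, X], A X⟩ = 0. (That is, the symmetric connection term U(X, X) lies in p, so such a subspace p is totally geodesic.) -/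
/-
Setting: a finite-dimensional real Lie algebra `g` with an ad-invariant inner
product (encoded as a positive definite symmetric bilinear form `B`), a Lie
subalgebra `h`, the orthogonal complement `m = h^⊥`, and the metric
endomorphism `A : m → m` (encoded as a linear map of `g` preserving `m`) which
is symmetric, positive definite and `h`-equivariant on `m`.
-/
/-- (No GO condition assumed.) If `p ⊆ m` satisfies `[p,p] ⊆ h + p` and `A(p) = p`, then `⟨[Z,X], A X⟩ = 0` for `X ∈ p` and `Z ∈ m` orthogonal to `p`; i.e. `U(X,X) ∈ p` and `p` is totally geodesic. -/
theorem stmt_7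
    {g : Type*} [LieRing g] [LieAlgebra ℝ g] [FiniteDimensional ℝ g]
    (B : g →ₗ[ℝ] g →ₗ[ℝ] ℝ)
    (hBsymm : ∀ X Y : g, B X Y = B Y X)
    (hBpos : ∀ X : g, X ≠ 0 → 0 < B X X)
    (hBinv : ∀ Z X Y : g, B ⁅Z, X⁆ Y + B X ⁅Z, Y⁆ = 0)
    (h : LieSubalgebra ℝ g)
    (m : Submodule ℝ g) (hm : ∀ X : g, X ∈ m ↔ ∀ H ∈ h, B X H = 0)
    (A : g →ₗ[ℝ] g)
    (hAm : ∀ X ∈ m, A X ∈ m)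
    (hAsymm : ∀ X ∈ m, ∀ Y ∈ m, B (A X) Y = B X (A Y))
    (hApos : ∀ X ∈ m, X ≠ 0 → 0 < B (A X) X)
    (hAequiv : ∀ H ∈ h, ∀ X ∈ m, A ⁅H, X⁆ = ⁅H, A X⁆)
    (p : Submodule ℝ g) (hpm : p ≤ m)
    (hbr : ∀ X ∈ p, ∀ Y ∈ p, ⁅X, Y⁆ ∈ h.toSubmodule ⊔ p)
    (hAp : Submodule.map A p = p) :
    ∀ X ∈ p, ∀ Z ∈ m, (∀ W ∈ p, B Z W = 0) → B ⁅Z, X⁆ (A X) = 0 := by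
  intro X hX Z hZ hZp
  have hAX : A X ∈ p := by
    rw [← hAp]; exact Submodule.mem_map_of_mem hX
  have key : B ⁅Z, X⁆ (A X) = B Z ⁅X, A X⁆ := by
    have := hBinv X Z (A X)
    have hneg : (⁅Z, X⁆ : g) = -⁅X, Z⁆ := by rw [← lie_skew]
    rw [hneg, map_neg, LinearMap.neg_apply]
    linarith
  rw [key]
  obtain ⟨H, hH, W, hW, hHW⟩ := Submodule.mem_sup.mp (hbr X hX (A X) hAX)
  rw [← hHW, map_add]
  have h1 : B Z H = 0 := (hm Z).mp hZ H hH
  have h2 : B Z W = 0 := hZp W hW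
  rw [h1, h2, add_zero]
end

section
/- Assume the GO condition holds. Let p ⊆ m be a subspace such that k := h ⊕ p is a Lie subalgebra of g and A(p) = p, and set p⊥ := {X ∈ m : ⟨X, p⟩ = 0}. Then [k, p⊥] ⊆ p⊥, and for every Z ∈ k and all X, Y ∈ p⊥ one has ⟨[Z, X], A Y⟩ + ⟨X, A [Z, Y]⟩ = 0; that is, the restriction of the metric ⟨A·,·⟩ to p⊥ is ad_k-invariant (the algebraic content of the Riemannian submersion G/H → G/K with totally geodesic fibres). -/
/-
Setting: a finite-dimensional real Lie algebra `g` with an ad-invariant inner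
product (encoded as a positive definite symmetric bilinear form `B`), a Lie
subalgebra `h`, the orthogonal complement `m = h^⊥`, and the metric
endomorphism `A : m → m` (encoded as a linear map of `g` preserving `m`) which
is symmetric, positive definite and `h`-equivariant on `m`.
-/
/-- In a GO-space, if `k = h ⊕ p` is a subalgebra with `A(p) = p`, then `[k, p⊥] ⊆ p⊥` and the metric `⟨A·,·⟩` restricted to `p⊥ = {X ∈ m : X ⊥ p}` is `ad k`-invariant (the Riemannian submersion `G/H → G/K`). -/
theorem stmt_8
    {g : Type*} [LieRing g] [LieAlgebra ℝ g] [FiniteDimensional ℝ g]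
    (B : g →ₗ[ℝ] g →ₗ[ℝ] ℝ)
    (hBsymm : ∀ X Y : g, B X Y = B Y X)
    (hBpos : ∀ X : g, X ≠ 0 → 0 < B X X)
    (hBinv : ∀ Z X Y : g, B ⁅Z, X⁆ Y + B X ⁅Z, Y⁆ = 0)
    (h : LieSubalgebra ℝ g)
    (m : Submodule ℝ g) (hm : ∀ X : g, X ∈ m ↔ ∀ H ∈ h, B X H = 0)
    (A : g →ₗ[ℝ] g)
    (hAm : ∀ X ∈ m, A X ∈ m)
    (hAsymm : ∀ X ∈ m, ∀ Y ∈ m, B (A X) Y = B X (A Y))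
    (hApos : ∀ X ∈ m, X ≠ 0 → 0 < B (A X) X)
    (hAequiv : ∀ H ∈ h, ∀ X ∈ m, A ⁅H, X⁆ = ⁅H, A X⁆)
    (hGO : ∀ X ∈ m, ∃ H ∈ h, ⁅H + X, A X⁆ ∈ h)
    (p : Submodule ℝ g) (hpm : p ≤ m)
    (hk : ∀ X ∈ h.toSubmodule ⊔ p, ∀ Y ∈ h.toSubmodule ⊔ p,
      ⁅X, Y⁆ ∈ h.toSubmodule ⊔ p)
    (hAp : Submodule.map A p = p) :
    (∀ Z ∈ h.toSubmodule ⊔ p, ∀ X ∈ m, (∀ W ∈ p, B X W = 0) →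
        ⁅Z, X⁆ ∈ m ∧ ∀ W ∈ p, B ⁅Z, X⁆ W = 0) ∧
      ∀ Z ∈ h.toSubmodule ⊔ p, ∀ X ∈ m, ∀ Y ∈ m,
        (∀ W ∈ p, B X W = 0) → (∀ W ∈ p, B Y W = 0) →
        B ⁅Z, X⁆ (A Y) + B X (A ⁅Z, Y⁆) = 0 := by

  -- membership of h and p in k := h ⊔ p
  have hhK : ∀ H ∈ h, H ∈ h.toSubmodule ⊔ p := fun H hH =>
    Submodule.mem_sup_left (by exact hH)
  have hpK : ∀ P ∈ p, P ∈ h.toSubmodule ⊔ p := fun P hP => Submodule.mem_sup_right hP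
  -- X ∈ p⊥ is B-orthogonal to all of k
  have key0 : ∀ X ∈ m, (∀ W ∈ p, B X W = 0) → ∀ ξ ∈ h.toSubmodule ⊔ p, B X ξ = 0 := by
    intro X hX hXp ξ hξ
    obtain ⟨H, hH, P, hP, rfl⟩ := Submodule.mem_sup.mp hξ
    rw [map_add, (hm X).mp hX H hH, hXp P hP, add_zero]
  -- [h, m] ⊆ m
  have hbm : ∀ H ∈ h, ∀ X ∈ m, ⁅H, X⁆ ∈ m := by
    intro H hH X hX
    rw [hm]
    intro H' hH'
    have h1 := hBinv H X H'
    have h2 : B X ⁅H, H'⁆ = 0 := (hm X).mp hX _ (h.lie_mem hH hH')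
    linarith
  -- k ∩ m ⊆ p
  have kmp : ∀ ξ ∈ h.toSubmodule ⊔ p, ξ ∈ m → ξ ∈ p := by
    intro ξ hξ hξm
    obtain ⟨H, hH, P, hP, rfl⟩ := Submodule.mem_sup.mp hξ
    have h1 : B (H + P) H = 0 := (hm _).mp hξm H hH
    have h2 : B P H = 0 := (hm P).mp (hpm hP) H hH
    have h3 : B H H = 0 := by
      rw [map_add, LinearMap.add_apply] at h1; linarith
    have hH0 : H = 0 := by
      by_contra hne
      exact absurd h3 (ne_of_gt (hBpos H hne))
    rw [hH0, zero_add]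
    exact hP
  -- Part 1
  have part1 : ∀ Z ∈ h.toSubmodule ⊔ p, ∀ X ∈ m, (∀ W ∈ p, B X W = 0) →
      ⁅Z, X⁆ ∈ m ∧ ∀ W ∈ p, B ⁅Z, X⁆ W = 0 := by
    intro Z hZ X hX hXp
    constructor
    · rw [hm]
      intro H' hH'
      have h1 := hBinv Z X H'
      have h2 : B X ⁅Z, H'⁆ = 0 := key0 X hX hXp _ (hk Z hZ H' (hhK H' hH'))
      linarith
    · intro W hW
      have h1 := hBinv Z X W
      have h2 : B X ⁅Z, W⁆ = 0 := key0 X hX hXp _ (hk Z hZ W (hpK W hW))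
      linarith
  -- A preserves p⊥
  have hAperp : ∀ X ∈ m, (∀ W ∈ p, B X W = 0) → ∀ W ∈ p, B (A X) W = 0 := by
    intro X hX hXp W hW
    have hAW : A W ∈ p := by
      rw [← hAp]; exact Submodule.mem_map_of_mem hW
    rw [hAsymm X hX W (hpm hW)]
    exact hXp _ hAW
  -- key GO consequence: B ⁅P, X⁆ (A X) = 0 for P ∈ p, X ∈ p⊥
  have key : ∀ P ∈ p, ∀ X ∈ m, (∀ W ∈ p, B X W = 0) → B ⁅P, X⁆ (A X) = 0 := by
    intro P hP X hX hXp
    obtain ⟨H, hH, hGOc⟩ := hGO X hX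
    -- B ⁅P,X⁆ (A X) = B P ⁅X, A X⁆
    have e1 : B ⁅X, P⁆ (A X) + B P ⁅X, A X⁆ = 0 := hBinv X P (A X)
    have e2 : B ⁅P, X⁆ (A X) = - B ⁅X, P⁆ (A X) := by
      rw [← lie_skew, map_neg, LinearMap.neg_apply]
    -- B P ⁅H+X, A X⁆ = 0
    have e3 : B P ⁅H + X, A X⁆ = 0 := (hm P).mp (hpm hP) _ hGOc
    have e4 : ⁅H + X, A X⁆ = ⁅H, A X⁆ + ⁅X, A X⁆ := add_lie H X (A X)
    -- B P ⁅H, A X⁆ = - B ⁅H, P⁆ (A X) = 0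
    have e5 : B ⁅H, P⁆ (A X) + B P ⁅H, A X⁆ = 0 := hBinv H P (A X)
    have hHP : ⁅H, P⁆ ∈ p :=
      kmp _ (hk H (hhK H hH) P (hpK P hP)) (hbm H hH P (hpm hP))
    have e6 : B ⁅H, P⁆ (A X) = 0 := by
      rw [hBsymm]; exact hAperp X hX hXp _ hHP
    have e7 : B P ⁅H, A X⁆ + B P ⁅X, A X⁆ = 0 := by
      rw [← LinearMap.map_add, ← e4]; exact e3
    linarith
  refine ⟨part1, ?_⟩
  intro Z hZ X hX Y hY hXp hYp
  obtain ⟨H, hH, P, hP, rfl⟩ := Submodule.mem_sup.mp hZ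
  -- H part
  have hHpart : B ⁅H, X⁆ (A Y) + B X (A ⁅H, Y⁆) = 0 := by
    rw [hAequiv H hH Y hY]
    exact hBinv H X (A Y)
  -- P part
  have hPYm : ⁅P, Y⁆ ∈ m := (part1 P (hpK P hP) Y hY hYp).1
  have hsum : B ⁅P, X + Y⁆ (A (X + Y)) = 0 :=
    key P hP (X + Y) (m.add_mem hX hY)
      (fun W hW => by rw [map_add, LinearMap.add_apply, hXp W hW, hYp W hW, add_zero])
  have hexp : B ⁅P, X⁆ (A X) + B ⁅P, X⁆ (A Y) + B ⁅P, Y⁆ (A X) + B ⁅P, Y⁆ (A Y) = 0 := by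
    have := hsum
    rw [lie_add, map_add, map_add, LinearMap.add_apply, map_add, map_add] at this
    linarith
  have hXX : B ⁅P, X⁆ (A X) = 0 := key P hP X hX hXp
  have hYY : B ⁅P, Y⁆ (A Y) = 0 := key P hP Y hY hYp
  have hswap : B X (A ⁅P, Y⁆) = B ⁅P, Y⁆ (A X) := by
    rw [← hAsymm X hX _ hPYm, hBsymm]
  have hPpart : B ⁅P, X⁆ (A Y) + B X (A ⁅P, Y⁆) = 0 := by
    rw [hswap]; linarith
  -- combine
  have hfin : B ⁅H + P, X⁆ (A Y) = B ⁅H, X⁆ (A Y) + B ⁅P, X⁆ (A Y) := by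
    rw [add_lie, map_add, LinearMap.add_apply]
  have hfin2 : B X (A ⁅H + P, Y⁆) = B X (A ⁅H, Y⁆) + B X (A ⁅P, Y⁆) := by
    rw [add_lie, map_add, map_add]
  rw [hfin, hfin2]
  linarith
end

section
/- Suppose m = m_1 ⊕ ⋯ ⊕ m_k is a decomposition into pairwise ⟨·,·⟩-orthogonal subspaces with [h, m_i] ⊆ m_i for each i, such that [m_i, m_j] = 0 for all i < j with (i, j) ≠ (1, 2), [m_1, m_2] ⊆ m_2, and such that for all X ∈ m_1 and Y ∈ m_2 there exists H ∈ h with [H, Y] = [X, Y] and [H, m_i] = 0 for every i ≠ 2. Then for all positive real numbers x_1, …, x_k the endomorphism A = x_1·id_{m_1} + ⋯ + x_k·id_{m_k} is symmetric, positive definite, h-equivariant, and the datum (g, ⟨·,·⟩, h, A) satisfies the GO condition (so every such metric is a metric with homogeneous geodesics). -/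
/-
Setting: a finite-dimensional real Lie algebra `g` with an ad-invariant inner
product (encoded as a positive definite symmetric bilinear form `B`), a Lie
subalgebra `h`, the orthogonal complement `m = h^⊥`, and the metric
endomorphism `A : m → m` (encoded as a linear map of `g` preserving `m`) which
is symmetric, positive definite and `h`-equivariant on `m`.
-/
private lemma lie_sum_aux {g : Type*} [LieRing g] (x : g) (s : Finset ℕ) (f : ℕ → g) :
    ⁅x, ∑ i ∈ s, f i⁆ = ∑ i ∈ s, ⁅x, f i⁆ := by
  induction s using Finset.cons_induction with
  | empty => simp
  | cons a s ha ih => rw [Finset.sum_cons, Finset.sum_cons, lie_add, ih]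

private lemma sum_lie_aux {g : Type*} [LieRing g] (s : Finset ℕ) (f : ℕ → g) (y : g) :
    ⁅∑ i ∈ s, f i, y⁆ = ∑ i ∈ s, ⁅f i, y⁆ := by
  induction s using Finset.cons_induction with
  | empty => simp
  | cons a s ha ih => rw [Finset.sum_cons, Finset.sum_cons, add_lie, ih]

/-- A sufficient condition for existence of GO-metrics: for the given bracket relations between the orthogonal `ad h`-invariant summands `m = m₁ ⊕ ⋯ ⊕ m_k`, every diagonal endomorphism `A = Σ xᵢ·id_{mᵢ}` with `xᵢ > 0` is symmetric, positive definite, `h`-equivariant and satisfies the GO condition. -/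
theorem stmt_10
    {g : Type*} [LieRing g] [LieAlgebra ℝ g] [FiniteDimensional ℝ g]
    (B : g →ₗ[ℝ] g →ₗ[ℝ] ℝ)
    (hBsymm : ∀ X Y : g, B X Y = B Y X)
    (hBpos : ∀ X : g, X ≠ 0 → 0 < B X X)
    (hBinv : ∀ Z X Y : g, B ⁅Z, X⁆ Y + B X ⁅Z, Y⁆ = 0)
    (h : LieSubalgebra ℝ g)
    (m : Submodule ℝ g) (hm : ∀ X : g, X ∈ m ↔ ∀ H ∈ h, B X H = 0)
    (k : ℕ) (hk : 2 ≤ k) (M : ℕ → Submodule ℝ g)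
    (hMm : ∀ i < k, M i ≤ m)
    (hMh : ∀ i < k, ∀ H ∈ h, ∀ X ∈ M i, ⁅H, X⁆ ∈ M i)
    (horth : ∀ i < k, ∀ j < k, i ≠ j → ∀ X ∈ M i, ∀ Y ∈ M j, B X Y = 0)
    (hsup : (⨆ i ∈ Finset.range k, M i) = m)
    (hcomm : ∀ i < k, ∀ j < k, i < j → ¬(i = 0 ∧ j = 1) →
      ∀ X ∈ M i, ∀ Y ∈ M j, ⁅X, Y⁆ = 0)
    (h12 : ∀ X ∈ M 0, ∀ Y ∈ M 1, ⁅X, Y⁆ ∈ M 1)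
    (hH : ∀ X ∈ M 0, ∀ Y ∈ M 1, ∃ H ∈ h, ⁅H, Y⁆ = ⁅X, Y⁆ ∧
      ∀ i < k, i ≠ 1 → ∀ W ∈ M i, ⁅H, W⁆ = 0)
    (x : ℕ → ℝ) (hx : ∀ i < k, 0 < x i)
    (A : g →ₗ[ℝ] g) (hA : ∀ i < k, ∀ X ∈ M i, A X = x i • X) :
    (∀ X ∈ m, ∀ Y ∈ m, B (A X) Y = B X (A Y)) ∧
      (∀ X ∈ m, X ≠ 0 → 0 < B (A X) X) ∧
      (∀ H ∈ h, ∀ X ∈ m, A ⁅H, X⁆ = ⁅H, A X⁆) ∧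
      ∀ X ∈ m, ∃ H ∈ h, ⁅H + X, A X⁆ ∈ h := by
  classical
  -- Every element of `m` decomposes as a sum of components in the `M i`.
  have hdec : ∀ X ∈ m, ∃ f : ℕ → g,
      (∀ i, f i ∈ M i) ∧ X = ∑ i ∈ Finset.range k, f i := by
    intro X hX
    rw [← hsup] at hX
    let S : Submodule ℝ g :=
      { carrier := {X | ∃ f : ℕ → g, (∀ i, f i ∈ M i) ∧ X = ∑ i ∈ Finset.range k, f i}
        add_mem' := by
          rintro a b ⟨f, hf, rfl⟩ ⟨p, hp, rfl⟩
          exact ⟨f + p, fun i => (M i).add_mem (hf i) (hp i), by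
            simp [Finset.sum_add_distrib]⟩
        zero_mem' := ⟨0, fun i => (M i).zero_mem, by simp⟩
        smul_mem' := by
          rintro c a ⟨f, hf, rfl⟩
          exact ⟨c • f, fun i => (M i).smul_mem c (hf i), by
            simp [Finset.smul_sum]⟩ }
    have hle : (⨆ i ∈ Finset.range k, M i) ≤ S := by
      refine iSup_le fun i => iSup_le fun hi Y hY => ?_
      refine ⟨fun j => if j = i then Y else 0, fun j => ?_, ?_⟩
      · by_cases hji : j = i
        · simpa [hji] using hY
        · simp [hji]
      · simp [Finset.sum_ite_eq' (Finset.range k) i fun _ => Y, hi]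
    exact hle hX
  have h0k : 0 < k := lt_of_lt_of_le two_pos hk
  have h1k : 1 < k := hk
  refine ⟨?_, ?_, ?_, ?_⟩
  · -- symmetry
    intro X hX Y hY
    obtain ⟨f, hf, rfl⟩ := hdec X hX
    obtain ⟨p, hp, rfl⟩ := hdec Y hY
    have point : ∀ i ∈ Finset.range k, ∀ j ∈ Finset.range k,
        B (A (f i)) (p j) = B (f i) (A (p j)) := by
      intro i hi j hj
      rw [Finset.mem_range] at hi hj
      rw [hA i hi _ (hf i), hA j hj _ (hp j), map_smul, LinearMap.smul_apply,
        map_smul]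
      by_cases hij : i = j
      · subst hij; rfl
      · rw [horth i hi j hj hij _ (hf i) _ (hp j)]; simp
    calc B (A (∑ i ∈ Finset.range k, f i)) (∑ j ∈ Finset.range k, p j)
        = ∑ i ∈ Finset.range k, ∑ j ∈ Finset.range k, B (A (f i)) (p j) := by
          simp only [map_sum, LinearMap.sum_apply]
          exact Finset.sum_comm
      _ = ∑ i ∈ Finset.range k, ∑ j ∈ Finset.range k, B (f i) (A (p j)) :=
          Finset.sum_congr rfl fun i hi => Finset.sum_congr rfl fun j hj =>
            point i hi j hj
      _ = B (∑ i ∈ Finset.range k, f i) (A (∑ j ∈ Finset.range k, p j)) := by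
          simp only [map_sum, LinearMap.sum_apply]
          exact Finset.sum_comm
  · -- positive definiteness
    intro X hX hX0
    obtain ⟨f, hf, rfl⟩ := hdec X hX
    have key : B (A (∑ i ∈ Finset.range k, f i)) (∑ i ∈ Finset.range k, f i)
        = ∑ i ∈ Finset.range k, x i * B (f i) (f i) := by
      simp only [map_sum, LinearMap.sum_apply]
      rw [Finset.sum_comm]
      refine Finset.sum_congr rfl fun i hi => ?_
      rw [Finset.mem_range] at hi
      rw [Finset.sum_eq_single_of_mem i (Finset.mem_range.mpr hi)]
      · rw [hA i hi _ (hf i), map_smul, LinearMap.smul_apply, smul_eq_mul]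
      · intro j hj hji
        rw [Finset.mem_range] at hj
        rw [hA i hi _ (hf i), map_smul, LinearMap.smul_apply, smul_eq_mul,
          horth i hi j hj (Ne.symm hji) _ (hf i) _ (hf j), mul_zero]
    rw [key]
    have hnz : ∃ i ∈ Finset.range k, f i ≠ 0 := by
      by_contra hcon
      push_neg at hcon
      exact hX0 (Finset.sum_eq_zero hcon)
    obtain ⟨i0, hi0, hfi0⟩ := hnz
    refine Finset.sum_pos' (fun i hi => ?_) ⟨i0, hi0, ?_⟩
    · rw [Finset.mem_range] at hi
      by_cases hz : f i = 0
      · simp [hz]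
      · exact le_of_lt (mul_pos (hx i hi) (hBpos _ hz))
    · exact mul_pos (hx i0 (Finset.mem_range.mp hi0)) (hBpos _ hfi0)
  · -- equivariance
    intro H hHh X hX
    obtain ⟨f, hf, rfl⟩ := hdec X hX
    rw [lie_sum_aux, map_sum, map_sum, lie_sum_aux]
    refine Finset.sum_congr rfl fun i hi => ?_
    rw [Finset.mem_range] at hi
    rw [hA i hi _ (hf i), hA i hi _ (hMh i hi H hHh _ (hf i)), lie_smul]
  · -- GO condition
    intro X hX
    obtain ⟨f, hf, rfl⟩ := hdec X hX
    -- brackets between distinct components vanish except (0,1) and (1,0)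
    have hbr : ∀ i < k, ∀ j < k, ¬(i = 0 ∧ j = 1) → ¬(i = 1 ∧ j = 0) →
        ⁅f i, f j⁆ = 0 := by
      intro i hi j hj hij1 hij2
      rcases lt_trichotomy i j with hlt | heq | hgt
      · exact hcomm i hi j hj hlt hij1 _ (hf i) _ (hf j)
      · subst heq; exact lie_self _
      · have : ⁅f j, f i⁆ = 0 := by
          refine hcomm j hj i hi hgt ?_ _ (hf j) _ (hf i)
          rintro ⟨rfl, rfl⟩; exact hij2 ⟨rfl, rfl⟩
        rw [← lie_skew, this, neg_zero]
    obtain ⟨H₀, hH₀h, hH₀1, hH₀0⟩ := hH (f 0) (hf 0) (f 1) (hf 1)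
    set Z : g := ⁅f 0, f 1⁆ with hZ
    have hx1 : x 1 ≠ 0 := ne_of_gt (hx 1 h1k)
    refine ⟨((x 0 - x 1) / x 1) • H₀, h.smul_mem _ hH₀h, ?_⟩
    have hAX : A (∑ i ∈ Finset.range k, f i) = ∑ i ∈ Finset.range k, x i • f i := by
      rw [map_sum]
      exact Finset.sum_congr rfl fun i hi => hA i (Finset.mem_range.mp hi) _ (hf i)
    have hbH0 : ⁅H₀, A (∑ i ∈ Finset.range k, f i)⁆ = x 1 • Z := by
      rw [hAX, lie_sum_aux]
      rw [Finset.sum_eq_single_of_mem 1 (Finset.mem_range.mpr h1k)]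
      · rw [lie_smul, hH₀1]
      · intro j hj hj1
        rw [Finset.mem_range] at hj
        rw [lie_smul, hH₀0 j hj hj1 _ (hf j), smul_zero]
    have hbX : ⁅∑ i ∈ Finset.range k, f i, A (∑ i ∈ Finset.range k, f i)⁆
        = x 1 • Z - x 0 • Z := by
      rw [hAX, sum_lie_aux]
      have inner : ∀ i ∈ Finset.range k,
          ⁅f i, ∑ j ∈ Finset.range k, x j • f j⁆ =
            if i = 0 then x 1 • Z else if i = 1 then -(x 0 • Z) else 0 := by
        intro i hi
        rw [Finset.mem_range] at hi
        rw [lie_sum_aux]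
        by_cases hi0 : i = 0
        · subst hi0
          simp only [if_pos rfl]
          rw [Finset.sum_eq_single_of_mem 1 (Finset.mem_range.mpr h1k)]
          · rw [lie_smul, hZ]
            simp
          · intro j hj hj1
            rw [Finset.mem_range] at hj
            rw [lie_smul, hbr 0 h0k j hj (fun hc => hj1 hc.2) (by rintro ⟨h0, _⟩; exact one_ne_zero h0.symm), smul_zero]
        · by_cases hi1 : i = 1
          · subst hi1
            simp only [if_neg hi0, if_pos rfl]
            rw [Finset.sum_eq_single_of_mem 0 (Finset.mem_range.mpr h0k)]
            · rw [lie_smul, ← lie_skew, smul_neg, hZ]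
              simp
            · intro j hj hj0
              rw [Finset.mem_range] at hj
              rw [lie_smul, hbr 1 h1k j hj (by rintro ⟨h1, _⟩; exact one_ne_zero h1) (fun hc => hj0 hc.2), smul_zero]
          · simp only [if_neg hi0, if_neg hi1]
            refine Finset.sum_eq_zero fun j hj => ?_
            rw [Finset.mem_range] at hj
            rw [lie_smul, hbr i hi j hj (fun hc => hi0 hc.1) (fun hc => hi1 hc.1), smul_zero]
      rw [Finset.sum_congr rfl inner]
      have split : ∀ i ∈ Finset.range k,
          (if i = 0 then x 1 • Z else if i = 1 then -(x 0 • Z) else 0) =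
            (if i = 0 then x 1 • Z else 0) + (if i = 1 then -(x 0 • Z) else 0) := by
        intro i _
        by_cases h0 : i = 0
        · subst h0; simp
        · by_cases h1 : i = 1 <;> simp [h0, h1]
      rw [Finset.sum_congr rfl split, Finset.sum_add_distrib,
        Finset.sum_ite_eq' (Finset.range k) 0 fun _ => x 1 • Z,
        Finset.sum_ite_eq' (Finset.range k) 1 fun _ => -(x 0 • Z),
        if_pos (Finset.mem_range.mpr h0k), if_pos (Finset.mem_range.mpr h1k)]
      rw [sub_eq_add_neg]
    have hfin : ((x 0 - x 1) / x 1) • (x 1 • Z) + (x 1 • Z - x 0 • Z) = 0 := by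
      rw [smul_smul, div_mul_cancel₀ _ hx1]
      module
    rw [add_lie, smul_lie, hbH0, hbX, hfin]
    exact h.zero_mem
end

section
/- (No GO condition assumed.) Let k = h ⊕ p and k' = h ⊕ p' be Lie subalgebras of g containing h, with p, p' ⊆ m. Set q = p ∩ p', p_1 = {X ∈ p : ⟨X, q⟩ = 0}, p_2 = {X ∈ p' : ⟨X, q⟩ = 0}, assume ⟨p_1, p_2⟩ = 0, and let n = {X ∈ m : ⟨X, v⟩ = 0 for all v ∈ q + p_1 + p_2}. Then [p_1, p_2] ⊆ n. -/
/-
Setting: a finite-dimensional real Lie algebra `g` with an ad-invariant inner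
product (encoded as a positive definite symmetric bilinear form `B`), a Lie
subalgebra `h`, the orthogonal complement `m = h^⊥`, and the metric
endomorphism `A : m → m` (encoded as a linear map of `g` preserving `m`) which
is symmetric, positive definite and `h`-equivariant on `m`.
-/
/-- (No GO condition assumed.) For two subalgebras `k = h ⊕ p`, `k′ = h ⊕ p′` containing `h`, with `q = p ∩ p′`, `p₁ = p ∩ q^⊥`, `p₂ = p′ ∩ q^⊥` mutually orthogonal, one has `[p₁, p₂] ⊆ n`, where `n` is the orthogonal complement of `q + p₁ + p₂` in `m`. -/
theorem stmt_12
    {g : Type*} [LieRing g] [LieAlgebra ℝ g] [FiniteDimensional ℝ g]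
    (B : g →ₗ[ℝ] g →ₗ[ℝ] ℝ)
    (hBsymm : ∀ X Y : g, B X Y = B Y X)
    (hBpos : ∀ X : g, X ≠ 0 → 0 < B X X)
    (hBinv : ∀ Z X Y : g, B ⁅Z, X⁆ Y + B X ⁅Z, Y⁆ = 0)
    (h : LieSubalgebra ℝ g)
    (m : Submodule ℝ g) (hm : ∀ X : g, X ∈ m ↔ ∀ H ∈ h, B X H = 0)
    (A : g →ₗ[ℝ] g)
    (hAm : ∀ X ∈ m, A X ∈ m)
    (hAsymm : ∀ X ∈ m, ∀ Y ∈ m, B (A X) Y = B X (A Y))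
    (hApos : ∀ X ∈ m, X ≠ 0 → 0 < B (A X) X)
    (hAequiv : ∀ H ∈ h, ∀ X ∈ m, A ⁅H, X⁆ = ⁅H, A X⁆)
    (p p' : Submodule ℝ g) (hpm : p ≤ m) (hp'm : p' ≤ m)
    (hkp : ∀ X ∈ h.toSubmodule ⊔ p, ∀ Y ∈ h.toSubmodule ⊔ p,
      ⁅X, Y⁆ ∈ h.toSubmodule ⊔ p)
    (hkp' : ∀ X ∈ h.toSubmodule ⊔ p', ∀ Y ∈ h.toSubmodule ⊔ p',
      ⁅X, Y⁆ ∈ h.toSubmodule ⊔ p')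
    (horth : ∀ X ∈ p, (∀ W ∈ p ⊓ p', B X W = 0) →
      ∀ Y ∈ p', (∀ W ∈ p ⊓ p', B Y W = 0) → B X Y = 0) :
    ∀ X ∈ p, (∀ W ∈ p ⊓ p', B X W = 0) →
    ∀ Y ∈ p', (∀ W ∈ p ⊓ p', B Y W = 0) →
      ⁅X, Y⁆ ∈ m ∧
      (∀ W ∈ p ⊓ p', B ⁅X, Y⁆ W = 0) ∧
      (∀ W ∈ p, (∀ V ∈ p ⊓ p', B W V = 0) → B ⁅X, Y⁆ W = 0) ∧
      (∀ W ∈ p', (∀ V ∈ p ⊓ p', B W V = 0) → B ⁅X, Y⁆ W = 0) := by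
  intro X hX hXq Y hY hYq
  set q : Submodule ℝ g := p ⊓ p' with hq
  -- B is reflexive
  have hrefl : B.IsRefl := fun x y hxy => by rw [hBsymm]; exact hxy
  -- B restricted to q is nondegenerate
  have hnd : (LinearMap.BilinForm.restrict B q).Nondegenerate := by
    refine (LinearMap.IsRefl.nondegenerate_iff_separatingLeft (hrefl.domRestrict q)).mpr ?_
    intro x hx
    by_contra hne
    have hx0 : (x : g) ≠ 0 := fun h0 => hne (Subtype.ext h0)
    have h1 := hBpos x hx0
    have h2 := hx x
    change B (x : g) (x : g) = 0 at h2
    linarith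
  have hcompl : IsCompl q (LinearMap.BilinForm.orthogonal B q) :=
    LinearMap.BilinForm.isCompl_orthogonal_of_restrict_nondegenerate hrefl hnd
  -- decomposition of any vector into q-part and q-orthogonal part
  have hdecomp : ∀ W : g, ∃ Wq ∈ q, ∃ Wo ∈ LinearMap.BilinForm.orthogonal B q, W = Wq + Wo := by
    intro W
    have : W ∈ q ⊔ LinearMap.BilinForm.orthogonal B q := by rw [hcompl.sup_eq_top]; trivial
    obtain ⟨Wq, hWq, Wo, hWo, hsum⟩ := Submodule.mem_sup.mp this
    exact ⟨Wq, hWq, Wo, hWo, hsum.symm⟩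
  have horthB : ∀ Z ∈ LinearMap.BilinForm.orthogonal B q, ∀ V ∈ q, B Z V = 0 := by
    intro Z hZ V hV
    rw [hBsymm]
    exact hZ V hV
  -- claim 1 : ∀ W ∈ p, B W Y = 0
  have claim1 : ∀ W ∈ p, B W Y = 0 := by
    intro W hW
    obtain ⟨Wq, hWq, Wo, hWo, rfl⟩ := hdecomp W
    have hWop : Wo ∈ p := by
      have : Wo = (Wq + Wo) - Wq := by abel
      rw [this]
      exact Submodule.sub_mem p hW (hq ▸ hWq).1
    have h1 : B Wq Y = 0 := by rw [hBsymm]; exact hYq Wq hWq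
    have h2 : B Wo Y = 0 := horth Wo hWop (horthB Wo hWo) Y hY hYq
    simp [h1, h2]
  -- claim 2 : ∀ W ∈ p', B X W = 0
  have claim2 : ∀ W ∈ p', B X W = 0 := by
    intro W hW
    obtain ⟨Wq, hWq, Wo, hWo, rfl⟩ := hdecomp W
    have hWop : Wo ∈ p' := by
      have : Wo = (Wq + Wo) - Wq := by abel
      rw [this]
      exact Submodule.sub_mem p' hW (hq ▸ hWq).2
    have h1 : B X Wq = 0 := hXq Wq hWq
    have h2 : B X Wo = 0 := horth X hX hXq Wo hWop (horthB Wo hWo)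
    simp [h1, h2]
  have hXm : X ∈ m := hpm hX
  have hYm : Y ∈ m := hp'm hY
  -- [h, m] ⊆ m
  have hhm : ∀ H ∈ h, ∀ Z ∈ m, ⁅H, Z⁆ ∈ m := by
    intro H hH Z hZ
    rw [hm]
    intro H' hH'
    have h1 := hBinv H Z H'
    have h2 : B Z ⁅H, H'⁆ = 0 := (hm Z).mp hZ _ (h.lie_mem hH hH')
    linarith
  -- (h ⊔ p) ∩ m ⊆ p
  have hkm : ∀ Z, Z ∈ h.toSubmodule ⊔ p → Z ∈ m → Z ∈ p := by
    intro Z hZk hZm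
    obtain ⟨H, hH, P, hP, rfl⟩ := Submodule.mem_sup.mp hZk
    have h1 : B (H + P) H = 0 := (hm _).mp hZm H hH
    have h2 : B P H = 0 := (hm P).mp (hpm hP) H hH
    have h3 : B H H = 0 := by
      have : B H H + B P H = 0 := by simpa using h1
      linarith
    have hH0 : H = 0 := by
      by_contra hne
      have := hBpos H hne
      linarith
    rw [hH0, zero_add]
    exact hP
  -- same for p'
  have hkm' : ∀ Z, Z ∈ h.toSubmodule ⊔ p' → Z ∈ m → Z ∈ p' := by
    intro Z hZk hZm
    obtain ⟨H, hH, P, hP, rfl⟩ := Submodule.mem_sup.mp hZk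
    have h1 : B (H + P) H = 0 := (hm _).mp hZm H hH
    have h2 : B P H = 0 := (hm P).mp (hp'm hP) H hH
    have h3 : B H H = 0 := by
      have : B H H + B P H = 0 := by simpa using h1
      linarith
    have hH0 : H = 0 := by
      by_contra hne
      have := hBpos H hne
      linarith
    rw [hH0, zero_add]
    exact hP
  -- [h, p] ⊆ p
  have hHXp : ∀ H ∈ h, ∀ Z ∈ p, ⁅H, Z⁆ ∈ p := by
    intro H hH Z hZ
    refine hkm _ (hkp H (Submodule.mem_sup_left hH) Z (Submodule.mem_sup_right hZ)) ?_
    exact hhm H hH Z (hpm hZ)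
  refine ⟨?_, ?_, ?_, ?_⟩
  · -- ⁅X, Y⁆ ∈ m
    rw [hm]
    intro H hH
    have h1 := hBinv X Y H
    have h2 : ⁅X, H⁆ ∈ p := by
      have : ⁅X, H⁆ = -⁅H, X⁆ := by rw [← lie_skew]
      rw [this]
      exact Submodule.neg_mem p (hHXp H hH X hX)
    have h3 : B Y ⁅X, H⁆ = 0 := by rw [hBsymm]; exact claim1 _ h2
    linarith
  · -- orthogonal to q
    intro W hW
    have h1 := hBinv X Y W
    have hXW : ⁅X, W⁆ ∈ h.toSubmodule ⊔ p :=
      hkp X (Submodule.mem_sup_right hX) W (Submodule.mem_sup_right (hq ▸ hW).1)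
    obtain ⟨H, hH, P, hP, hsum⟩ := Submodule.mem_sup.mp hXW
    have h2 : B Y ⁅X, W⁆ = 0 := by
      rw [← hsum, map_add]
      have hYH : B Y H = 0 := (hm Y).mp hYm H hH
      have hYP : B Y P = 0 := by rw [hBsymm]; exact claim1 P hP
      simp [hYH, hYP]
    linarith
  · -- orthogonal to p₁ (indeed to all of p)
    intro W hW _
    have h1 := hBinv X Y W
    have hXW : ⁅X, W⁆ ∈ h.toSubmodule ⊔ p :=
      hkp X (Submodule.mem_sup_right hX) W (Submodule.mem_sup_right hW)
    obtain ⟨H, hH, P, hP, hsum⟩ := Submodule.mem_sup.mp hXW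
    have h2 : B Y ⁅X, W⁆ = 0 := by
      rw [← hsum, map_add]
      have hYH : B Y H = 0 := (hm Y).mp hYm H hH
      have hYP : B Y P = 0 := by rw [hBsymm]; exact claim1 P hP
      simp [hYH, hYP]
    linarith
  · -- orthogonal to p₂ (indeed to all of p')
    intro W hW _
    have h1 := hBinv Y X W
    have hYW : ⁅Y, W⁆ ∈ h.toSubmodule ⊔ p' :=
      hkp' Y (Submodule.mem_sup_right hY) W (Submodule.mem_sup_right hW)
    obtain ⟨H, hH, P, hP, hsum⟩ := Submodule.mem_sup.mp hYW
    have h2 : B X ⁅Y, W⁆ = 0 := by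
      rw [← hsum, map_add]
      have hXH : B X H = 0 := (hm X).mp hXm H hH
      have hXP : B X P = 0 := claim2 P hP
      simp [hXH, hXP]
    have h3 : B ⁅Y, X⁆ W = 0 := by linarith
    have h4 : ⁅X, Y⁆ = -⁅Y, X⁆ := by rw [← lie_skew]
    rw [h4, map_neg, LinearMap.neg_apply, h3, neg_zero]
end

section
/- Assume the GO condition holds. Let p_1, p_2 ⊆ m be subspaces with [h, p_1] ⊆ p_1, [h, p_2] ⊆ p_2, ⟨p_1, p_2⟩ = 0 and ⟨[X, Y], v⟩ = 0 for all X ∈ p_1, Y ∈ p_2, v ∈ p_1 + p_2 (the brackets [p_1, p_2] are orthogonal to p_1 + p_2). If p_1 ⊆ ker(A − λ·id), p_2 ⊆ ker(A − μ·id) and [p_1, p_2] ≠ 0, then λ = μ; equivalently, if λ ≠ μ then [p_1, p_2] = 0. -/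
/-
Setting: a finite-dimensional real Lie algebra `g` with an ad-invariant inner
product (encoded as a positive definite symmetric bilinear form `B`), a Lie
subalgebra `h`, the orthogonal complement `m = h^⊥`, and the metric
endomorphism `A : m → m` (encoded as a linear map of `g` preserving `m`) which
is symmetric, positive definite and `h`-equivariant on `m`.
-/
/-- In a GO-space, if `p₁ ⊆ ker(A − λ)`, `p₂ ⊆ ker(A − μ)` are orthogonal `ad h`-invariant subspaces whose brackets are orthogonal to `p₁ + p₂`, and `[p₁, p₂] ≠ 0`, then `λ = μ`. -/
theorem stmt_13
    {g : Type*} [LieRing g] [LieAlgebra ℝ g] [FiniteDimensional ℝ g]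
    (B : g →ₗ[ℝ] g →ₗ[ℝ] ℝ)
    (hBsymm : ∀ X Y : g, B X Y = B Y X)
    (hBpos : ∀ X : g, X ≠ 0 → 0 < B X X)
    (hBinv : ∀ Z X Y : g, B ⁅Z, X⁆ Y + B X ⁅Z, Y⁆ = 0)
    (h : LieSubalgebra ℝ g)
    (m : Submodule ℝ g) (hm : ∀ X : g, X ∈ m ↔ ∀ H ∈ h, B X H = 0)
    (A : g →ₗ[ℝ] g)
    (hAm : ∀ X ∈ m, A X ∈ m)
    (hAsymm : ∀ X ∈ m, ∀ Y ∈ m, B (A X) Y = B X (A Y))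
    (hApos : ∀ X ∈ m, X ≠ 0 → 0 < B (A X) X)
    (hAequiv : ∀ H ∈ h, ∀ X ∈ m, A ⁅H, X⁆ = ⁅H, A X⁆)
    (hGO : ∀ X ∈ m, ∃ H ∈ h, ⁅H + X, A X⁆ ∈ h)
    (lam mu : ℝ)
    (p1 p2 : Submodule ℝ g) (hp1m : p1 ≤ m) (hp2m : p2 ≤ m)
    (hp1h : ∀ H ∈ h, ∀ X ∈ p1, ⁅H, X⁆ ∈ p1)
    (hp2h : ∀ H ∈ h, ∀ Y ∈ p2, ⁅H, Y⁆ ∈ p2)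
    (horth : ∀ X ∈ p1, ∀ Y ∈ p2, B X Y = 0)
    (hbr : ∀ X ∈ p1, ∀ Y ∈ p2, ∀ v ∈ p1 ⊔ p2, B ⁅X, Y⁆ v = 0)
    (hp1e : ∀ X ∈ p1, A X = lam • X)
    (hp2e : ∀ Y ∈ p2, A Y = mu • Y)
    (hne0 : ∃ X ∈ p1, ∃ Y ∈ p2, ⁅X, Y⁆ ≠ 0) :
    lam = mu := by
  obtain ⟨X, hX, Y, hY, hXY⟩ := hne0
  obtain ⟨H, hH, hW⟩ := hGO (X + Y) (m.add_mem (hp1m hX) (hp2m hY))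
  set W := ⁅H + (X + Y), A (X + Y)⁆ with hWdef
  have h1 : B ⁅X, Y⁆ W = 0 := by
    have hi := hBinv X W Y
    have h2 : B ⁅X, W⁆ Y = - B ⁅W, X⁆ Y := by rw [← lie_skew, map_neg]; simp
    have h3 : B ⁅W, X⁆ Y = 0 := horth _ (hp1h W hW X hX) _ hY
    rw [hBsymm]
    linarith
  have hA : A (X + Y) = lam • X + mu • Y := by rw [map_add, hp1e X hX, hp2e Y hY]
  have hexp : B ⁅X, Y⁆ W = lam * B ⁅X, Y⁆ ⁅H, X⁆ + mu * B ⁅X, Y⁆ ⁅H, Y⁆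
      + (mu - lam) * B ⁅X, Y⁆ ⁅X, Y⁆ := by
    rw [hWdef, hA]
    simp only [lie_add, add_lie, lie_smul, lie_self, smul_zero, add_zero, zero_add,
      ← lie_skew Y X, map_add, map_smul, map_neg, smul_eq_mul, smul_neg]
    ring
  have hbr1 : B ⁅X, Y⁆ ⁅H, X⁆ = 0 := hbr X hX Y hY _ (Submodule.mem_sup_left (hp1h H hH X hX))
  have hbr2 : B ⁅X, Y⁆ ⁅H, Y⁆ = 0 := hbr X hX Y hY _ (Submodule.mem_sup_right (hp2h H hH Y hY))
  have hpos : 0 < B ⁅X, Y⁆ ⁅X, Y⁆ := hBpos _ hXY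
  have hz : (mu - lam) * B ⁅X, Y⁆ ⁅X, Y⁆ = 0 := by
    rw [hexp, hbr1, hbr2] at h1; linarith
  rcases mul_eq_zero.mp hz with h' | h'
  · linarith
  · linarith
end

section
/- Assume the GO condition holds. Let p_1, p_2 ⊆ m be nonzero A-invariant subspaces with [h, p_1] ⊆ p_1, [h, p_2] ⊆ p_2, ⟨p_1, p_2⟩ = 0, and ⟨[X, Y], v⟩ = 0 for all X ∈ p_1, Y ∈ p_2 and v ∈ p_1 + p_2. Suppose moreover that [u, v] ≠ 0 for every pair of nonzero subspaces u ⊆ p_1 and v ⊆ p_2 with [h, u] ⊆ u and [h, v] ⊆ v (no commuting ad_h-submodules). Then A is scalar on p_1 + p_2: there exists λ > 0 such that A X = λ X for all X ∈ p_1 + p_2. -/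
/-- Auxiliary: a linear endomorphism symmetric w.r.t. a positive definite symmetric
bilinear form on a finite-dimensional real vector space has full eigenspace decomposition. -/
lemma aux_eigen_sup {E : Type*} [AddCommGroup E] [Module ℝ E] [FiniteDimensional ℝ E]
    (b : E →ₗ[ℝ] E →ₗ[ℝ] ℝ) (hsymm : ∀ x y, b x y = b y x)
    (hpos : ∀ x, x ≠ 0 → 0 < b x x)
    (T : E →ₗ[ℝ] E) (hT : ∀ x y, b (T x) y = b x (T y)) :
    (⨆ μ : ℝ, Module.End.eigenspace T μ) = ⊤ := by
  letI c : InnerProductSpace.Core ℝ E :=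
    { inner := fun x y => b x y
      conj_inner_symm := by
        intro x y
        simpa [starRingEnd_apply] using hsymm y x
      re_inner_nonneg := by
        intro x
        rcases eq_or_ne x 0 with rfl | hx
        · simp
        · simpa using (hpos x hx).le
      add_left := by intro x y z; simp
      smul_left := by intro x y r; simp [starRingEnd_apply]
      definite := by
        intro x hx
        by_contra hx0
        exact absurd hx (ne_of_gt (hpos x hx0)) }
  letI : NormedAddCommGroup E := c.toNormedAddCommGroup
  letI : InnerProductSpace ℝ E := InnerProductSpace.ofCore c.toCore
  have hTs : T.IsSymmetric := fun x y => hT x y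
  exact Submodule.orthogonal_eq_bot_iff.mp hTs.orthogonalComplement_iSup_eigenspaces_eq_bot

/-- Auxiliary: eigenspace decomposition relative to an invariant subspace. -/
lemma aux_sup_inf {g : Type*} [AddCommGroup g] [Module ℝ g] [FiniteDimensional ℝ g]
    (B : g →ₗ[ℝ] g →ₗ[ℝ] ℝ) (hBsymm : ∀ X Y : g, B X Y = B Y X)
    (hBpos : ∀ X : g, X ≠ 0 → 0 < B X X)
    (A : g →ₗ[ℝ] g) (p : Submodule ℝ g) (hAp : ∀ X ∈ p, A X ∈ p)
    (hsymm : ∀ X ∈ p, ∀ Y ∈ p, B (A X) Y = B X (A Y)) :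
    (⨆ α : ℝ, Module.End.eigenspace A α ⊓ p) = p := by
  set T : p →ₗ[ℝ] p := A.restrict hAp with hTdef
  have hsup : (⨆ μ : ℝ, Module.End.eigenspace T μ) = ⊤ := by
    refine aux_eigen_sup (B.compl₁₂ p.subtype p.subtype) ?_ ?_ T ?_
    · intro x y; simpa using hBsymm x y
    · intro x hx
      have : (x : g) ≠ 0 := by
        simpa [Submodule.coe_eq_zero] using hx
      simpa using hBpos x this
    · intro x y
      simpa [hTdef, LinearMap.restrict_apply] using hsymm x x.2 y y.2
  have hmap : ∀ α : ℝ,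
      (Module.End.eigenspace T α).map p.subtype = Module.End.eigenspace A α ⊓ p := by
    intro α
    apply le_antisymm
    · rintro X hX
      rcases Submodule.mem_map.mp hX with ⟨x, hx, rfl⟩
      rw [Module.End.mem_eigenspace_iff] at hx
      refine Submodule.mem_inf.mpr ⟨?_, x.2⟩
      rw [Module.End.mem_eigenspace_iff]
      have := congrArg Subtype.val hx
      simpa [hTdef, LinearMap.restrict_apply] using this
    · rintro X hX
      rcases Submodule.mem_inf.mp hX with ⟨hX1, hX2⟩
      rw [Module.End.mem_eigenspace_iff] at hX1
      refine Submodule.mem_map.mpr ⟨⟨X, hX2⟩, ?_, rfl⟩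
      rw [Module.End.mem_eigenspace_iff]
      apply Subtype.ext
      simpa [hTdef, LinearMap.restrict_apply] using hX1
  calc (⨆ α : ℝ, Module.End.eigenspace A α ⊓ p)
      = ⨆ α : ℝ, (Module.End.eigenspace T α).map p.subtype := by
        exact congrArg _ (funext fun α => (hmap α).symm)
    _ = ((⨆ μ : ℝ, Module.End.eigenspace T μ)).map p.subtype := (Submodule.map_iSup _ _).symm
    _ = (⊤ : Submodule ℝ p).map p.subtype := by rw [hsup]
    _ = p := by simp [Submodule.map_top, Submodule.range_subtype]

/-- In a GO-space, if `p₁`, `p₂` are nonzero orthogonal `A`- and `ad h`-invariant subspaces of `m` whose brackets are orthogonal to `p₁ + p₂`, and no nonzero `ad h`-invariant subspaces `u ⊆ p₁`, `v ⊆ p₂` commute, then `A` is a (positive) scalar on `p₁ + p₂`. -/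
theorem stmt_14
    {g : Type*} [LieRing g] [LieAlgebra ℝ g] [FiniteDimensional ℝ g]
    (B : g →ₗ[ℝ] g →ₗ[ℝ] ℝ)
    (hBsymm : ∀ X Y : g, B X Y = B Y X)
    (hBpos : ∀ X : g, X ≠ 0 → 0 < B X X)
    (hBinv : ∀ Z X Y : g, B ⁅Z, X⁆ Y + B X ⁅Z, Y⁆ = 0)
    (h : LieSubalgebra ℝ g)
    (m : Submodule ℝ g) (hm : ∀ X : g, X ∈ m ↔ ∀ H ∈ h, B X H = 0)
    (A : g →ₗ[ℝ] g)
    (hAm : ∀ X ∈ m, A X ∈ m)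
    (hAsymm : ∀ X ∈ m, ∀ Y ∈ m, B (A X) Y = B X (A Y))
    (hApos : ∀ X ∈ m, X ≠ 0 → 0 < B (A X) X)
    (hAequiv : ∀ H ∈ h, ∀ X ∈ m, A ⁅H, X⁆ = ⁅H, A X⁆)
    (hGO : ∀ X ∈ m, ∃ H ∈ h, ⁅H + X, A X⁆ ∈ h)
    (p1 p2 : Submodule ℝ g) (hp1m : p1 ≤ m) (hp2m : p2 ≤ m)
    (hp1ne : p1 ≠ ⊥) (hp2ne : p2 ≠ ⊥)
    (hAp1 : ∀ X ∈ p1, A X ∈ p1) (hAp2 : ∀ Y ∈ p2, A Y ∈ p2)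
    (hp1h : ∀ H ∈ h, ∀ X ∈ p1, ⁅H, X⁆ ∈ p1)
    (hp2h : ∀ H ∈ h, ∀ Y ∈ p2, ⁅H, Y⁆ ∈ p2)
    (horth : ∀ X ∈ p1, ∀ Y ∈ p2, B X Y = 0)
    (hbr : ∀ X ∈ p1, ∀ Y ∈ p2, ∀ v ∈ p1 ⊔ p2, B ⁅X, Y⁆ v = 0)
    (hnc : ∀ u v : Submodule ℝ g, u ≤ p1 → v ≤ p2 → u ≠ ⊥ → v ≠ ⊥ →
      (∀ H ∈ h, ∀ X ∈ u, ⁅H, X⁆ ∈ u) → (∀ H ∈ h, ∀ Y ∈ v, ⁅H, Y⁆ ∈ v) →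
      ∃ X ∈ u, ∃ Y ∈ v, ⁅X, Y⁆ ≠ 0) :
    ∃ lam : ℝ, 0 < lam ∧ ∀ X ∈ p1 ⊔ p2, A X = lam • X := by
  -- Key lemma: eigenvalues on p1 and p2 agree.
  have key : ∀ (α β : ℝ) (u v : Submodule ℝ g), u ≤ p1 → v ≤ p2 → u ≠ ⊥ → v ≠ ⊥ →
      (∀ X ∈ u, A X = α • X) → (∀ Y ∈ v, A Y = β • Y) →
      (∀ H ∈ h, ∀ X ∈ u, ⁅H, X⁆ ∈ u) → (∀ H ∈ h, ∀ Y ∈ v, ⁅H, Y⁆ ∈ v) →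
      α = β := by
    intro α β u v huP hvP hune hvne hue hve huh hvh
    obtain ⟨X, hXu, Y, hYv, hXY⟩ := hnc u v huP hvP hune hvne huh hvh
    have hX1 : X ∈ p1 := huP hXu
    have hY2 : Y ∈ p2 := hvP hYv
    have hXm : X ∈ m := hp1m hX1
    have hYm : Y ∈ m := hp2m hY2
    obtain ⟨H, hH, hW⟩ := hGO (X + Y) (m.add_mem hXm hYm)
    have hAXY : A (X + Y) = α • X + β • Y := by
      rw [map_add, hue X hXu, hve Y hYv]
    rw [hAXY] at hW
    -- expand the bracket
    have expand : ⁅H + (X + Y), α • X + β • Y⁆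
        = ⁅H, α • X + β • Y⁆ + (β - α) • ⁅X, Y⁆ := by
      simp only [add_lie, lie_add, lie_smul, lie_self, smul_zero, add_zero, zero_add,
        sub_smul]
      rw [show ⁅Y, X⁆ = -⁅X, Y⁆ from by rw [← lie_skew X Y, neg_neg]]
      module
    -- the bracket [X, Y] lies in m
    have hXYm : ⁅X, Y⁆ ∈ m := by
      rw [hm]
      intro H' hH'
      have h1 := hBinv X Y H'
      have h2 : B Y ⁅X, H'⁆ = 0 := by
        rw [show ⁅X, H'⁆ = -⁅H', X⁆ from by rw [← lie_skew H' X, neg_neg]]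
        rw [map_neg, hBsymm, horth _ (hp1h H' hH' X hX1) Y hY2]
        simp
      linarith
    -- [H, α X + β Y] lies in m
    have hHPm : ⁅H, α • X + β • Y⁆ ∈ m := by
      rw [lie_add, lie_smul, lie_smul]
      exact m.add_mem (m.smul_mem _ (hp1m (hp1h H hH X hX1)))
        (m.smul_mem _ (hp2m (hp2h H hH Y hY2)))
    -- the GO vector lies in h ∩ m, hence is zero
    have hWm : ⁅H + (X + Y), α • X + β • Y⁆ ∈ m := by
      rw [expand]; exact m.add_mem hHPm (m.smul_mem _ hXYm)
    have hW0 : ⁅H + (X + Y), α • X + β • Y⁆ = 0 := by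
      by_contra hne
      have := (hm _).mp hWm _ hW
      exact absurd this (ne_of_gt (hBpos _ hne))
    have heq : ⁅H, α • X + β • Y⁆ = (α - β) • ⁅X, Y⁆ := by
      have := expand.symm.trans hW0
      have h2 : ⁅H, α • X + β • Y⁆ = -((β - α) • ⁅X, Y⁆) := by
        rw [eq_neg_iff_add_eq_zero]; exact this
      rw [h2]; module
    -- the bracket with h is B-orthogonal to [X, Y]
    have hPsup : α • X + β • Y ∈ p1 ⊔ p2 :=
      Submodule.add_mem _ (Submodule.smul_mem _ _ (Submodule.mem_sup_left hX1))
        (Submodule.smul_mem _ _ (Submodule.mem_sup_right hY2))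
    have h0 : B ⁅H, α • X + β • Y⁆ ⁅X, Y⁆ = 0 := by
      have h1 := hBinv H (α • X + β • Y) ⁅X, Y⁆
      have h2 : ⁅H, ⁅X, Y⁆⁆ = ⁅⁅H, X⁆, Y⁆ + ⁅X, ⁅H, Y⁆⁆ := leibniz_lie H X Y
      have h3 : B (α • X + β • Y) ⁅⁅H, X⁆, Y⁆ = 0 := by
        rw [hBsymm]; exact hbr _ (hp1h H hH X hX1) _ hY2 _ hPsup
      have h4 : B (α • X + β • Y) ⁅X, ⁅H, Y⁆⁆ = 0 := by
        rw [hBsymm]; exact hbr _ hX1 _ (hp2h H hH Y hY2) _ hPsup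
      have h5 : B (α • X + β • Y) ⁅H, ⁅X, Y⁆⁆ = 0 := by
        rw [h2, map_add, h3, h4, add_zero]
      linarith
    rw [heq, map_smul] at h0
    have hpos := hBpos _ hXY
    have : α - β = 0 := by
      by_contra hab
      simp only [LinearMap.smul_apply, smul_eq_mul] at h0
      rcases mul_eq_zero.mp h0 with h' | h'
      · exact hab h'
      · exact absurd h' (ne_of_gt hpos)
    linarith
  -- eigenspace decompositions
  have hsup1 : (⨆ α : ℝ, Module.End.eigenspace A α ⊓ p1) = p1 :=
    aux_sup_inf B hBsymm hBpos A p1 hAp1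
      (fun X hX Y hY => hAsymm X (hp1m hX) Y (hp1m hY))
  have hsup2 : (⨆ α : ℝ, Module.End.eigenspace A α ⊓ p2) = p2 :=
    aux_sup_inf B hBsymm hBpos A p2 hAp2
      (fun X hX Y hY => hAsymm X (hp2m hX) Y (hp2m hY))
  -- existence of eigenvalues
  have hex1 : ∃ α : ℝ, Module.End.eigenspace A α ⊓ p1 ≠ ⊥ := by
    by_contra hc
    push_neg at hc
    apply hp1ne
    rw [← hsup1]
    simp [hc]
  have hex2 : ∃ β : ℝ, Module.End.eigenspace A β ⊓ p2 ≠ ⊥ := by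
    by_contra hc
    push_neg at hc
    apply hp2ne
    rw [← hsup2]
    simp [hc]
  obtain ⟨α0, hα0⟩ := hex1
  obtain ⟨β0, hβ0⟩ := hex2
  -- key applied to eigen-subspaces
  have keyE : ∀ α β : ℝ, Module.End.eigenspace A α ⊓ p1 ≠ ⊥ →
      Module.End.eigenspace A β ⊓ p2 ≠ ⊥ → α = β := by
    intro α β hα hβ
    refine key α β (Module.End.eigenspace A α ⊓ p1) (Module.End.eigenspace A β ⊓ p2)
      inf_le_right inf_le_right hα hβ ?_ ?_ ?_ ?_
    · intro X hX
      exact Module.End.mem_eigenspace_iff.mp (Submodule.mem_inf.mp hX).1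
    · intro Y hY
      exact Module.End.mem_eigenspace_iff.mp (Submodule.mem_inf.mp hY).1
    · intro H hH X hX
      rcases Submodule.mem_inf.mp hX with ⟨hXe, hXp⟩
      rw [Module.End.mem_eigenspace_iff] at hXe
      refine Submodule.mem_inf.mpr ⟨?_, hp1h H hH X hXp⟩
      rw [Module.End.mem_eigenspace_iff, hAequiv H hH X (hp1m hXp), hXe, lie_smul]
    · intro H hH Y hY
      rcases Submodule.mem_inf.mp hY with ⟨hYe, hYp⟩
      rw [Module.End.mem_eigenspace_iff] at hYe
      refine Submodule.mem_inf.mpr ⟨?_, hp2h H hH Y hYp⟩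
      rw [Module.End.mem_eigenspace_iff, hAequiv H hH Y (hp2m hYp), hYe, lie_smul]
  refine ⟨α0, ?_, ?_⟩
  · -- positivity
    obtain ⟨X0, hX0p, hX0ne⟩ := Submodule.exists_mem_ne_zero_of_ne_bot hα0
    rcases Submodule.mem_inf.mp hX0p with ⟨hX0e, hX0p1⟩
    rw [Module.End.mem_eigenspace_iff] at hX0e
    have h1 := hApos X0 (hp1m hX0p1) hX0ne
    rw [hX0e, map_smul] at h1
    have h2 := hBpos X0 hX0ne
    simp only [LinearMap.smul_apply, smul_eq_mul] at h1
    nlinarith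
  · -- scalar on p1 ⊔ p2
    have hscal1 : ∀ X ∈ p1, A X = α0 • X := by
      intro X hX
      have hle : p1 ≤ Module.End.eigenspace A α0 := by
        rw [← hsup1]
        refine iSup_le fun α => ?_
        by_cases hα : Module.End.eigenspace A α ⊓ p1 = ⊥
        · rw [hα]; exact bot_le
        · have : α = α0 := (keyE α β0 hα hβ0).trans (keyE α0 β0 hα0 hβ0).symm
          rw [this]; exact inf_le_left
      exact Module.End.mem_eigenspace_iff.mp (hle hX)
    have hscal2 : ∀ Y ∈ p2, A Y = α0 • Y := by
      intro Y hY
      have hle : p2 ≤ Module.End.eigenspace A α0 := by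
        rw [← hsup2]
        refine iSup_le fun β => ?_
        by_cases hβ : Module.End.eigenspace A β ⊓ p2 = ⊥
        · rw [hβ]; exact bot_le
        · have : α0 = β := keyE α0 β hα0 hβ
          rw [← this]; exact inf_le_left
      exact Module.End.mem_eigenspace_iff.mp (hle hY)
    intro X hX
    rcases Submodule.mem_sup.mp hX with ⟨y, hy, z, hz, rfl⟩
    rw [map_add, hscal1 y hy, hscal2 z hz, smul_add]
end

section
/- For every n ≥ 2, the standard decomposition of R(B_n), namely R_0 = {±(e_i − e_j) : 1 ≤ i < j ≤ n}, R_1 = {±e_i : 1 ≤ i ≤ n}, R_2 = {±(e_i + e_j) : 1 ≤ i < j ≤ n}, is a special decomposition of R(B_n). -/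
open scoped RealInnerProductSpace Pointwise

/-- The `i`-th standard basis vector of `ℝ^n`. -/
noncomputable def stdE (n : ℕ) (i : Fin n) : EuclideanSpace ℝ (Fin n) :=
  EuclideanSpace.single i 1

/-- The long roots `±(e_i − e_j)`, `i < j`, of the standard decomposition. -/
def stdR0 (n : ℕ) : Set (EuclideanSpace ℝ (Fin n)) :=
  {v | ∃ i j : Fin n, i < j ∧ (v = stdE n i - stdE n j ∨ v = -(stdE n i - stdE n j))}

/-- The short roots `±e_i` of `R(B_n)`. -/
def stdR1 (n : ℕ) : Set (EuclideanSpace ℝ (Fin n)) :=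
  {v | ∃ i : Fin n, v = stdE n i ∨ v = -stdE n i}

/-- The long roots `±(e_i + e_j)`, `i < j`, of the standard decomposition. -/
def stdR2 (n : ℕ) : Set (EuclideanSpace ℝ (Fin n)) :=
  {v | ∃ i j : Fin n, i < j ∧ (v = stdE n i + stdE n j ∨ v = -(stdE n i + stdE n j))}

/-- The root system of type `B_n`:  `{±e_i} ∪ {±e_i ± e_j : i < j}`. -/
def RB (n : ℕ) : Set (EuclideanSpace ℝ (Fin n)) := stdR0 n ∪ stdR1 n ∪ stdR2 n

/-- A *special decomposition* of a (finite, symmetric) set `R` of nonzero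
vectors of a Euclidean space is a partition `R = R₀ ⊔ R₁ ⊔ R₂` satisfying the
conditions (a)–(h) of Alekseevsky–Nikonorov:
(a) each part is symmetric; (b) `R₀` is closed; (c) some `α ∈ R₁`, `β ∈ R₂`
have `α + β ∈ R`; (d) every such pair spans a `B₂`-subsystem (8 roots);
(e) for such a pair with `‖α‖ ≠ ‖β‖`, writing `γ`/`δ` for the shorter/longer
root, `γ + δ` lies in the same part as `γ` and `2γ + δ ∈ R₀`; (f) for such a
pair with `‖α‖ = ‖β‖`, `α − β ∈ R` and exactly one of `α ± β` lies in `R₀`,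
the other in `R₁ ∪ R₂`; (g) if `α ∈ R₁`, `β ∈ R₂` are both long then
`α ± β ∉ R`; (h) adding an `R₀`-root keeps a root in its part. -/
def IsSpecialDecomposition {E : Type*} [NormedAddCommGroup E]
    [InnerProductSpace ℝ E] (R R0 R1 R2 : Set E) : Prop :=
  R = R0 ∪ R1 ∪ R2 ∧
  R0 ∩ R1 = ∅ ∧ R0 ∩ R2 = ∅ ∧ R1 ∩ R2 = ∅ ∧
  R0 = -R0 ∧ R1 = -R1 ∧ R2 = -R2 ∧
  (∀ α ∈ R0, ∀ β ∈ R0, α + β ∈ R → α + β ∈ R0) ∧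
  (∃ α ∈ R1, ∃ β ∈ R2, α + β ∈ R) ∧
  (∀ α ∈ R1, ∀ β ∈ R2, α + β ∈ R →
    (R ∩ (Submodule.span ℝ ({α, β} : Set E) : Set E)).ncard = 8) ∧
  (∀ α ∈ R1, ∀ β ∈ R2, α + β ∈ R →
    (‖α‖ < ‖β‖ → α + β ∈ R1 ∧ (2 : ℝ) • α + β ∈ R0) ∧
    (‖β‖ < ‖α‖ → α + β ∈ R2 ∧ α + (2 : ℝ) • β ∈ R0)) ∧
  (∀ α ∈ R1, ∀ β ∈ R2, α + β ∈ R → ‖α‖ = ‖β‖ →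
    α - β ∈ R ∧ ((α + β ∈ R0 ∧ α - β ∈ R1 ∪ R2) ∨
      (α - β ∈ R0 ∧ α + β ∈ R1 ∪ R2))) ∧
  (∀ α ∈ R1, ∀ β ∈ R2, (∀ δ ∈ R, ‖δ‖ ≤ ‖α‖) → (∀ δ ∈ R, ‖δ‖ ≤ ‖β‖) →
    α + β ∉ R ∧ α - β ∉ R) ∧
  (∀ δ ∈ R1 ∪ R2, ∀ η ∈ R0, δ + η ∈ R →
    (δ ∈ R1 → δ + η ∈ R1) ∧ (δ ∈ R2 → δ + η ∈ R2))

namespace Stmt16Aux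

variable {n : ℕ}

lemma eApp (i k : Fin n) : stdE n i k = if k = i then 1 else 0 := by
  simp [stdE, EuclideanSpace.single_apply]

lemma inner_ee (i j : Fin n) : ⟪stdE n i, stdE n j⟫ = if i = j then 1 else 0 := by
  simp [stdE, EuclideanSpace.inner_single_left, EuclideanSpace.single_apply, eq_comm]

lemma norm_e (i : Fin n) : ‖stdE n i‖ = 1 := by
  simp [stdE, EuclideanSpace.norm_single]

noncomputable def sig (v : EuclideanSpace ℝ (Fin n)) : ℝ := ∑ m, v m

lemma sig_add (v w : EuclideanSpace ℝ (Fin n)) : sig (v + w) = sig v + sig w := by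
  simp [sig, Finset.sum_add_distrib]

lemma sig_neg (v : EuclideanSpace ℝ (Fin n)) : sig (-v) = - sig v := by
  simp [sig]

lemma sig_sub (v w : EuclideanSpace ℝ (Fin n)) : sig (v - w) = sig v - sig w := by
  simp [sig, Finset.sum_sub_distrib]

lemma sig_e (i : Fin n) : sig (stdE n i) = 1 := by
  simp [sig, eApp]

lemma sig_R0 {v : EuclideanSpace ℝ (Fin n)} (hv : v ∈ stdR0 n) : sig v = 0 := by
  obtain ⟨i, j, hij, h | h⟩ := hv <;> subst h <;>
    simp [sig_sub, sig_neg, sig_e]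

lemma sig_R1 {v : EuclideanSpace ℝ (Fin n)} (hv : v ∈ stdR1 n) :
    sig v = 1 ∨ sig v = -1 := by
  obtain ⟨i, h | h⟩ := hv <;> subst h <;> simp [sig_neg, sig_e]

lemma sig_R2 {v : EuclideanSpace ℝ (Fin n)} (hv : v ∈ stdR2 n) :
    sig v = 2 ∨ sig v = -2 := by
  obtain ⟨i, j, hij, h | h⟩ := hv <;> subst h <;>
    simp [sig_add, sig_neg, sig_e] <;> norm_num

lemma normsq_R1 {v : EuclideanSpace ℝ (Fin n)} (hv : v ∈ stdR1 n) : ‖v‖ ^ 2 = 1 := by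
  obtain ⟨i, h | h⟩ := hv <;> subst h <;> simp [norm_e]

lemma normsq_R2 {v : EuclideanSpace ℝ (Fin n)} (hv : v ∈ stdR2 n) : ‖v‖ ^ 2 = 2 := by
  obtain ⟨i, j, hij, h | h⟩ := hv <;> subst h
  all_goals try simp only [norm_neg]
  all_goals rw [norm_add_sq_real, inner_ee]
  all_goals try simp [norm_e, hij.ne]
  all_goals try norm_num

lemma normsq_R0 {v : EuclideanSpace ℝ (Fin n)} (hv : v ∈ stdR0 n) : ‖v‖ ^ 2 = 2 := by
  obtain ⟨i, j, hij, h | h⟩ := hv <;> subst h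
  all_goals try simp only [norm_neg]
  all_goals rw [norm_sub_sq_real, inner_ee]
  all_goals try simp [norm_e, hij.ne]
  all_goals try norm_num

lemma normsq_RB {v : EuclideanSpace ℝ (Fin n)} (hv : v ∈ RB n) : ‖v‖ ^ 2 ≤ 2 := by
  rcases hv with (h | h) | h
  · exact le_of_eq (normsq_R0 h)
  · rw [normsq_R1 h]; norm_num
  · exact le_of_eq (normsq_R2 h)

lemma key {α β : EuclideanSpace ℝ (Fin n)} (ha : α ∈ stdR1 n) (hb : β ∈ stdR2 n)
    (hs : α + β ∈ RB n) :
    ∃ k l : Fin n, k < l ∧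
      ((α = -stdE n k ∧ β = stdE n k + stdE n l) ∨
       (α = stdE n k ∧ β = -(stdE n k + stdE n l)) ∨
       (α = -stdE n l ∧ β = stdE n k + stdE n l) ∨
       (α = stdE n l ∧ β = -(stdE n k + stdE n l))) := by
  have h2 : ‖α + β‖ ^ 2 ≤ 2 := normsq_RB hs
  rw [norm_add_sq_real, normsq_R1 ha, normsq_R2 hb] at h2
  obtain ⟨i, hi⟩ := ha
  obtain ⟨k, l, hkl, hbe⟩ := hb
  refine ⟨k, l, hkl, ?_⟩
  rcases hi with rfl | rfl <;> rcases hbe with rfl | rfl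
  · rw [inner_add_right, inner_ee, inner_ee] at h2
    split_ifs at h2 <;> norm_num at h2
  · by_cases hik : i = k
    · exact Or.inr (Or.inl ⟨by rw [hik], rfl⟩)
    · by_cases hil : i = l
      · exact Or.inr (Or.inr (Or.inr ⟨by rw [hil], rfl⟩))
      · exfalso
        rw [inner_neg_right, inner_add_right, inner_ee, inner_ee,
          if_neg hik, if_neg hil] at h2
        norm_num at h2
  · by_cases hik : i = k
    · exact Or.inl ⟨by rw [hik], rfl⟩
    · by_cases hil : i = l
      · exact Or.inr (Or.inr (Or.inl ⟨by rw [hil], rfl⟩))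
      · exfalso
        rw [inner_neg_left, inner_add_right, inner_ee, inner_ee,
          if_neg hik, if_neg hil] at h2
        norm_num at h2
  · rw [inner_neg_left, inner_neg_right, inner_add_right, inner_ee, inner_ee] at h2
    split_ifs at h2 <;> norm_num at h2

lemma range_f_eq (k l : Fin n) (hkl : k < l) :
    RB n ∩ (Submodule.span ℝ ({stdE n k, stdE n l} :
        Set (EuclideanSpace ℝ (Fin n))) : Set (EuclideanSpace ℝ (Fin n))) =
      Set.range (![stdE n k, -stdE n k, stdE n l, -stdE n l,
        stdE n k + stdE n l, -(stdE n k + stdE n l),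
        stdE n k - stdE n l, -(stdE n k - stdE n l)] : Fin 8 → EuclideanSpace ℝ (Fin n)) := by
  have hne : k ≠ l := hkl.ne
  apply Set.Subset.antisymm
  · rintro v ⟨hvR, hvS⟩
    obtain ⟨c, d, hcd⟩ := Submodule.mem_span_pair.1 hvS
    have coord : ∀ m, v m = c * (if m = k then 1 else 0) + d * (if m = l then 1 else 0) := by
      intro m
      rw [← hcd]
      simp [eApp]
    rcases hvR with (h0 | h1) | h2
    · obtain ⟨i, j, hij, h | h⟩ := h0 <;> subst h
      · have hik : i = k ∨ i = l := by
          by_contra hc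
          push_neg at hc
          have hh := coord i
          simp [eApp, hij.ne, hc.1, hc.2] at hh
        have hjk : j = k ∨ j = l := by
          by_contra hc
          push_neg at hc
          have hh := coord j
          simp [eApp, hij.ne', hc.1, hc.2] at hh
        rcases hik with rfl | rfl <;> rcases hjk with rfl | rfl
        · exact absurd hij (lt_irrefl _)
        · exact ⟨6, rfl⟩
        · exact absurd (hij.trans hkl) (lt_irrefl _)
        · exact absurd hij (lt_irrefl _)
      · have hik : i = k ∨ i = l := by
          by_contra hc
          push_neg at hc
          have hh := coord i
          simp [eApp, hij.ne, hc.1, hc.2] at hh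
        have hjk : j = k ∨ j = l := by
          by_contra hc
          push_neg at hc
          have hh := coord j
          simp [eApp, hij.ne', hc.1, hc.2] at hh
        rcases hik with rfl | rfl <;> rcases hjk with rfl | rfl
        · exact absurd hij (lt_irrefl _)
        · exact ⟨7, rfl⟩
        · exact absurd (hij.trans hkl) (lt_irrefl _)
        · exact absurd hij (lt_irrefl _)
    · obtain ⟨i, h | h⟩ := h1 <;> subst h
      · have hik : i = k ∨ i = l := by
          by_contra hc
          push_neg at hc
          have hh := coord i
          simp [eApp, hc.1, hc.2] at hh
        rcases hik with rfl | rfl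
        · exact ⟨0, rfl⟩
        · exact ⟨2, rfl⟩
      · have hik : i = k ∨ i = l := by
          by_contra hc
          push_neg at hc
          have hh := coord i
          simp [eApp, hc.1, hc.2] at hh
        rcases hik with rfl | rfl
        · exact ⟨1, rfl⟩
        · exact ⟨3, rfl⟩
    · obtain ⟨i, j, hij, h | h⟩ := h2 <;> subst h
      · have hik : i = k ∨ i = l := by
          by_contra hc
          push_neg at hc
          have hh := coord i
          simp [eApp, hij.ne, hc.1, hc.2] at hh
        have hjk : j = k ∨ j = l := by
          by_contra hc
          push_neg at hc
          have hh := coord j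
          simp [eApp, hij.ne', hc.1, hc.2] at hh
        rcases hik with rfl | rfl <;> rcases hjk with rfl | rfl
        · exact absurd hij (lt_irrefl _)
        · exact ⟨4, rfl⟩
        · exact absurd (hij.trans hkl) (lt_irrefl _)
        · exact absurd hij (lt_irrefl _)
      · have hik : i = k ∨ i = l := by
          by_contra hc
          push_neg at hc
          have hh := coord i
          simp [eApp, hij.ne, hc.1, hc.2] at hh
        have hjk : j = k ∨ j = l := by
          by_contra hc
          push_neg at hc
          have hh := coord j
          simp [eApp, hij.ne', hc.1, hc.2] at hh
        rcases hik with rfl | rfl <;> rcases hjk with rfl | rfl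
        · exact absurd hij (lt_irrefl _)
        · exact ⟨5, rfl⟩
        · exact absurd (hij.trans hkl) (lt_irrefl _)
        · exact absurd hij (lt_irrefl _)
  · rintro v ⟨m, rfl⟩
    fin_cases m
    · refine ⟨Or.inl (Or.inr ⟨k, Or.inl rfl⟩), Submodule.mem_span_pair.2 ⟨1, 0, ?_⟩⟩
      show (1:ℝ) • stdE n k + (0:ℝ) • stdE n l = stdE n k
      module
    · refine ⟨Or.inl (Or.inr ⟨k, Or.inr rfl⟩), Submodule.mem_span_pair.2 ⟨-1, 0, ?_⟩⟩
      show (-1:ℝ) • stdE n k + (0:ℝ) • stdE n l = -stdE n k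
      module
    · refine ⟨Or.inl (Or.inr ⟨l, Or.inl rfl⟩), Submodule.mem_span_pair.2 ⟨0, 1, ?_⟩⟩
      show (0:ℝ) • stdE n k + (1:ℝ) • stdE n l = stdE n l
      module
    · refine ⟨Or.inl (Or.inr ⟨l, Or.inr rfl⟩), Submodule.mem_span_pair.2 ⟨0, -1, ?_⟩⟩
      show (0:ℝ) • stdE n k + (-1:ℝ) • stdE n l = -stdE n l
      module
    · refine ⟨Or.inr ⟨k, l, hkl, Or.inl rfl⟩, Submodule.mem_span_pair.2 ⟨1, 1, ?_⟩⟩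
      show (1:ℝ) • stdE n k + (1:ℝ) • stdE n l = stdE n k + stdE n l
      module
    · refine ⟨Or.inr ⟨k, l, hkl, Or.inr rfl⟩, Submodule.mem_span_pair.2 ⟨-1, -1, ?_⟩⟩
      show (-1:ℝ) • stdE n k + (-1:ℝ) • stdE n l = -(stdE n k + stdE n l)
      module
    · refine ⟨Or.inl (Or.inl ⟨k, l, hkl, Or.inl rfl⟩), Submodule.mem_span_pair.2 ⟨1, -1, ?_⟩⟩
      show (1:ℝ) • stdE n k + (-1:ℝ) • stdE n l = stdE n k - stdE n l
      module
    · refine ⟨Or.inl (Or.inl ⟨k, l, hkl, Or.inr rfl⟩), Submodule.mem_span_pair.2 ⟨-1, 1, ?_⟩⟩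
      show (-1:ℝ) • stdE n k + (1:ℝ) • stdE n l = -(stdE n k - stdE n l)
      module

lemma card8 (k l : Fin n) (hkl : k < l) :
    (RB n ∩ (Submodule.span ℝ ({stdE n k, stdE n l} :
        Set (EuclideanSpace ℝ (Fin n))) : Set (EuclideanSpace ℝ (Fin n)))).ncard = 8 := by
  have hne : k ≠ l := hkl.ne
  set f : Fin 8 → EuclideanSpace ℝ (Fin n) :=
    ![stdE n k, -stdE n k, stdE n l, -stdE n l,
      stdE n k + stdE n l, -(stdE n k + stdE n l),
      stdE n k - stdE n l, -(stdE n k - stdE n l)] with hf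
  have hval : ∀ m : Fin 8, (f m) k + 3 * (f m) l =
      ((![1, -1, 3, -3, 4, -4, -2, 2] : Fin 8 → ℤ) m : ℝ) := by
    intro m
    fin_cases m
    · show (stdE n k) k + 3 * (stdE n k) l = ((1 : ℤ) : ℝ)
      simp [eApp, hne, hne.symm]
    · show (-stdE n k) k + 3 * (-stdE n k) l = ((-1 : ℤ) : ℝ)
      simp [eApp, hne, hne.symm]
    · show (stdE n l) k + 3 * (stdE n l) l = ((3 : ℤ) : ℝ)
      simp [eApp, hne, hne.symm]
    · show (-stdE n l) k + 3 * (-stdE n l) l = ((-3 : ℤ) : ℝ)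
      simp [eApp, hne, hne.symm]
    · show (stdE n k + stdE n l) k + 3 * (stdE n k + stdE n l) l = ((4 : ℤ) : ℝ)
      simp [eApp, hne, hne.symm]
      norm_num
    · show (-(stdE n k + stdE n l)) k + 3 * (-(stdE n k + stdE n l)) l = ((-4 : ℤ) : ℝ)
      simp [eApp, hne, hne.symm]
      norm_num
    · show (stdE n k - stdE n l) k + 3 * (stdE n k - stdE n l) l = ((-2 : ℤ) : ℝ)
      simp [eApp, hne, hne.symm]
      norm_num
    · show (-(stdE n k - stdE n l)) k + 3 * (-(stdE n k - stdE n l)) l = ((2 : ℤ) : ℝ)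
      simp [eApp, hne, hne.symm]
      norm_num
  have hinj : Function.Injective f := by
    intro a b hab
    have h1 : ((![1, -1, 3, -3, 4, -4, -2, 2] : Fin 8 → ℤ) a : ℝ) =
        ((![1, -1, 3, -3, 4, -4, -2, 2] : Fin 8 → ℤ) b : ℝ) := by
      rw [← hval a, ← hval b, hab]
    have h2 : (![1, -1, 3, -3, 4, -4, -2, 2] : Fin 8 → ℤ) a =
        (![1, -1, 3, -3, 4, -4, -2, 2] : Fin 8 → ℤ) b := Int.cast_injective h1
    have h3 : ∀ a b : Fin 8, (![1, -1, 3, -3, 4, -4, -2, 2] : Fin 8 → ℤ) a =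
        (![1, -1, 3, -3, 4, -4, -2, 2] : Fin 8 → ℤ) b → a = b := by decide
    exact h3 a b h2
  rw [range_f_eq k l hkl, ← hf, ← Set.image_univ,
    Set.ncard_image_of_injective _ hinj, Set.ncard_univ, Nat.card_eq_fintype_card,
    Fintype.card_fin]

lemma span_case1 (k l : Fin n) :
    Submodule.span ℝ ({-stdE n k, stdE n k + stdE n l} : Set (EuclideanSpace ℝ (Fin n))) =
      Submodule.span ℝ ({stdE n k, stdE n l} : Set (EuclideanSpace ℝ (Fin n))) := by
  apply Submodule.span_eq_span
  · rintro x (rfl | rfl)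
    · exact Submodule.mem_span_pair.2 ⟨-1, 0, by module⟩
    · exact Submodule.mem_span_pair.2 ⟨1, 1, by module⟩
  · rintro x (rfl | rfl)
    · exact Submodule.mem_span_pair.2 ⟨-1, 0, by module⟩
    · exact Submodule.mem_span_pair.2 ⟨1, 1, by module⟩

lemma span_case2 (k l : Fin n) :
    Submodule.span ℝ ({stdE n k, -(stdE n k + stdE n l)} : Set (EuclideanSpace ℝ (Fin n))) =
      Submodule.span ℝ ({stdE n k, stdE n l} : Set (EuclideanSpace ℝ (Fin n))) := by
  apply Submodule.span_eq_span
  · rintro x (rfl | rfl)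
    · exact Submodule.mem_span_pair.2 ⟨1, 0, by module⟩
    · exact Submodule.mem_span_pair.2 ⟨-1, -1, by module⟩
  · rintro x (rfl | rfl)
    · exact Submodule.mem_span_pair.2 ⟨1, 0, by module⟩
    · exact Submodule.mem_span_pair.2 ⟨-1, -1, by module⟩

lemma span_case3 (k l : Fin n) :
    Submodule.span ℝ ({-stdE n l, stdE n k + stdE n l} : Set (EuclideanSpace ℝ (Fin n))) =
      Submodule.span ℝ ({stdE n k, stdE n l} : Set (EuclideanSpace ℝ (Fin n))) := by
  apply Submodule.span_eq_span
  · rintro x (rfl | rfl)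
    · exact Submodule.mem_span_pair.2 ⟨0, -1, by module⟩
    · exact Submodule.mem_span_pair.2 ⟨1, 1, by module⟩
  · rintro x (rfl | rfl)
    · exact Submodule.mem_span_pair.2 ⟨1, 1, by module⟩
    · exact Submodule.mem_span_pair.2 ⟨-1, 0, by module⟩

lemma span_case4 (k l : Fin n) :
    Submodule.span ℝ ({stdE n l, -(stdE n k + stdE n l)} : Set (EuclideanSpace ℝ (Fin n))) =
      Submodule.span ℝ ({stdE n k, stdE n l} : Set (EuclideanSpace ℝ (Fin n))) := by
  apply Submodule.span_eq_span
  · rintro x (rfl | rfl)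
    · exact Submodule.mem_span_pair.2 ⟨0, 1, by module⟩
    · exact Submodule.mem_span_pair.2 ⟨-1, -1, by module⟩
  · rintro x (rfl | rfl)
    · exact Submodule.mem_span_pair.2 ⟨-1, -1, by module⟩
    · exact Submodule.mem_span_pair.2 ⟨1, 0, by module⟩

end Stmt16Aux

open Stmt16Aux

/-- For every `n ≥ 2` the standard decomposition of `R(B_n)`
is a special decomposition. -/
theorem stmt_16 (n : ℕ) (hn : 2 ≤ n) :
    IsSpecialDecomposition (RB n) (stdR0 n) (stdR1 n) (stdR2 n) := by
  refine ⟨rfl, ?_, ?_, ?_, ?_, ?_, ?_, ?_, ?_, ?_, ?_, ?_, ?_, ?_⟩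
  · ext v
    simp only [Set.mem_inter_iff, Set.mem_empty_iff_false, iff_false, not_and]
    intro h0 h1
    have h := sig_R0 h0
    rcases sig_R1 h1 with h' | h' <;> rw [h] at h' <;> norm_num at h'
  · ext v
    simp only [Set.mem_inter_iff, Set.mem_empty_iff_false, iff_false, not_and]
    intro h0 h2
    have h := sig_R0 h0
    rcases sig_R2 h2 with h' | h' <;> rw [h] at h' <;> norm_num at h'
  · ext v
    simp only [Set.mem_inter_iff, Set.mem_empty_iff_false, iff_false, not_and]
    intro h1 h2
    rcases sig_R1 h1 with h | h <;> rcases sig_R2 h2 with h' | h' <;>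
      rw [h] at h' <;> norm_num at h'
  · ext v
    simp only [Set.mem_neg, stdR0, Set.mem_setOf_eq]
    constructor
    · rintro ⟨i, j, hij, h | h⟩
      · exact ⟨i, j, hij, Or.inr (by rw [h])⟩
      · exact ⟨i, j, hij, Or.inl (by rw [h, neg_neg])⟩
    · rintro ⟨i, j, hij, h | h⟩
      · exact ⟨i, j, hij, Or.inr (by rw [← h, neg_neg])⟩
      · exact ⟨i, j, hij, Or.inl (neg_injective h)⟩
  · ext v
    simp only [Set.mem_neg, stdR1, Set.mem_setOf_eq]
    constructor
    · rintro ⟨i, h | h⟩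
      · exact ⟨i, Or.inr (by rw [h])⟩
      · exact ⟨i, Or.inl (by rw [h, neg_neg])⟩
    · rintro ⟨i, h | h⟩
      · exact ⟨i, Or.inr (by rw [← h, neg_neg])⟩
      · exact ⟨i, Or.inl (neg_injective h)⟩
  · ext v
    simp only [Set.mem_neg, stdR2, Set.mem_setOf_eq]
    constructor
    · rintro ⟨i, j, hij, h | h⟩
      · exact ⟨i, j, hij, Or.inr (by rw [h])⟩
      · exact ⟨i, j, hij, Or.inl (by rw [h, neg_neg])⟩
    · rintro ⟨i, j, hij, h | h⟩
      · exact ⟨i, j, hij, Or.inr (by rw [← h, neg_neg])⟩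
      · exact ⟨i, j, hij, Or.inl (neg_injective h)⟩
  · intro a ha b hb hs
    have h0 : sig (a + b) = 0 := by
      rw [sig_add, sig_R0 ha, sig_R0 hb]; ring
    rcases hs with (h | h) | h
    · exact h
    · rcases sig_R1 h with h' | h' <;> rw [h0] at h' <;> norm_num at h'
    · rcases sig_R2 h with h' | h' <;> rw [h0] at h' <;> norm_num at h'
  · have h0 : (0 : ℕ) < n := by omega
    have h1 : (1 : ℕ) < n := by omega
    refine ⟨stdE n ⟨0, h0⟩, ⟨⟨0, h0⟩, Or.inl rfl⟩,
      -(stdE n ⟨0, h0⟩ + stdE n ⟨1, h1⟩),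
      ⟨⟨0, h0⟩, ⟨1, h1⟩, Fin.mk_lt_mk.2 (by omega), Or.inr rfl⟩, ?_⟩
    exact Set.mem_union_left _ (Set.mem_union_right _
      ⟨⟨1, h1⟩, Or.inr (by module)⟩)
  · intro a ha b hb hs
    obtain ⟨k, l, hkl, hc⟩ := key ha hb hs
    rcases hc with ⟨rfl, rfl⟩ | ⟨rfl, rfl⟩ | ⟨rfl, rfl⟩ | ⟨rfl, rfl⟩
    · rw [span_case1]; exact card8 k l hkl
    · rw [span_case2]; exact card8 k l hkl
    · rw [span_case3]; exact card8 k l hkl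
    · rw [span_case4]; exact card8 k l hkl
  · intro a ha b hb hs
    constructor
    · intro _
      obtain ⟨k, l, hkl, hc⟩ := key ha hb hs
      rcases hc with ⟨rfl, rfl⟩ | ⟨rfl, rfl⟩ | ⟨rfl, rfl⟩ | ⟨rfl, rfl⟩
      · exact ⟨⟨l, Or.inl (by module)⟩, ⟨k, l, hkl, Or.inr (by module)⟩⟩
      · exact ⟨⟨l, Or.inr (by module)⟩, ⟨k, l, hkl, Or.inl (by module)⟩⟩
      · exact ⟨⟨k, Or.inl (by module)⟩, ⟨k, l, hkl, Or.inl (by module)⟩⟩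
      · exact ⟨⟨k, Or.inr (by module)⟩, ⟨k, l, hkl, Or.inr (by module)⟩⟩
    · intro hlt
      exfalso
      have h1 := normsq_R1 ha
      have h2 := normsq_R2 hb
      nlinarith [norm_nonneg a, norm_nonneg b]
  · intro a ha b hb _ heq
    have h1 := normsq_R1 ha
    have h2 := normsq_R2 hb
    rw [heq, h2] at h1
    norm_num at h1
  · intro a ha b hb hla _
    exfalso
    have hle := hla b (Set.mem_union_right _ hb)
    have h1 := normsq_R1 ha
    have h2 := normsq_R2 hb
    nlinarith [norm_nonneg a, norm_nonneg b]
  · intro d _ c hc hs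
    have h0 := sig_R0 hc
    constructor
    · intro h1
      have hsig : sig (d + c) = sig d := by rw [sig_add, h0, add_zero]
      rcases hs with (h | h) | h
      · exfalso
        have hz := sig_R0 h
        rcases sig_R1 h1 with h' | h' <;> rw [hsig, h'] at hz <;> norm_num at hz
      · exact h
      · exfalso
        rcases sig_R2 h with h' | h' <;> rcases sig_R1 h1 with h'' | h'' <;>
          rw [hsig, h''] at h' <;> norm_num at h'
    · intro h2
      have hsig : sig (d + c) = sig d := by rw [sig_add, h0, add_zero]
      rcases hs with (h | h) | h
      · exfalso
        have hz := sig_R0 h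
        rcases sig_R2 h2 with h' | h' <;> rw [hsig, h'] at hz <;> norm_num at hz
      · exfalso
        rcases sig_R1 h with h' | h' <;> rcases sig_R2 h2 with h'' | h'' <;>
          rw [hsig, h''] at h' <;> norm_num at h'
      · exact h
end

section
/- Let n ≥ 3 and let R(B_n) = R_0 ⊔ R_1 ⊔ R_2 be a special decomposition such that −e_n ∈ R_1, e_{n−1} + e_n ∈ R_2 and e_{n−1} − e_n ∈ R_0. Let V' = {v ∈ ℝ^n : ⟨v, e_n⟩ = 0}, let R' = R(B_n) ∩ V' (a root system of type B_{n−1} in V'), and set R'_i = R_i ∩ V' for i = 0, 1, 2. Then R' = R'_0 ⊔ R'_1 ⊔ R'_2 is a special decomposition of R'; in particular R'_1 and R'_2 are nonempty (one has e_{n−1} ∈ R'_1, and at least one of ±e_{n−2} + e_{n−1} lies in R'_2). -/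
open scoped RealInnerProductSpace Pointwise

namespace Stmt18

variable {n : ℕ}

lemma stdE_inner (i j : Fin n) (h : i ≠ j) : ⟪stdE n i, stdE n j⟫ = 0 := by
  simp [stdE, EuclideanSpace.inner_single_left, EuclideanSpace.single_apply, h.symm]

lemma norm_stdE (i : Fin n) : ‖stdE n i‖ = 1 := by
  simp [stdE]

lemma norm_stdE_add (i j : Fin n) (h : i ≠ j) :
    ‖stdE n i + stdE n j‖ = Real.sqrt 2 := by
  have h2 : ‖stdE n i + stdE n j‖ ^ 2 = 2 := by
    rw [norm_add_sq_real, stdE_inner i j h, norm_stdE, norm_stdE]; ring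
  rw [← Real.sqrt_sq (norm_nonneg _), h2]

lemma norm_stdE_sub (i j : Fin n) (h : i ≠ j) :
    ‖stdE n i - stdE n j‖ = Real.sqrt 2 := by
  have h2 : ‖stdE n i - stdE n j‖ ^ 2 = 2 := by
    rw [norm_sub_sq_real, stdE_inner i j h, norm_stdE, norm_stdE]; ring
  rw [← Real.sqrt_sq (norm_nonneg _), h2]

lemma one_lt_sqrt2 : (1 : ℝ) < Real.sqrt 2 := by
  have : Real.sqrt 1 < Real.sqrt 2 := Real.sqrt_lt_sqrt (by norm_num) (by norm_num)
  simpa using this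

lemma RB_norm_le (v : EuclideanSpace ℝ (Fin n)) (hv : v ∈ RB n) :
    ‖v‖ ≤ Real.sqrt 2 := by
  rcases hv with (⟨i, j, hij, (rfl | rfl)⟩ | ⟨i, (rfl | rfl)⟩) | ⟨i, j, hij, (rfl | rfl)⟩
  · rw [norm_stdE_sub i j hij.ne]
  · rw [norm_neg, norm_stdE_sub i j hij.ne]
  · rw [norm_stdE]; exact one_lt_sqrt2.le
  · rw [norm_neg, norm_stdE]; exact one_lt_sqrt2.le
  · rw [norm_stdE_add i j hij.ne]
  · rw [norm_neg, norm_stdE_add i j hij.ne]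

lemma mem_RB_single (i : Fin n) : stdE n i ∈ RB n :=
  Or.inl (Or.inr ⟨i, Or.inl rfl⟩)

lemma mem_RB_neg {v : EuclideanSpace ℝ (Fin n)} (h : v ∈ RB n) : -v ∈ RB n := by
  rcases h with (⟨i, j, hij, (rfl | rfl)⟩ | ⟨i, (rfl | rfl)⟩) | ⟨i, j, hij, (rfl | rfl)⟩
  · exact Or.inl (Or.inl ⟨i, j, hij, Or.inr rfl⟩)
  · exact Or.inl (Or.inl ⟨i, j, hij, Or.inl (neg_neg _)⟩)
  · exact Or.inl (Or.inr ⟨i, Or.inr rfl⟩)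
  · exact Or.inl (Or.inr ⟨i, Or.inl (neg_neg _)⟩)
  · exact Or.inr ⟨i, j, hij, Or.inr rfl⟩
  · exact Or.inr ⟨i, j, hij, Or.inl (neg_neg _)⟩

lemma mem_RB_sub (i j : Fin n) (h : i ≠ j) : stdE n i - stdE n j ∈ RB n := by
  rcases h.lt_or_gt with hij | hji
  · exact Or.inl (Or.inl ⟨i, j, hij, Or.inl rfl⟩)
  · exact Or.inl (Or.inl ⟨j, i, hji, Or.inr (neg_sub _ _).symm⟩)

lemma mem_RB_add (i j : Fin n) (h : i ≠ j) : stdE n i + stdE n j ∈ RB n := by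
  rcases h.lt_or_gt with hij | hji
  · exact Or.inr ⟨i, j, hij, Or.inl rfl⟩
  · exact Or.inr ⟨j, i, hji, Or.inl (add_comm _ _)⟩

lemma not_mem_RB (i j k : Fin n) (hik : i ≠ k) (hjk : j ≠ k) :
    -(stdE n i + stdE n k) - (stdE n j + stdE n k) ∉ RB n := by
  intro h
  have hki : ¬ (k = i) := fun e => hik e.symm
  have hkj : ¬ (k = j) := fun e => hjk e.symm
  have hval : (-(stdE n i + stdE n k) - (stdE n j + stdE n k)) k = -2 := by
    norm_num [stdE, EuclideanSpace.single_apply, hki, hkj]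
  rcases h with (⟨a, b, hab, (hh | hh)⟩ | ⟨a, (hh | hh)⟩) | ⟨a, b, hab, (hh | hh)⟩ <;>
    rw [hh] at hval <;>
    simp only [stdE, EuclideanSpace.single_apply, PiLp.add_apply, PiLp.sub_apply,
      PiLp.neg_apply] at hval <;>
    split_ifs at hval with hx hy <;>
    first
      | (exact absurd hab (by rw [← hx, ← hy]; exact lt_irrefl _))
      | norm_num at hval


end Stmt18

lemma key (n : ℕ) (R0 R1 R2 : Set (EuclideanSpace ℝ (Fin n)))
    (hdec : IsSpecialDecomposition (RB n) R0 R1 R2)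
    (ia ib ic : Fin n) (hba : ib < ia) (hcb : ic < ib)
    (h1 : -stdE n ia ∈ R1) (h2 : stdE n ib + stdE n ia ∈ R2)
    (h0 : stdE n ib - stdE n ia ∈ R0) :
    stdE n ib ∈ R1 ∧ (stdE n ic + stdE n ib ∈ R2 ∨ -stdE n ic + stdE n ib ∈ R2) := by
  obtain ⟨hR, h01, h02, h12, hs0, hs1, hs2, -, -, -, he, hf, -, hh⟩ := hdec
  set a := stdE n ia with hA
  set b := stdE n ib with hB
  set c := stdE n ic with hC
  have hca : ic < ia := hcb.trans hba
  have neg0 : ∀ x ∈ R0, -x ∈ R0 := fun x hx => by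
    rw [hs0, Set.mem_neg, neg_neg]; exact hx
  have neg1 : ∀ x ∈ R1, -x ∈ R1 := fun x hx => by
    rw [hs1, Set.mem_neg, neg_neg]; exact hx
  have neg2 : ∀ x ∈ R2, -x ∈ R2 := fun x hx => by
    rw [hs2, Set.mem_neg, neg_neg]; exact hx
  have memdisj : ∀ x, x ∈ RB n → x ∈ R0 ∨ x ∈ R1 ∨ x ∈ R2 := by
    intro x hx
    rw [hR] at hx
    rcases hx with (hx | hx) | hx
    exacts [Or.inl hx, Or.inr (Or.inl hx), Or.inr (Or.inr hx)]
  have hna : ‖(-a : EuclideanSpace ℝ (Fin n))‖ = 1 := by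
    rw [norm_neg, hA, Stmt18.norm_stdE]
  have hnba : ‖b + a‖ = Real.sqrt 2 := Stmt18.norm_stdE_add _ _ hba.ne
  -- Claim 1 : b ∈ R1
  have hb1 : b ∈ R1 := by
    have heq : -a + (b + a) = b := by abel
    have hsum : -a + (b + a) ∈ RB n := by rw [heq]; exact Stmt18.mem_RB_single _
    have := ((he (-a) h1 (b + a) h2 hsum).1 (by
      rw [hna, hnba]; exact Stmt18.one_lt_sqrt2)).1
    rwa [heq] at this
  refine ⟨hb1, ?_⟩
  -- Claim 2
  rcases memdisj (c + b) (Stmt18.mem_RB_add _ _ hcb.ne) with hcb0 | hcb1 | hcb2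
  · -- c + b ∈ R0
    have hac2 : a - c ∈ R2 := by
      have heq : (b + a) + -(c + b) = a - c := by abel
      have hsum : (b + a) + -(c + b) ∈ RB n := by
        rw [heq]; exact Stmt18.mem_RB_sub _ _ hca.ne'
      have := (hh (b + a) (Or.inr h2) (-(c + b)) (neg0 _ hcb0) hsum).2 h2
      rwa [heq] at this
    have hac0 : c + a ∈ R0 := by
      have heq : -a + (a - c) = -c := by abel
      have hsum : -a + (a - c) ∈ RB n := by
        rw [heq]; exact Stmt18.mem_RB_neg (Stmt18.mem_RB_single _)
      have hnac : ‖a - c‖ = Real.sqrt 2 := Stmt18.norm_stdE_sub _ _ hca.ne'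
      have := ((he (-a) h1 (a - c) hac2 hsum).1 (by
        rw [hna, hnac]; exact Stmt18.one_lt_sqrt2)).2
      have heq2 : (2 : ℝ) • (-a) + (a - c) = -(c + a) := by module
      rw [heq2] at this
      have := neg0 _ this
      rwa [neg_neg] at this
    rcases memdisj (c - b) (Stmt18.mem_RB_sub _ _ hcb.ne) with k0 | k1 | k2
    · exfalso
      have heq : (b + a) + (c - b) = c + a := by abel
      have hsum : (b + a) + (c - b) ∈ RB n := by
        rw [heq]; exact Stmt18.mem_RB_add _ _ hca.ne
      have : (b + a) + (c - b) ∈ R2 := (hh (b + a) (Or.inr h2) (c - b) k0 hsum).2 h2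
      rw [heq] at this
      have hmem : c + a ∈ R0 ∩ R2 := ⟨hac0, this⟩
      rw [h02] at hmem
      exact hmem
    · exfalso
      have heq : (c - b) + (b - a) = c - a := by abel
      have hsum : (c - b) + (b - a) ∈ RB n := by
        rw [heq]; exact Stmt18.mem_RB_sub _ _ hca.ne
      have h1' : (c - b) + (b - a) ∈ R1 := (hh (c - b) (Or.inl k1) (b - a) h0 hsum).1 k1
      rw [heq] at h1'
      have h2' : c - a ∈ R2 := by
        have := neg2 _ hac2
        rwa [neg_sub] at this
      have hmem : c - a ∈ R1 ∩ R2 := ⟨h1', h2'⟩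
      rw [h12] at hmem
      exact hmem
    · right
      have := neg2 _ k2
      rwa [neg_sub, sub_eq_neg_add] at this
  · -- c + b ∈ R1 : impossible
    exfalso
    have hca1 : c + a ∈ R1 := by
      have heq : (c + b) + -(b - a) = c + a := by abel
      have hsum : (c + b) + -(b - a) ∈ RB n := by
        rw [heq]; exact Stmt18.mem_RB_add _ _ hca.ne
      have := (hh (c + b) (Or.inl hcb1) (-(b - a)) (neg0 _ h0) hsum).1 hcb1
      rwa [heq] at this
    have hα : -(c + a) ∈ R1 := neg1 _ hca1
    have heq : -(c + a) + (b + a) = b - c := by abel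
    have hsum : -(c + a) + (b + a) ∈ RB n := by
      rw [heq]; exact Stmt18.mem_RB_sub _ _ hcb.ne'
    have hnorm : ‖-(c + a)‖ = ‖b + a‖ := by
      rw [norm_neg, Stmt18.norm_stdE_add _ _ hca.ne, hnba]
    have hbad := (hf (-(c + a)) hα (b + a) h2 hsum hnorm).1
    exact Stmt18.not_mem_RB ic ib ia hca.ne hba.ne hbad
  · exact Or.inl hcb2

lemma neg_inter_eq {α : Type*} [InvolutiveNeg α] {S V : Set α} (hS : S = -S)
    (hV : ∀ v ∈ V, -v ∈ V) : S ∩ V = -(S ∩ V) := by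
  ext x
  simp only [Set.mem_neg, Set.mem_inter_iff]
  constructor
  · rintro ⟨hxS, hxV⟩
    refine ⟨?_, hV _ hxV⟩
    rw [hS, Set.mem_neg, neg_neg]; exact hxS
  · rintro ⟨hxS, hxV⟩
    have h1 : x ∈ S := by rw [hS, Set.mem_neg]; exact hxS
    have h2 : x ∈ V := by have := hV _ hxV; rwa [neg_neg] at this
    exact ⟨h1, h2⟩

lemma main (n : ℕ) (R0 R1 R2 : Set (EuclideanSpace ℝ (Fin n)))
    (hdec : IsSpecialDecomposition (RB n) R0 R1 R2)
    (ia ib ic : Fin n) (hba : ib < ia) (hcb : ic < ib)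
    (h1 : -stdE n ia ∈ R1) (h2 : stdE n ib + stdE n ia ∈ R2)
    (h0 : stdE n ib - stdE n ia ∈ R0)
    (V' : Set (EuclideanSpace ℝ (Fin n)))
    (hV' : V' = {v | inner ℝ v (stdE n ia) = (0 : ℝ)}) :
    IsSpecialDecomposition (RB n ∩ V') (R0 ∩ V') (R1 ∩ V') (R2 ∩ V') ∧
      stdE n ib ∈ R1 ∩ V' ∧
      (stdE n ic + stdE n ib ∈ R2 ∩ V' ∨ -stdE n ic + stdE n ib ∈ R2 ∩ V') := by
  obtain ⟨hb1, hkey⟩ := key n R0 R1 R2 hdec ia ib ic hba hcb h1 h2 h0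
  obtain ⟨hR, h01, h02, h12, hs0, hs1, hs2, hclosed, -, hd, he, hf, hg, hh⟩ := hdec
  set a := stdE n ia with hA
  set b := stdE n ib with hB
  set c := stdE n ic with hC
  have hca : ic < ia := hcb.trans hba
  have neg1 : ∀ x ∈ R1, -x ∈ R1 := fun x hx => by
    rw [hs1, Set.mem_neg, neg_neg]; exact hx
  -- V' is the (coercion of the) kernel of ⟪·, a⟫
  set K : Submodule ℝ (EuclideanSpace ℝ (Fin n)) :=
    LinearMap.ker (innerSL ℝ a).toLinearMap with hK
  have hKV : ∀ v : EuclideanSpace ℝ (Fin n), v ∈ K ↔ v ∈ V' := by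
    intro v
    rw [hV', Set.mem_setOf_eq, hK, LinearMap.mem_ker]
    constructor
    · intro h; rw [real_inner_comm]; exact h
    · intro h; rw [show (innerSL ℝ a).toLinearMap v = ⟪a, v⟫ from rfl, real_inner_comm]; exact h
  have hVneg : ∀ v ∈ V', -v ∈ V' := fun v hv => by
    rw [← hKV]; exact neg_mem ((hKV v).2 hv)
  have hVadd : ∀ v ∈ V', ∀ w ∈ V', v + w ∈ V' := fun v hv w hw => by
    rw [← hKV]; exact add_mem ((hKV v).2 hv) ((hKV w).2 hw)
  have hVsmul : ∀ (r : ℝ), ∀ v ∈ V', r • v ∈ V' := fun r v hv => by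
    rw [← hKV]; exact Submodule.smul_mem _ r ((hKV v).2 hv)
  have hVspan : ∀ α ∈ V', ∀ β ∈ V',
      (Submodule.span ℝ ({α, β} : Set (EuclideanSpace ℝ (Fin n))) : Set _) ⊆ V' := by
    intro α hα β hβ x hx
    have hle : Submodule.span ℝ ({α, β} : Set (EuclideanSpace ℝ (Fin n))) ≤ K := by
      rw [Submodule.span_le]
      rintro y hy
      rcases hy with rfl | hy
      · exact (hKV _).2 hα
      · rw [Set.mem_singleton_iff] at hy; subst hy; exact (hKV _).2 hβ
    exact (hKV x).1 (hle hx)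
  have hbV : b ∈ V' := by
    rw [hV', Set.mem_setOf_eq, hB, hA]; exact Stmt18.stdE_inner _ _ hba.ne
  have hcV : c ∈ V' := by
    rw [hV', Set.mem_setOf_eq, hC, hA]; exact Stmt18.stdE_inner _ _ hca.ne
  have disj : ∀ (S T : Set (EuclideanSpace ℝ (Fin n))), S ∩ T = ∅ →
      (S ∩ V') ∩ (T ∩ V') = ∅ := by
    intro S T hST
    rw [Set.eq_empty_iff_forall_notMem]
    rintro x ⟨⟨hxS, -⟩, hxT, -⟩
    have : x ∈ S ∩ T := ⟨hxS, hxT⟩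
    rw [hST] at this
    exact this
  refine ⟨⟨?_, disj _ _ h01, disj _ _ h02, disj _ _ h12,
    neg_inter_eq hs0 hVneg, neg_inter_eq hs1 hVneg, neg_inter_eq hs2 hVneg,
    ?_, ?_, ?_, ?_, ?_, ?_, ?_⟩, ⟨hb1, hbV⟩, ?_⟩
  · rw [hR, Set.union_inter_distrib_right, Set.union_inter_distrib_right]
  · -- closedness
    rintro α ⟨hα0, -⟩ β ⟨hβ0, -⟩ hsum
    exact ⟨hclosed α hα0 β hβ0 hsum.1, hsum.2⟩
  · -- existence (c)
    rcases hkey with hk | hk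
    · refine ⟨-b, ⟨neg1 _ hb1, hVneg _ hbV⟩, c + b, ⟨hk, hVadd _ hcV _ hbV⟩, ?_⟩
      have heq : -b + (c + b) = c := by abel
      rw [heq]
      exact ⟨Stmt18.mem_RB_single _, hcV⟩
    · refine ⟨-b, ⟨neg1 _ hb1, hVneg _ hbV⟩, -c + b, ⟨hk, hVadd _ (hVneg _ hcV) _ hbV⟩, ?_⟩
      have heq : -b + (-c + b) = -c := by abel
      rw [heq]
      exact ⟨Stmt18.mem_RB_neg (Stmt18.mem_RB_single _), hVneg _ hcV⟩
  · -- (d) ncard = 8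
    rintro α ⟨hα1, hαV⟩ β ⟨hβ2, hβV⟩ hsum
    have hset : (RB n ∩ V') ∩ (Submodule.span ℝ ({α, β} : Set _) : Set _) =
        RB n ∩ (Submodule.span ℝ ({α, β} : Set _) : Set _) := by
      ext x
      constructor
      · rintro ⟨⟨hx, -⟩, hx'⟩; exact ⟨hx, hx'⟩
      · rintro ⟨hx, hx'⟩; exact ⟨⟨hx, hVspan α hαV β hβV hx'⟩, hx'⟩
    rw [hset]
    exact hd α hα1 β hβ2 hsum.1
  · -- (e)
    rintro α ⟨hα1, hαV⟩ β ⟨hβ2, hβV⟩ hsum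
    refine ⟨fun hlt => ?_, fun hlt => ?_⟩
    · obtain ⟨x1, x0⟩ := (he α hα1 β hβ2 hsum.1).1 hlt
      exact ⟨⟨x1, hsum.2⟩, x0, hVadd _ (hVsmul 2 _ hαV) _ hβV⟩
    · obtain ⟨x2, x0⟩ := (he α hα1 β hβ2 hsum.1).2 hlt
      exact ⟨⟨x2, hsum.2⟩, x0, hVadd _ hαV _ (hVsmul 2 _ hβV)⟩
  · -- (f)
    rintro α ⟨hα1, hαV⟩ β ⟨hβ2, hβV⟩ hsum hnorm
    obtain ⟨hsub, hcases⟩ := hf α hα1 β hβ2 hsum.1 hnorm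
    have hsubV : α - β ∈ V' := by
      have := hVadd _ hαV _ (hVneg _ hβV)
      rwa [← sub_eq_add_neg] at this
    refine ⟨⟨hsub, hsubV⟩, ?_⟩
    rcases hcases with ⟨ha', hb'⟩ | ⟨ha', hb'⟩
    · left
      refine ⟨⟨ha', hsum.2⟩, ?_⟩
      rcases hb' with h | h
      exacts [Or.inl ⟨h, hsubV⟩, Or.inr ⟨h, hsubV⟩]
    · right
      refine ⟨⟨ha', hsubV⟩, ?_⟩
      rcases hb' with h | h
      exacts [Or.inl ⟨h, hsum.2⟩, Or.inr ⟨h, hsum.2⟩]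
  · -- (g)
    rintro α ⟨hα1, hαV⟩ β ⟨hβ2, hβV⟩ hmα hmβ
    have hlong : c + b ∈ RB n ∩ V' :=
      ⟨Stmt18.mem_RB_add _ _ hcb.ne, hVadd _ hcV _ hbV⟩
    have hsq : ‖c + b‖ = Real.sqrt 2 := Stmt18.norm_stdE_add _ _ hcb.ne
    have hαlong : ∀ δ ∈ RB n, ‖δ‖ ≤ ‖α‖ := by
      intro δ hδ
      have h2a : Real.sqrt 2 ≤ ‖α‖ := by
        have := hmα _ hlong; rwa [hsq] at this
      exact (Stmt18.RB_norm_le δ hδ).trans h2a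
    have hβlong : ∀ δ ∈ RB n, ‖δ‖ ≤ ‖β‖ := by
      intro δ hδ
      have h2b : Real.sqrt 2 ≤ ‖β‖ := by
        have := hmβ _ hlong; rwa [hsq] at this
      exact (Stmt18.RB_norm_le δ hδ).trans h2b
    obtain ⟨hn1', hn2'⟩ := hg α hα1 β hβ2 hαlong hβlong
    exact ⟨fun h => hn1' h.1, fun h => hn2' h.1⟩
  · -- (h)
    rintro δ hδ η ⟨hη0, -⟩ hsum
    have hδR : δ ∈ R1 ∪ R2 := by
      rcases hδ with ⟨h, -⟩ | ⟨h, -⟩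
      exacts [Or.inl h, Or.inr h]
    obtain ⟨q1, q2⟩ := hh δ hδR η hη0 hsum.1
    exact ⟨fun hd1 => ⟨q1 hd1.1, hsum.2⟩, fun hd2 => ⟨q2 hd2.1, hsum.2⟩⟩
  · -- final disjunction
    rcases hkey with hk | hk
    · exact Or.inl ⟨hk, hVadd _ hcV _ hbV⟩
    · exact Or.inr ⟨hk, hVadd _ (hVneg _ hcV) _ hbV⟩

/-- (Induction step of the classification.)  If `n ≥ 3` and
`R(B_n) = R₀ ⊔ R₁ ⊔ R₂` is a special decomposition with `−e_n ∈ R₁`,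
`e_{n−1} + e_n ∈ R₂` and `e_{n−1} − e_n ∈ R₀`, then the decomposition induced
on `R' = R(B_n) ∩ V'`, where `V' = e_n^⊥` (a root system of type `B_{n−1}`),
is again special; in particular `e_{n−1} ∈ R₁ ∩ V'` and at least one of
`±e_{n−2} + e_{n−1}` lies in `R₂ ∩ V'`. -/
theorem stmt_18 (n : ℕ) (hn : 3 ≤ n)
    (R0 R1 R2 : Set (EuclideanSpace ℝ (Fin n)))
    (hdec : IsSpecialDecomposition (RB n) R0 R1 R2)
    (h1 : -stdE n ⟨n - 1, by omega⟩ ∈ R1)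
    (h2 : stdE n ⟨n - 2, by omega⟩ + stdE n ⟨n - 1, by omega⟩ ∈ R2)
    (h0 : stdE n ⟨n - 2, by omega⟩ - stdE n ⟨n - 1, by omega⟩ ∈ R0)
    (V' : Set (EuclideanSpace ℝ (Fin n)))
    (hV' : V' = {v | inner ℝ v (stdE n ⟨n - 1, by omega⟩) = (0 : ℝ)}) :
    IsSpecialDecomposition (RB n ∩ V') (R0 ∩ V') (R1 ∩ V') (R2 ∩ V') ∧
      stdE n ⟨n - 2, by omega⟩ ∈ R1 ∩ V' ∧
      (stdE n ⟨n - 3, by omega⟩ + stdE n ⟨n - 2, by omega⟩ ∈ R2 ∩ V' ∨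
        -stdE n ⟨n - 3, by omega⟩ + stdE n ⟨n - 2, by omega⟩ ∈ R2 ∩ V') := by
  exact main n R0 R1 R2 hdec ⟨n - 1, by omega⟩ ⟨n - 2, by omega⟩ ⟨n - 3, by omega⟩
    (by simp only [Fin.mk_lt_mk]; omega) (by simp only [Fin.mk_lt_mk]; omega)
    h1 h2 h0 V' hV'
end

section
/- Let n ≥ 2. Every special decomposition of R(B_n) is conjugate to the standard one: for any special decomposition R(B_n) = R_0 ⊔ R_1 ⊔ R_2 there exists a linear isometry f of ℝ^n with f(R(B_n)) = R(B_n) such that f(R_0) = {±(e_i − e_j) : 1 ≤ i < j ≤ n} and either f(R_1) = {±e_i : 1 ≤ i ≤ n} and f(R_2) = {±(e_i + e_j) : 1 ≤ i < j ≤ n}, or f(R_1) = {±(e_i + e_j) : 1 ≤ i < j ≤ n} and f(R_2) = {±e_i : 1 ≤ i ≤ n}. -/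
open scoped RealInnerProductSpace Pointwise

/-- A sign: `±1`. -/
def Sgn (a : ℝ) : Prop := a = 1 ∨ a = -1

lemma Sgn.neg {a : ℝ} (h : Sgn a) : Sgn (-a) := by rcases h with rfl | rfl <;> [right; left] <;> norm_num

lemma Sgn.one : Sgn (1 : ℝ) := Or.inl rfl
lemma Sgn.negone : Sgn (-1 : ℝ) := Or.inr rfl

lemma Sgn.mul {a b : ℝ} (ha : Sgn a) (hb : Sgn b) : Sgn (a * b) := by
  rcases ha with rfl | rfl <;> rcases hb with rfl | rfl <;> simp [Sgn]

lemma Sgn.mul_self {a : ℝ} (ha : Sgn a) : a * a = 1 := by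
  rcases ha with rfl | rfl <;> norm_num

lemma Sgn.ne_zero {a : ℝ} (ha : Sgn a) : a ≠ 0 := by
  rcases ha with rfl | rfl <;> norm_num

lemma Sgn.eq_or {a b : ℝ} (ha : Sgn a) (hb : Sgn b) : a = b ∨ a = -b := by
  rcases ha with rfl | rfl <;> rcases hb with rfl | rfl <;> norm_num

lemma stdE_apply {n : ℕ} (i k : Fin n) : stdE n i k = if k = i then 1 else 0 :=
  EuclideanSpace.single_apply i 1 k

/-- Shape of a root: single-index or two-index. -/
lemma RB_shape {n : ℕ} {x : EuclideanSpace ℝ (Fin n)} (hx : x ∈ RB n) :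
    (∃ i a, Sgn a ∧ x = a • stdE n i) ∨
      (∃ i j a b, i ≠ j ∧ Sgn a ∧ Sgn b ∧ x = a • stdE n i + b • stdE n j) := by
  rcases hx with (h | h) | h
  · obtain ⟨i, j, hij, h | h⟩ := h
    · exact Or.inr ⟨i, j, 1, -1, hij.ne, Sgn.one, Sgn.negone, by rw [h]; module⟩
    · exact Or.inr ⟨i, j, -1, 1, hij.ne, Sgn.negone, Sgn.one, by rw [h]; module⟩
  · obtain ⟨i, h | h⟩ := h
    · exact Or.inl ⟨i, 1, Sgn.one, by rw [h]; module⟩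
    · exact Or.inl ⟨i, -1, Sgn.negone, by rw [h]; module⟩
  · obtain ⟨i, j, hij, h | h⟩ := h
    · exact Or.inr ⟨i, j, 1, 1, hij.ne, Sgn.one, Sgn.one, by rw [h]; module⟩
    · exact Or.inr ⟨i, j, -1, -1, hij.ne, Sgn.negone, Sgn.negone, by rw [h]; module⟩

lemma single_mem_RB {n : ℕ} {a : ℝ} (ha : Sgn a) (i : Fin n) : a • stdE n i ∈ RB n := by
  rcases ha with rfl | rfl
  · exact Or.inl (Or.inr ⟨i, Or.inl (by module)⟩)
  · exact Or.inl (Or.inr ⟨i, Or.inr (by module)⟩)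

lemma pm_mem_RB {n : ℕ} {i j : Fin n} {a b : ℝ} (hij : i ≠ j) (ha : Sgn a) (hb : Sgn b) :
    a • stdE n i + b • stdE n j ∈ RB n := by
  rcases hij.lt_or_gt with h | h <;> rcases ha with rfl | rfl <;> rcases hb with rfl | rfl
  · exact Or.inr ⟨i, j, h, Or.inl (by module)⟩
  · exact Or.inl (Or.inl ⟨i, j, h, Or.inl (by module)⟩)
  · exact Or.inl (Or.inl ⟨i, j, h, Or.inr (by module)⟩)
  · exact Or.inr ⟨i, j, h, Or.inr (by module)⟩
  · exact Or.inr ⟨j, i, h, Or.inl (by module)⟩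
  · exact Or.inl (Or.inl ⟨j, i, h, Or.inr (by module)⟩)
  · exact Or.inl (Or.inl ⟨j, i, h, Or.inl (by module)⟩)
  · exact Or.inr ⟨j, i, h, Or.inr (by module)⟩

lemma single_coord {n : ℕ} (i k : Fin n) (a : ℝ) :
    (a • stdE n i) k = if k = i then a else 0 := by
  rw [PiLp.smul_apply, stdE_apply]; split <;> simp

lemma pm_coord {n : ℕ} (i j k : Fin n) (a b : ℝ) :
    (a • stdE n i + b • stdE n j) k = (if k = i then a else 0) + (if k = j then b else 0) := by
  rw [PiLp.add_apply, single_coord, single_coord]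

lemma norm_single' {n : ℕ} {a : ℝ} (ha : Sgn a) (i : Fin n) : ‖a • stdE n i‖ = 1 := by
  rw [norm_smul, stdE, EuclideanSpace.norm_single]
  rcases ha with rfl | rfl <;> norm_num

lemma norm_pm {n : ℕ} {i j : Fin n} {a b : ℝ} (hij : i ≠ j) (ha : Sgn a) (hb : Sgn b) :
    ‖a • stdE n i + b • stdE n j‖ = Real.sqrt 2 := by
  rw [EuclideanSpace.norm_eq]
  congr 1
  have : ∀ k : Fin n, ‖(a • stdE n i + b • stdE n j) k‖ ^ 2
      = (if k = i then 1 else 0) + (if k = j then 1 else 0) := by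
    intro k
    rw [pm_coord, Real.norm_eq_abs, sq_abs]
    rcases ha with rfl | rfl <;> rcases hb with rfl | rfl <;> split_ifs with h1 h2 <;>
      first
        | (exfalso; exact hij (h1 ▸ h2 ▸ rfl))
        | ring
  rw [Finset.sum_congr rfl fun k _ => this k, Finset.sum_add_distrib,
    Finset.sum_ite_eq' Finset.univ i (fun _ => (1:ℝ)),
    Finset.sum_ite_eq' Finset.univ j (fun _ => (1:ℝ))]
  norm_num

section extra
variable {n : ℕ}

/-- membership + shape helpers for later -/
lemma coord_mem_aux {x : EuclideanSpace ℝ (Fin n)}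
    (h : (∃ i a, Sgn a ∧ x = a • stdE n i) ∨
      (∃ i j a b, i ≠ j ∧ Sgn a ∧ Sgn b ∧ x = a • stdE n i + b • stdE n j)) (k : Fin n) :
    x k = 0 ∨ x k = 1 ∨ x k = -1 := by
  rcases h with ⟨i, a, ha, rfl⟩ | ⟨i, j, a, b, hij, ha, hb, rfl⟩
  · rw [single_coord]
    rcases ha with rfl | rfl <;> split <;> norm_num
  · rw [pm_coord]
    rcases ha with rfl | rfl <;> rcases hb with rfl | rfl <;> split_ifs with h1 h2 <;>
      first
        | (exfalso; exact hij (h1 ▸ h2 ▸ rfl))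
        | norm_num

lemma support_aux {x : EuclideanSpace ℝ (Fin n)}
    (h : (∃ i a, Sgn a ∧ x = a • stdE n i) ∨
      (∃ i j a b, i ≠ j ∧ Sgn a ∧ Sgn b ∧ x = a • stdE n i + b • stdE n j)) :
    ∃ p q, ∀ k, k ≠ p → k ≠ q → x k = 0 := by
  rcases h with ⟨i, a, ha, rfl⟩ | ⟨i, j, a, b, hij, ha, hb, rfl⟩
  · exact ⟨i, i, fun k hk _ => by rw [single_coord, if_neg hk]⟩
  · exact ⟨i, j, fun k hk hk' => by rw [pm_coord, if_neg hk, if_neg hk', add_zero]⟩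
end extra

section part3
variable {n : ℕ}

lemma coord_mem {x : EuclideanSpace ℝ (Fin n)} (hx : x ∈ RB n) (k : Fin n) :
    x k = 0 ∨ x k = 1 ∨ x k = -1 := coord_mem_aux (RB_shape hx) k

lemma norm_le_RB {x : EuclideanSpace ℝ (Fin n)} (hx : x ∈ RB n) : ‖x‖ ≤ Real.sqrt 2 := by
  rcases RB_shape hx with ⟨i, a, ha, rfl⟩ | ⟨i, j, a, b, hij, ha, hb, rfl⟩
  · rw [norm_single' ha]
    rw [show (1:ℝ) = Real.sqrt 1 by simp]
    exact Real.sqrt_le_sqrt (by norm_num)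
  · rw [norm_pm hij ha hb]

lemma one_lt_sqrt2 : (1:ℝ) < Real.sqrt 2 := by
  rw [show (1:ℝ) = Real.sqrt 1 by simp]
  exact Real.sqrt_lt_sqrt (by norm_num) (by norm_num)

/-- If a short root plus a long root is a root, the long root cancels the short one
in one coordinate. -/
lemma long_adj_short {i u v : Fin n} {σ a b : ℝ} (huv : u ≠ v) (hiu : i ≠ u) (hiv : i ≠ v)
    (hσ : Sgn σ) (ha : Sgn a) (hb : Sgn b)
    (h : σ • stdE n i + (a • stdE n u + b • stdE n v) ∈ RB n) : False := by
  obtain ⟨p, q, hpq⟩ := support_aux (RB_shape h)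
  set x := σ • stdE n i + (a • stdE n u + b • stdE n v) with hxdef
  have hcoord : ∀ k : Fin n, x k =
      (if k = i then σ else 0) + ((if k = u then a else 0) + (if k = v then b else 0)) := by
    intro k
    rw [hxdef, PiLp.add_apply, single_coord, pm_coord]
  have hxi : x i ≠ 0 := by
    rw [hcoord, if_pos rfl, if_neg hiu, if_neg hiv]
    simpa using hσ.ne_zero
  have hxu : x u ≠ 0 := by
    rw [hcoord, if_neg (Ne.symm hiu), if_pos rfl, if_neg huv]
    simpa using ha.ne_zero
  have hxv : x v ≠ 0 := by
    rw [hcoord, if_neg (Ne.symm hiv), if_neg (Ne.symm huv), if_pos rfl]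
    simpa using hb.ne_zero
  have h1 : i = p ∨ i = q := by
    by_contra hc; push_neg at hc; exact hxi (hpq i hc.1 hc.2)
  have h2 : u = p ∨ u = q := by
    by_contra hc; push_neg at hc; exact hxu (hpq u hc.1 hc.2)
  have h3 : v = p ∨ v = q := by
    by_contra hc; push_neg at hc; exact hxv (hpq v hc.1 hc.2)
  rcases h1 with rfl | rfl <;> rcases h2 with h2 | h2 <;> rcases h3 with h3 | h3 <;>
    simp_all

lemma short_plus_long {i u v : Fin n} {σ a b : ℝ} (huv : u ≠ v)
    (hσ : Sgn σ) (ha : Sgn a) (hb : Sgn b)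
    (h : σ • stdE n i + (a • stdE n u + b • stdE n v) ∈ RB n) :
    (i = u ∧ a = -σ) ∨ (i = v ∧ b = -σ) := by
  by_cases hiu : i = u
  · subst hiu
    left
    refine ⟨rfl, ?_⟩
    have hc := coord_mem h i
    have : (σ • stdE n i + (a • stdE n i + b • stdE n v)) i = σ + a := by
      rw [PiLp.add_apply, single_coord, pm_coord, if_pos rfl, if_pos rfl, if_neg huv]
      ring
    rw [this] at hc
    rcases hσ with rfl | rfl <;> rcases ha with rfl | rfl <;> revert hc <;> norm_num
  · by_cases hiv : i = v
    · subst hiv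
      right
      refine ⟨rfl, ?_⟩
      have hc := coord_mem h i
      have : (σ • stdE n i + (a • stdE n u + b • stdE n i)) i = σ + b := by
        rw [PiLp.add_apply, single_coord, pm_coord, if_pos rfl, if_pos rfl,
          if_neg (Ne.symm huv)]
        ring
      rw [this] at hc
      rcases hσ with rfl | rfl <;> rcases hb with rfl | rfl <;> revert hc <;> norm_num
    · exact absurd h (fun h => long_adj_short huv hiu hiv hσ ha hb h)

/-- handy: symmetric set + membership -/
lemma symm_neg_mem {S : Set (EuclideanSpace ℝ (Fin n))} (hS : S = -S)
    {x : EuclideanSpace ℝ (Fin n)} (hx : x ∈ S) : -x ∈ S := by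
  rw [hS]; simpa using hx

lemma disj_elim {S T : Set (EuclideanSpace ℝ (Fin n))} (h : S ∩ T = ∅)
    {x : EuclideanSpace ℝ (Fin n)} (hx : x ∈ S) (hx' : x ∈ T) : False := by
  have : x ∈ S ∩ T := ⟨hx, hx'⟩
  rw [h] at this
  exact this

end part3

section part4
variable {n : ℕ} {R0 R1 R2 : Set (EuclideanSpace ℝ (Fin n))}

/-- Lemma A: there cannot be a short root in `R1` and a short root in `R2`. -/
lemma lemA (hd : IsSpecialDecomposition (RB n) R0 R1 R2)
    {i k : Fin n} {σ τ : ℝ} (hσ : Sgn σ) (hτ : Sgn τ)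
    (h1 : σ • stdE n i ∈ R1) (h2 : τ • stdE n k ∈ R2) : False := by
  obtain ⟨hpart, h01, h02, h12, hs0, hs1, hs2, hcl, hc, hd', he, hf, hg, hh⟩ := hd
  by_cases hik : i = k
  · subst hik
    rcases hτ.eq_or hσ with rfl | rfl
    · exact disj_elim h12 h1 h2
    · have : -(-σ • stdE n i) ∈ R2 := symm_neg_mem hs2 h2
      rw [show -(-σ • stdE n i) = σ • stdE n i by module] at this
      exact disj_elim h12 h1 this
  · have hsum : σ • stdE n i + τ • stdE n k ∈ RB n := pm_mem_RB hik hσ hτ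
    have hnorm : ‖σ • stdE n i‖ = ‖τ • stdE n k‖ := by
      rw [norm_single' hσ, norm_single' hτ]
    obtain ⟨hdiff, hcase⟩ := hf _ h1 _ h2 hsum hnorm
    rcases hcase with ⟨hR0, _⟩ | ⟨hR0, _⟩
    · -- σ•E i + τ•E k ∈ R0 ; take δ = -(τ•E k) ∈ R2
      have hδ : -(τ • stdE n k) ∈ R2 := symm_neg_mem hs2 h2
      have hsum2 : -(τ • stdE n k) + (σ • stdE n i + τ • stdE n k) ∈ RB n := by
        rw [show -(τ • stdE n k) + (σ • stdE n i + τ • stdE n k) = σ • stdE n i by module]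
        exact single_mem_RB hσ i
      have := (hh _ (Or.inr hδ) _ hR0 hsum2).2 hδ
      rw [show -(τ • stdE n k) + (σ • stdE n i + τ • stdE n k) = σ • stdE n i by module] at this
      exact disj_elim h12 h1 this
    · -- σ•E i - τ•E k ∈ R0 ; take δ = τ•E k ∈ R2
      have hsum2 : τ • stdE n k + (σ • stdE n i - τ • stdE n k) ∈ RB n := by
        rw [show τ • stdE n k + (σ • stdE n i - τ • stdE n k) = σ • stdE n i by module]
        exact single_mem_RB hσ i
      have := (hh _ (Or.inr h2) _ hR0 hsum2).2 h2
      rw [show τ • stdE n k + (σ • stdE n i - τ • stdE n k) = σ • stdE n i by module] at this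
      exact disj_elim h12 h1 this

/-- Swapping `R1` and `R2` preserves being a special decomposition. -/
lemma swap_decomp {E : Type*} [NormedAddCommGroup E] [InnerProductSpace ℝ E]
    {R R0 R1 R2 : Set E} (hd : IsSpecialDecomposition R R0 R1 R2) :
    IsSpecialDecomposition R R0 R2 R1 := by
  obtain ⟨hpart, h01, h02, h12, hs0, hs1, hs2, hcl, hc, hd', he, hf, hg, hh⟩ := hd
  have hRsymm : ∀ x ∈ R, -x ∈ R := by
    intro x hx
    rw [hpart] at hx ⊢
    rcases hx with (hx | hx) | hx
    · exact Or.inl (Or.inl (by rw [hs0]; simpa using hx))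
    · exact Or.inl (Or.inr (by rw [hs1]; simpa using hx))
    · exact Or.inr (by rw [hs2]; simpa using hx)
  refine ⟨?_, h02, h01, by rw [Set.inter_comm]; exact h12, hs0, hs2, hs1, hcl, ?_, ?_, ?_, ?_, ?_, ?_⟩
  · rw [hpart]
    rw [Set.union_assoc, Set.union_comm R1 R2, ← Set.union_assoc]
  · obtain ⟨α, hα, β, hβ, hs⟩ := hc
    exact ⟨β, hβ, α, hα, by rwa [add_comm]⟩
  · intro α hα β hβ hs
    have := hd' β hβ α hα (by rwa [add_comm])
    rwa [show ({β, α} : Set E) = {α, β} by rw [Set.pair_comm]] at this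
  · intro α hα β hβ hs
    have := he β hβ α hα (by rwa [add_comm])
    constructor
    · intro hlt
      obtain ⟨ha, hb⟩ := this.2 hlt
      exact ⟨by rwa [add_comm], by rwa [show (2:ℝ) • α + β = β + (2:ℝ) • α by abel]⟩
    · intro hlt
      obtain ⟨ha, hb⟩ := this.1 hlt
      exact ⟨by rwa [add_comm], by rwa [show α + (2:ℝ) • β = (2:ℝ) • β + α by abel]⟩
  · intro α hα β hβ hs hnorm
    have hβα : β + α ∈ R := by rwa [add_comm]
    obtain ⟨hdiff, hcase⟩ := hf β hβ α hα hβα hnorm.symm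
    have hαβdiff : α - β ∈ R := by
      have := hRsymm _ hdiff
      rwa [show -(β - α) = α - β by abel] at this
    refine ⟨hαβdiff, ?_⟩
    rcases hcase with ⟨hx, hy⟩ | ⟨hx, hy⟩
    · left
      refine ⟨by rwa [add_comm] at hx, ?_⟩
      rcases hy with hy | hy
      · exact Or.inr (by
          rw [show α - β = -(β - α) by abel, hs1]; simpa using hy)
      · exact Or.inl (by
          rw [show α - β = -(β - α) by abel, hs2]; simpa using hy)
    · right
      refine ⟨?_, ?_⟩
      · rw [show α - β = -(β - α) by abel, hs0]; simpa using hx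
      · rcases hy with hy | hy
        · exact Or.inr (by rwa [add_comm] at hy)
        · exact Or.inl (by rwa [add_comm] at hy)
  · intro α hα β hβ hna hnb
    obtain ⟨hx, hy⟩ := hg β hβ α hα hnb hna
    refine ⟨by rwa [add_comm] at hx, ?_⟩
    intro hc'
    exact hy (by rw [show β - α = -(α - β) by abel]; exact hRsymm _ hc')
  · intro δ hδ η hη hs
    have := hh δ (by rwa [Set.union_comm]) η hη hs
    exact ⟨this.2, this.1⟩

end part4

section core
variable {n : ℕ}

/-- The coordinatewise sign-change isometry. -/
lemma exists_sign_isometry (ε : Fin n → ℝ) (hεS : ∀ j, Sgn (ε j)) :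
    ∃ F : EuclideanSpace ℝ (Fin n) ≃ₗᵢ[ℝ] EuclideanSpace ℝ (Fin n),
      ∀ (x : EuclideanSpace ℝ (Fin n)) (k : Fin n), F x k = ε k * x k := by
  classical
  refine ⟨LinearIsometryEquiv.piLpCongrRight 2
      (fun k => if ε k = 1 then LinearIsometryEquiv.refl ℝ ℝ else LinearIsometryEquiv.neg ℝ),
    ?_⟩
  intro x k
  have h1' := LinearIsometryEquiv.piLpCongrRight_apply
    (fun k => if ε k = 1 then LinearIsometryEquiv.refl ℝ ℝ else LinearIsometryEquiv.neg ℝ) x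
  have h2' : (LinearIsometryEquiv.piLpCongrRight 2
      (fun k => if ε k = 1 then LinearIsometryEquiv.refl ℝ ℝ else LinearIsometryEquiv.neg ℝ)) x k
      = (if ε k = 1 then LinearIsometryEquiv.refl ℝ ℝ
        else LinearIsometryEquiv.neg ℝ) (x k) := by
    rw [h1', PiLp.toLp_apply]
  rw [h2']
  rcases hεS k with h1 | h1
  · rw [if_pos h1, h1]; simp
  · rw [if_neg (by rw [h1]; norm_num), h1]; simp

local notation "E" => stdE n

set_option maxHeartbeats 2000000 in
lemma core (hn : 2 ≤ n) {R0 R1 R2 : Set (EuclideanSpace ℝ (Fin n))}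
    (hdec : IsSpecialDecomposition (RB n) R0 R1 R2)
    (hseed : ∃ α ∈ R1, ∃ β ∈ R2, α + β ∈ RB n ∧ ‖α‖ < ‖β‖) :
    ∃ f : EuclideanSpace ℝ (Fin n) ≃ₗᵢ[ℝ] EuclideanSpace ℝ (Fin n),
      f '' RB n = RB n ∧ f '' R0 = stdR0 n ∧ f '' R1 = stdR1 n ∧ f '' R2 = stdR2 n := by
  classical
  obtain ⟨hpart, h01, h02, h12, hs0, hs1, hs2, hcl, hc, hd', he, hf, hg, hh⟩ := id hdec
  have hsubR0 : R0 ⊆ RB n := by rw [hpart]; exact fun x hx => Or.inl (Or.inl hx)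
  have hsubR1 : R1 ⊆ RB n := by rw [hpart]; exact fun x hx => Or.inl (Or.inr hx)
  have hsubR2 : R2 ⊆ RB n := by rw [hpart]; exact fun x hx => Or.inr hx
  obtain ⟨α, hα1, β, hβ2, hαβ, hlt⟩ := hseed
  -- α is short
  obtain ⟨s, σ, hσ, hαeq⟩ : ∃ s σ, Sgn σ ∧ α = σ • E s := by
    rcases RB_shape (hsubR1 hα1) with ⟨i, a, ha, h⟩ | ⟨i, j, a, b, hij, ha, hb, h⟩
    · exact ⟨i, a, ha, h⟩
    · exfalso
      have h1 : ‖α‖ = Real.sqrt 2 := by rw [h]; exact norm_pm hij ha hb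
      have h2 : ‖β‖ ≤ Real.sqrt 2 := norm_le_RB (hsubR2 hβ2)
      rw [h1] at hlt; exact absurd (h2.trans_lt hlt) (lt_irrefl _)
  subst hαeq
  -- β is long, of the form -σ•E s + τ•E t
  obtain ⟨t, τ, hτ, hst, hβeq⟩ : ∃ t τ, Sgn τ ∧ s ≠ t ∧ β = -σ • E s + τ • E t := by
    rcases RB_shape (hsubR2 hβ2) with ⟨i, a, ha, h⟩ | ⟨i, j, a, b, hij, ha, hb, h⟩
    · exfalso
      rw [norm_single' hσ, h, norm_single' ha] at hlt
      exact absurd hlt (lt_irrefl _)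
    · have hαβ' : σ • E s + (a • E i + b • E j) ∈ RB n := by rw [h] at hαβ; exact hαβ
      rcases short_plus_long hij hσ ha hb hαβ' with ⟨h1, h2⟩ | ⟨h1, h2⟩
      · refine ⟨j, b, hb, ?_, ?_⟩
        · rw [h1]; exact hij
        · rw [h, ← h1, h2]
      · refine ⟨i, a, ha, ?_, ?_⟩
        · rw [h1]; exact Ne.symm hij
        · rw [h, ← h1, h2]; module
  have hβ2' : -σ • E s + τ • E t ∈ R2 := by rwa [hβeq] at hβ2
  -- τ • E t ∈ R1 via (e)
  have htR1 : τ • E t ∈ R1 := by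
    have := ((he _ hα1 _ hβ2 hαβ).1 hlt).1
    rwa [hβeq, show σ • E s + (-σ • E s + τ • E t) = τ • E t by module] at this
  -- no short root lies in R0
  have hB : ∀ (j : Fin n) (ρ : ℝ), Sgn ρ → ρ • E j ∈ R0 → False := by
    intro j ρ hρ hj0
    have hsingle : ∀ (k : Fin n) (c : ℝ), Sgn c → c • E k ∈ R1 → j ≠ k := by
      intro k c hcS hk1 hjk
      subst hjk
      rcases hρ.eq_or hcS with rfl | rfl
      · exact disj_elim h01 hj0 hk1
      · have := symm_neg_mem hs0 hj0
        rw [show -(-c • E j) = c • E j by module] at this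
        exact disj_elim h01 this hk1
    have hjs : j ≠ s := hsingle s σ hσ hα1
    have hjt : j ≠ t := hsingle t τ hτ htR1
    have hmem : σ • E s + ρ • E j ∈ RB n := pm_mem_RB (Ne.symm hjs) hσ hρ
    have hlong1 : σ • E s + ρ • E j ∈ R1 := (hh _ (Or.inl hα1) _ hj0 hmem).1 hα1
    have hmax1 : ∀ δ ∈ RB n, ‖δ‖ ≤ ‖σ • E s + ρ • E j‖ := by
      rw [norm_pm (Ne.symm hjs) hσ hρ]; exact fun δ hδ => norm_le_RB hδ
    have hmax2 : ∀ δ ∈ RB n, ‖δ‖ ≤ ‖β‖ := by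
      rw [hβeq, norm_pm hst hσ.neg hτ]; exact fun δ hδ => norm_le_RB hδ
    refine (hg _ hlong1 β hβ2 hmax1 hmax2).1 ?_
    rw [hβeq, show (σ • E s + ρ • E j) + (-σ • E s + τ • E t) = ρ • E j + τ • E t by module]
    exact pm_mem_RB hjt hρ hτ
  -- every short root lies in R1
  have hShort1 : ∀ (j : Fin n) (ρ : ℝ), Sgn ρ → ρ • E j ∈ R1 := by
    intro j ρ hρ
    have hx := single_mem_RB hρ j
    rw [hpart] at hx
    rcases hx with (h0 | h1) | h2
    · exact (hB j ρ hρ h0).elim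
    · exact h1
    · exact (lemA hdec hσ hρ hα1 h2).elim
  -- partner lemma
  have hPartner : ∀ (u v : Fin n) (a b : ℝ), u ≠ v → Sgn a → Sgn b →
      a • E u + b • E v ∈ R2 → a • E u + (-b) • E v ∈ R0 := by
    intro u v a b huv ha hb hm
    have hα' : (-a) • E u ∈ R1 := hShort1 u (-a) ha.neg
    have hsum : (-a) • E u + (a • E u + b • E v) ∈ RB n := by
      rw [show (-a) • E u + (a • E u + b • E v) = b • E v by module]
      exact single_mem_RB hb v
    have hn1 : ‖(-a) • E u‖ < ‖a • E u + b • E v‖ := by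
      rw [norm_single' ha.neg, norm_pm huv ha hb]; exact one_lt_sqrt2
    have h0 := ((he _ hα' _ hm hsum).1 hn1).2
    rw [show (2:ℝ) • ((-a) • E u) + (a • E u + b • E v) = (-a) • E u + b • E v by module] at h0
    have := symm_neg_mem hs0 h0
    rwa [show -((-a) • E u + b • E v) = a • E u + (-b) • E v by module] at this
  have hNotBoth : ∀ (u v : Fin n) (a b : ℝ), u ≠ v → Sgn a → Sgn b →
      a • E u + b • E v ∈ R2 → a • E u + (-b) • E v ∈ R2 → False :=
    fun u v a b huv ha hb hm hm' => disj_elim h02 (hPartner u v a b huv ha hb hm) hm'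
  -- edge propagation
  have hEdge : ∀ (p q r : Fin n), p ≠ q → p ≠ r → q ≠ r →
      ∀ c d, Sgn c → Sgn d → c • E p + d • E q ∈ R2 →
      ∃ f' g', Sgn f' ∧ Sgn g' ∧ f' • E q + g' • E r ∈ R2 := by
    intro p q r hpq hpr hqr c d hcS hdS hμ
    by_contra hno
    simp only [not_exists, not_and] at hno
    have all4 : ∀ f' g', Sgn f' → Sgn g' → f' • E q + g' • E r ∈ R0 := by
      intro f' g' hfS hgS
      have hm := pm_mem_RB hqr hfS hgS
      rw [hpart] at hm
      rcases hm with (h0 | h1) | h2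
      · exact h0
      · exfalso
        have hmax1 : ∀ δ ∈ RB n, ‖δ‖ ≤ ‖f' • E q + g' • E r‖ := by
          rw [norm_pm hqr hfS hgS]; exact fun δ hδ => norm_le_RB hδ
        have hmax2 : ∀ δ ∈ RB n, ‖δ‖ ≤ ‖c • E p + d • E q‖ := by
          rw [norm_pm hpq hcS hdS]; exact fun δ hδ => norm_le_RB hδ
        have hgr := hg _ h1 _ hμ hmax1 hmax2
        rcases hfS.eq_or hdS with h' | h'
        · refine hgr.2 ?_
          have hxeq : (f' • E q + g' • E r) - (c • E p + d • E q)
              = (-c) • E p + g' • E r := by rw [h']; module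
          rw [hxeq]
          exact pm_mem_RB hpr hcS.neg hgS
        · refine hgr.1 ?_
          have hxeq : (f' • E q + g' • E r) + (c • E p + d • E q)
              = c • E p + g' • E r := by rw [h']; module
          rw [hxeq]
          exact pm_mem_RB hpr hcS hgS
      · exact (hno f' g' hfS hgS h2).elim
    have h1m : c • E p + (1:ℝ) • E r ∈ R2 := by
      have hη := all4 (-d) 1 hdS.neg Sgn.one
      have hsum : (c • E p + d • E q) + ((-d) • E q + (1:ℝ) • E r) ∈ RB n := by
        rw [show (c • E p + d • E q) + ((-d) • E q + (1:ℝ) • E r) = c • E p + (1:ℝ) • E r by module]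
        exact pm_mem_RB hpr hcS Sgn.one
      have := (hh _ (Or.inr hμ) _ hη hsum).2 hμ
      rwa [show (c • E p + d • E q) + ((-d) • E q + (1:ℝ) • E r) = c • E p + (1:ℝ) • E r by module] at this
    have h2m : c • E p + (-(1:ℝ)) • E r ∈ R2 := by
      have hη := all4 (-d) (-1) hdS.neg Sgn.negone
      have hsum : (c • E p + d • E q) + ((-d) • E q + (-(1:ℝ)) • E r) ∈ RB n := by
        rw [show (c • E p + d • E q) + ((-d) • E q + (-(1:ℝ)) • E r) = c • E p + (-(1:ℝ)) • E r by module]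
        exact pm_mem_RB hpr hcS Sgn.negone
      have := (hh _ (Or.inr hμ) _ hη hsum).2 hμ
      rwa [show (c • E p + d • E q) + ((-d) • E q + (-(1:ℝ)) • E r) = c • E p + (-(1:ℝ)) • E r by module] at this
    exact hNotBoth p r c 1 hpr hcS Sgn.one h1m h2m
  -- there are longs of R2 on every pair of indices
  have hCommE : ∀ (u v : Fin n) (a b : ℝ), a • E u + b • E v ∈ R2 → b • E v + a • E u ∈ R2 := by
    intro u v a b h; rwa [add_comm] at h
  have hEdgeE : ∀ i j : Fin n, i ≠ j → ∃ a b, Sgn a ∧ Sgn b ∧ a • E i + b • E j ∈ R2 := by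
    intro i j hij
    by_cases his : i = s
    · subst his
      by_cases hjt : j = t
      · subst hjt; exact ⟨-σ, τ, hσ.neg, hτ, hβ2'⟩
      · exact hEdge t i j (Ne.symm hst) (fun h => hjt h.symm) hij τ (-σ) hτ hσ.neg
          (hCommE _ _ _ _ hβ2')
    · by_cases hit : i = t
      · subst hit
        by_cases hjs : j = s
        · subst hjs; exact ⟨τ, -σ, hτ, hσ.neg, hCommE _ _ _ _ hβ2'⟩
        · exact hEdge s i j hst (fun h => hjs h.symm) hij (-σ) τ hσ.neg hτ hβ2'
      · obtain ⟨f', g', hf', hg', hfg'⟩ :=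
          hEdge s t i hst (fun h => his h.symm) (fun h => hit h.symm) (-σ) τ hσ.neg hτ hβ2'
        by_cases hjt : j = t
        · subst hjt; exact ⟨g', f', hg', hf', hCommE _ _ _ _ hfg'⟩
        · by_cases hjs : j = s
          · rw [hjs]
            obtain ⟨f2, g2, hf2, hg2, hfg2⟩ :=
              hEdge t s i (Ne.symm hst) (fun h => hit h.symm) (fun h => his h.symm) τ (-σ) hτ
                hσ.neg (hCommE _ _ _ _ hβ2')
            exact ⟨g2, f2, hg2, hf2, hCommE _ _ _ _ hfg2⟩
          · exact hEdge t i j (fun h => hit h.symm) (fun h => hjt h.symm) hij f' g' hf' hg' hfg'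
  -- transitivity
  have hTrans : ∀ (i j k : Fin n) (a b b' : ℝ), i ≠ j → i ≠ k → j ≠ k → Sgn a → Sgn b → Sgn b' →
      a • E i + b • E j ∈ R2 → b • E j + b' • E k ∈ R2 → a • E i + b' • E k ∈ R2 := by
    intro i j k a b b' hij hik hjk ha hb hb' h1 h2
    have hp := hPartner j k b b' hjk hb hb' h2
    have hη : (-b) • E j + b' • E k ∈ R0 := by
      have := symm_neg_mem hs0 hp
      rwa [show -(b • E j + (-b') • E k) = (-b) • E j + b' • E k by module] at this
    have hsum : (a • E i + b • E j) + ((-b) • E j + b' • E k) ∈ RB n := by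
      rw [show (a • E i + b • E j) + ((-b) • E j + b' • E k) = a • E i + b' • E k by module]
      exact pm_mem_RB hik ha hb'
    have := (hh _ (Or.inr h1) _ hη hsum).2 h1
    rwa [show (a • E i + b • E j) + ((-b) • E j + b' • E k) = a • E i + b' • E k by module] at this
  -- choose the sign vector ε
  obtain ⟨z⟩ : Nonempty (Fin n) := ⟨⟨0, by omega⟩⟩
  have Hax : ∀ j : Fin n, ∃ a b : ℝ, Sgn a ∧ Sgn b ∧ (j ≠ z → a • E z + b • E j ∈ R2) := by
    intro j
    by_cases h : j = z
    · exact ⟨1, 1, Sgn.one, Sgn.one, fun h' => (h' h).elim⟩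
    · obtain ⟨a, b, ha, hb, hm⟩ := hEdgeE z j (fun h' => h h'.symm)
      exact ⟨a, b, ha, hb, fun _ => hm⟩
  choose A B hSA hSB hAB using Hax
  obtain ⟨ε, hεval⟩ : ∃ ε : Fin n → ℝ, ∀ j, ε j = if j = z then 1 else A j * B j :=
    ⟨_, fun j => rfl⟩
  have hεS : ∀ j, Sgn (ε j) := by
    intro j; rw [hεval]
    split_ifs; exacts [Sgn.one, (hSA j).mul (hSB j)]
  have hεz : ε z = 1 := by rw [hεval]; simp
  have hEz : ∀ j, j ≠ z → (1:ℝ) • E z + ε j • E j ∈ R2 := by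
    intro j h
    have hm := hAB j h
    have hεj : ε j = A j * B j := by rw [hεval]; simp [h]
    rcases hSA j with h1 | h1
    · rw [hεj, h1, one_mul]; rwa [h1] at hm
    · rw [hεj, h1, neg_one_mul]
      rw [h1] at hm
      have := symm_neg_mem hs2 hm
      rwa [show -((-1:ℝ) • E z + B j • E j) = (1:ℝ) • E z + (-B j) • E j by module] at this
  have hEpair : ∀ i j, i ≠ j → ε i • E i + ε j • E j ∈ R2 := by
    intro i j hij
    by_cases hi : i = z
    · subst hi; rw [hεz]; exact hEz j (Ne.symm hij)
    · by_cases hj : j = z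
      · subst hj; rw [hεz]
        have := hEz i hi
        rwa [add_comm] at this
      · refine hTrans i z j (ε i) 1 (ε j) hi hij (fun h => hj h.symm) (hεS i) Sgn.one (hεS j)
          ?_ (hEz j hj)
        have := hEz i hi
        rwa [add_comm] at this
  have hEpair0 : ∀ i j, i ≠ j → ε i • E i + (-ε j) • E j ∈ R0 :=
    fun i j hij => hPartner i j _ _ hij (hεS i) (hεS j) (hEpair i j hij)
  -- classification of longs
  have hLongIn : ∀ (i j : Fin n) (a b : ℝ), i ≠ j → Sgn a → Sgn b →
      a • E i + b • E j ∈ R2 ∨ a • E i + b • E j ∈ R0 := by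
    intro i j a b hij ha hb
    rcases ha.eq_or (hεS i) with rfl | rfl <;> rcases hb.eq_or (hεS j) with rfl | rfl
    · exact Or.inl (hEpair i j hij)
    · exact Or.inr (hEpair0 i j hij)
    · refine Or.inr ?_
      have := symm_neg_mem hs0 (hEpair0 i j hij)
      rwa [show -(ε i • E i + (-ε j) • E j) = (-ε i) • E i + ε j • E j by module] at this
    · refine Or.inl ?_
      have := symm_neg_mem hs2 (hEpair i j hij)
      rwa [show -(ε i • E i + ε j • E j) = (-ε i) • E i + (-ε j) • E j by module] at this
  -- the isometry
  obtain ⟨F, hFcoord⟩ := exists_sign_isometry ε hεS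
  have hFE : ∀ (i : Fin n) (c : ℝ), F (c • E i) = (c * ε i) • E i := by
    intro i c
    apply PiLp.ext
    intro k
    rw [hFcoord, single_coord, single_coord]
    split_ifs with h
    · subst h; ring
    · ring
  have hFpm : ∀ (i j : Fin n) (c d : ℝ),
      F (c • E i + d • E j) = (c * ε i) • E i + (d * ε j) • E j := by
    intro i j c d
    rw [map_add, hFE, hFE]
  have hFinv : ∀ x, F (F x) = x := by
    intro x
    apply PiLp.ext
    intro k
    rw [hFcoord, hFcoord, ← mul_assoc, (hεS k).mul_self, one_mul]
  have himg : ∀ S T : Set (EuclideanSpace ℝ (Fin n)),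
      (∀ x ∈ S, F x ∈ T) → (∀ y ∈ T, F y ∈ S) → F '' S = T := by
    intro S T h1 h2
    apply Set.Subset.antisymm
    · rintro y ⟨x, hx, rfl⟩; exact h1 x hx
    · intro y hy; exact ⟨F y, h2 y hy, hFinv y⟩
  have hFRB : ∀ x ∈ RB n, F x ∈ RB n := by
    intro x hx
    rcases RB_shape hx with ⟨i, a, ha, rfl⟩ | ⟨i, j, a, b, hij, ha, hb, rfl⟩
    · rw [hFE]; exact single_mem_RB (ha.mul (hεS i)) i
    · rw [hFpm]; exact pm_mem_RB hij (ha.mul (hεS i)) (hb.mul (hεS j))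
  refine ⟨F, himg _ _ hFRB hFRB, ?_, ?_, ?_⟩
  · -- R0
    apply himg
    · intro x hx
      rcases RB_shape (hsubR0 hx) with ⟨i, a, ha, rfl⟩ | ⟨i, j, a, b, hij, ha, hb, rfl⟩
      · exact (hB i a ha hx).elim
      · rcases ha.eq_or (hεS i) with rfl | rfl <;> rcases hb.eq_or (hεS j) with rfl | rfl
        · exact (disj_elim h02 hx (hEpair i j hij)).elim
        · have hfx : F (ε i • E i + (-ε j) • E j) = (1:ℝ) • E i + (-1:ℝ) • E j := by
            rw [hFpm, (hεS i).mul_self, show -ε j * ε j = -1 by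
              rw [neg_mul, (hεS j).mul_self]]
          rw [hfx]
          rcases hij.lt_or_gt with hlt' | hlt'
          · exact ⟨i, j, hlt', Or.inl (by module)⟩
          · exact ⟨j, i, hlt', Or.inr (by module)⟩
        · have hR0' : (-ε i) • E i + ε j • E j ∈ R0 := by
            have := symm_neg_mem hs0 (hEpair0 i j hij)
            rwa [show -(ε i • E i + (-ε j) • E j) = (-ε i) • E i + ε j • E j by module] at this
          have hfx : F ((-ε i) • E i + ε j • E j) = (-1:ℝ) • E i + (1:ℝ) • E j := by
            rw [hFpm, (hεS j).mul_self, show -ε i * ε i = -1 by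
              rw [neg_mul, (hεS i).mul_self]]
          rw [hfx]
          rcases hij.lt_or_gt with hlt' | hlt'
          · exact ⟨i, j, hlt', Or.inr (by module)⟩
          · exact ⟨j, i, hlt', Or.inl (by module)⟩
        · refine (disj_elim h02 hx ?_).elim
          have := symm_neg_mem hs2 (hEpair i j hij)
          rwa [show -(ε i • E i + ε j • E j) = (-ε i) • E i + (-ε j) • E j by module] at this
    · intro y hy
      obtain ⟨i, j, hij, h | h⟩ := hy
      · have hy' : y = ε i • E i + (-ε j) • E j → False → True := fun _ _ => trivial
        have heq : F y = ε i • E i + (-ε j) • E j := by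
          rw [h, show E i - E j = (1:ℝ) • E i + (-1:ℝ) • E j by module, hFpm]
          rw [one_mul, neg_one_mul]
        rw [heq]
        exact hEpair0 i j hij.ne
      · have heq : F y = (-ε i) • E i + ε j • E j := by
          rw [h, show -(E i - E j) = (-1:ℝ) • E i + (1:ℝ) • E j by module, hFpm]
          rw [one_mul, neg_one_mul]
        rw [heq]
        have := symm_neg_mem hs0 (hEpair0 i j hij.ne)
        rwa [show -(ε i • E i + (-ε j) • E j) = (-ε i) • E i + ε j • E j by module] at this
  · -- R1
    apply himg
    · intro x hx
      rcases RB_shape (hsubR1 hx) with ⟨i, a, ha, rfl⟩ | ⟨i, j, a, b, hij, ha, hb, rfl⟩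
      · rw [hFE]
        rcases (ha.mul (hεS i)).eq_or Sgn.one with h' | h'
        · exact ⟨i, Or.inl (by rw [h']; module)⟩
        · exact ⟨i, Or.inr (by rw [h']; module)⟩
      · exfalso
        rcases hLongIn i j a b hij ha hb with h2 | h0
        · exact disj_elim h12 hx h2
        · exact disj_elim h01 h0 hx
    · intro y hy
      obtain ⟨i, h | h⟩ := hy
      · have heq : F y = ε i • E i := by
          rw [h]
          conv_lhs => rw [show E i = (1:ℝ) • E i by module]
          rw [hFE, one_mul]
        rw [heq]; exact hShort1 i _ (hεS i)
      · have heq : F y = (-ε i) • E i := by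
          rw [h, show -E i = (-1:ℝ) • E i by module, hFE, neg_one_mul]
        rw [heq]; exact hShort1 i _ (hεS i).neg
  · -- R2
    apply himg
    · intro x hx
      rcases RB_shape (hsubR2 hx) with ⟨i, a, ha, rfl⟩ | ⟨i, j, a, b, hij, ha, hb, rfl⟩
      · exact (lemA hdec hσ ha hα1 hx).elim
      · rcases ha.eq_or (hεS i) with rfl | rfl <;> rcases hb.eq_or (hεS j) with rfl | rfl
        · have hfx : F (ε i • E i + ε j • E j) = (1:ℝ) • E i + (1:ℝ) • E j := by
            rw [hFpm, (hεS i).mul_self, (hεS j).mul_self]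
          rw [hfx]
          rcases hij.lt_or_gt with hlt' | hlt'
          · exact ⟨i, j, hlt', Or.inl (by module)⟩
          · exact ⟨j, i, hlt', Or.inl (by module)⟩
        · exact (disj_elim h02 (hEpair0 i j hij) hx).elim
        · refine ((disj_elim h02 ?_ hx)).elim
          have := symm_neg_mem hs0 (hEpair0 i j hij)
          rwa [show -(ε i • E i + (-ε j) • E j) = (-ε i) • E i + ε j • E j by module] at this
        · have hfx : F ((-ε i) • E i + (-ε j) • E j) = (-1:ℝ) • E i + (-1:ℝ) • E j := by
            rw [hFpm, show -ε i * ε i = -1 by rw [neg_mul, (hεS i).mul_self],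
              show -ε j * ε j = -1 by rw [neg_mul, (hεS j).mul_self]]
          rw [hfx]
          rcases hij.lt_or_gt with hlt' | hlt'
          · exact ⟨i, j, hlt', Or.inr (by module)⟩
          · exact ⟨j, i, hlt', Or.inr (by module)⟩
    · intro y hy
      obtain ⟨i, j, hij, h | h⟩ := hy
      · have heq : F y = ε i • E i + ε j • E j := by
          rw [h, show E i + E j = (1:ℝ) • E i + (1:ℝ) • E j by module, hFpm, one_mul, one_mul]
        rw [heq]; exact hEpair i j hij.ne
      · have heq : F y = (-ε i) • E i + (-ε j) • E j := by
          rw [h, show -(E i + E j) = (-1:ℝ) • E i + (-1:ℝ) • E j by module, hFpm,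
            neg_one_mul, neg_one_mul]
        rw [heq]
        have := symm_neg_mem hs2 (hEpair i j hij.ne)
        rwa [show -(ε i • E i + ε j • E j) = (-ε i) • E i + (-ε j) • E j by module] at this
end core

/-- For `n ≥ 2` every special decomposition of `R(B_n)` is
conjugate, by a linear isometry preserving `R(B_n)`, to the standard one
(up to swapping `R₁` and `R₂`). -/
theorem stmt_19 (n : ℕ) (hn : 2 ≤ n)
    (R0 R1 R2 : Set (EuclideanSpace ℝ (Fin n)))
    (hdec : IsSpecialDecomposition (RB n) R0 R1 R2) :
    ∃ f : EuclideanSpace ℝ (Fin n) ≃ₗᵢ[ℝ] EuclideanSpace ℝ (Fin n),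
      f '' RB n = RB n ∧ f '' R0 = stdR0 n ∧
        ((f '' R1 = stdR1 n ∧ f '' R2 = stdR2 n) ∨
          (f '' R1 = stdR2 n ∧ f '' R2 = stdR1 n)) := by
  obtain ⟨hpart, h01, h02, h12, hs0, hs1, hs2, hcl, hc, hd', he, hf, hg, hh⟩ := id hdec
  have hsub1 : R1 ⊆ RB n := by rw [hpart]; exact fun x hx => Or.inl (Or.inr hx)
  have hsub2 : R2 ⊆ RB n := by rw [hpart]; exact fun x hx => Or.inr hx
  obtain ⟨α, hα1, β, hβ2, hαβ⟩ := hc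
  rcases lt_trichotomy ‖α‖ ‖β‖ with hlt | heq | hgt
  · obtain ⟨f, h1, h2, h3, h4⟩ := core hn hdec ⟨α, hα1, β, hβ2, hαβ, hlt⟩
    exact ⟨f, h1, h2, Or.inl ⟨h3, h4⟩⟩
  · exfalso
    rcases RB_shape (hsub1 hα1) with ⟨i, a, ha, rfl⟩ | ⟨i, j, a, b, hij, ha, hb, rfl⟩
    · rcases RB_shape (hsub2 hβ2) with ⟨k, c, hc', rfl⟩ | ⟨u, v, c, d, huv, hc', hd2, rfl⟩
      · exact lemA hdec ha hc' hα1 hβ2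
      · rw [norm_single' ha, norm_pm huv hc' hd2] at heq
        exact one_lt_sqrt2.ne heq
    · rcases RB_shape (hsub2 hβ2) with ⟨k, c, hc', rfl⟩ | ⟨u, v, c, d, huv, hc', hd2, rfl⟩
      · rw [norm_pm hij ha hb, norm_single' hc'] at heq
        exact one_lt_sqrt2.ne heq.symm
      · have hmax1 : ∀ δ ∈ RB n, ‖δ‖ ≤ ‖a • stdE n i + b • stdE n j‖ := by
          rw [norm_pm hij ha hb]; exact fun δ hδ => norm_le_RB hδ
        have hmax2 : ∀ δ ∈ RB n, ‖δ‖ ≤ ‖c • stdE n u + d • stdE n v‖ := by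
          rw [norm_pm huv hc' hd2]; exact fun δ hδ => norm_le_RB hδ
        exact (hg _ hα1 _ hβ2 hmax1 hmax2).1 hαβ
  · obtain ⟨f, h1, h2, h3, h4⟩ :=
      core hn (swap_decomp hdec) ⟨β, hβ2, α, hα1, by rwa [add_comm], hgt⟩
    exact ⟨f, h1, h2, Or.inr ⟨h4, h3⟩⟩
end
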